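/- arXiv:2111.06231 — 7 statements merged into one kernel-verified Lean document; each statement's English description precedes it below -/
import Mathlib

section
/- There exists exactly one Borel measurable function m : [0,∞) → [0, λ*] satisfying the fixed-point equation m(t) = Ī(0) λ̄⁰(t) + S̄(0) ∫₀ᵗ λ̄(t−s) m(s) exp(−∫₀ˢ m(r) dr) ds for all t ≥ 0; moreover this unique fixed point m equals F̄, the second component of the unique solution (S̄, F̄) of the homogeneous limit system. -/
open MeasureTheory

/-- A solution of the homogeneous limit system. -/
def IsHomSol (lam0 lam : ℝ → ℝ) (S0 I0 : ℝ) (S F : ℝ → ℝ) : Prop :=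
  Measurable S ∧ Measurable F ∧
  (∀ t : ℝ, 0 ≤ t → 0 ≤ S t) ∧ (∀ t : ℝ, 0 ≤ t → 0 ≤ F t) ∧
  (∀ T : ℝ, ∃ C : ℝ, ∀ t ∈ Set.Icc (0:ℝ) T, S t ≤ C ∧ F t ≤ C) ∧
  (∀ t : ℝ, 0 ≤ t → S t = S0 - ∫ s in (0:ℝ)..t, S s * F s) ∧
  (∀ t : ℝ, 0 ≤ t → F t = I0 * lam0 t + ∫ s in (0:ℝ)..t, lam (t - s) * S s * F s)

namespace HomAux
open intervalIntegral Filter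


/-- Local integrability from a pointwise bound on the interval. -/
lemma intInt_on {g : ℝ → ℝ} (hg : Measurable g) {a b C : ℝ} (hab : a ≤ b)
    (hC : ∀ s ∈ Set.Ioc a b, |g s| ≤ C) : IntervalIntegrable g volume a b := by
  rw [intervalIntegrable_iff, Set.uIoc_of_le hab]
  apply Measure.integrableOn_of_bounded (M := C) measure_Ioc_lt_top.ne
    hg.aestronglyMeasurable
  exact (ae_restrict_iff' measurableSet_Ioc).2 (ae_of_all _ fun s hs => by
    simpa using hC s hs)

def Good (B : ℝ) (m : ℝ → ℝ) : Prop := Measurable m ∧ ∀ s, m s ∈ Set.Icc (0:ℝ) B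

noncomputable def prim (m : ℝ → ℝ) (s : ℝ) : ℝ := ∫ r in (0:ℝ)..s, m r

lemma Good.intInt {B : ℝ} {m : ℝ → ℝ} (hm : Good B m) (a b : ℝ) :
    IntervalIntegrable m volume a b := by
  rcases le_total a b with h | h
  · exact intInt_on hm.1 h fun s _ => abs_le.2 ⟨by linarith [(hm.2 s).1, (hm.2 s).2], (hm.2 s).2⟩
  · exact (intInt_on hm.1 h fun s _ => abs_le.2 ⟨by linarith [(hm.2 s).1, (hm.2 s).2], (hm.2 s).2⟩).symm

lemma Good.prim_cont {B : ℝ} {m : ℝ → ℝ} (hm : Good B m) : Continuous (prim m) :=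
  intervalIntegral.continuous_primitive (fun a b => hm.intInt a b) 0

lemma prim_zero (m : ℝ → ℝ) : prim m 0 = 0 := intervalIntegral.integral_same

lemma Good.prim_sub {B : ℝ} {m : ℝ → ℝ} (hm : Good B m) (a b : ℝ) :
    prim m b - prim m a = ∫ r in a..b, m r := by
  have := intervalIntegral.integral_add_adjacent_intervals (hm.intInt 0 a) (hm.intInt a b)
  simp only [prim]; linarith

lemma Good.prim_mono {B : ℝ} {m : ℝ → ℝ} (hm : Good B m) {a b : ℝ} (hab : a ≤ b) :
    prim m a ≤ prim m b := by
  have h := hm.prim_sub a b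
  have : 0 ≤ ∫ r in a..b, m r :=
    intervalIntegral.integral_nonneg hab (fun u _ => (hm.2 u).1)
  linarith

lemma Good.prim_nonneg {B : ℝ} {m : ℝ → ℝ} (hm : Good B m) {s : ℝ} (hs : 0 ≤ s) :
    0 ≤ prim m s := by
  have := hm.prim_mono hs
  rw [prim_zero] at this; exact this

lemma Good.prim_diff_le {B : ℝ} {m : ℝ → ℝ} (hm : Good B m) {a b : ℝ} (hab : a ≤ b) :
    prim m b - prim m a ≤ B * (b - a) := by
  rw [hm.prim_sub a b]
  calc ∫ r in a..b, m r ≤ ∫ _r in a..b, B := by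
        apply intervalIntegral.integral_mono_on hab (hm.intInt a b)
          intervalIntegrable_const (fun x _ => (hm.2 x).2)
    _ = B * (b - a) := by simp [mul_comm]

/-- The key FTC identity, proved via Riemann-type partition bounds. -/
lemma Good.key {B : ℝ} {m : ℝ → ℝ} (hm : Good B m) {t : ℝ} (ht : 0 ≤ t) :
    ∫ s in (0:ℝ)..t, m s * Real.exp (-(prim m s))
      = 1 - Real.exp (-(prim m t)) := by
  have hB : 0 ≤ B := le_trans (hm.2 0).1 (hm.2 0).2
  set g : ℝ → ℝ := fun s => m s * Real.exp (-(prim m s)) with hg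
  have hgmeas : Measurable g := hm.1.mul ((hm.prim_cont.neg.rexp).measurable)
  -- integrability of g on any [a,b] with 0 ≤ a:
  have hgint : ∀ {a b : ℝ}, 0 ≤ a → a ≤ b → IntervalIntegrable g volume a b := by
    intro a b ha hab
    refine intInt_on (C := B) hgmeas hab ?_
    intro s hs
    have hs0 : (0:ℝ) ≤ s := le_trans ha hs.1.le
    have h1 : Real.exp (-(prim m s)) ≤ 1 :=
      Real.exp_le_one_iff.2 (by linarith [hm.prim_nonneg hs0])
    have := (hm.2 s).1; have := (hm.2 s).2
    rw [abs_of_nonneg (by positivity)]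
    calc m s * Real.exp (-(prim m s)) ≤ m s * 1 :=
          mul_le_mul_of_nonneg_left h1 (hm.2 s).1
      _ ≤ B := by linarith
  set L : ℝ := 1 - Real.exp (-(prim m t)) with hL
  set J : ℝ := ∫ s in (0:ℝ)..t, g s with hJ
  -- per n bounds
  have main : ∀ n : ℕ, Real.exp (-(B * (t/(n+1)))) * L ≤ J ∧
      J ≤ Real.exp (B * (t/(n+1))) * L := by
    intro n
    set δ : ℝ := t / (n + 1) with hδ
    have hδ0 : 0 ≤ δ := by positivity
    set a : ℕ → ℝ := fun i => i * δ with ha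
    have ha_mono : ∀ i : ℕ, a i ≤ a (i + 1) := by
      intro i; simp only [ha]; push_cast; nlinarith
    have ha_nonneg : ∀ i : ℕ, 0 ≤ a i := by
      intro i; simp only [ha]; positivity
    have ha0 : a 0 = 0 := by simp [ha]
    have halast : a (n + 1) = t := by
      simp only [ha, hδ]; push_cast; field_simp
    set ε : ℝ := B * δ with hε
    have hε0 : 0 ≤ ε := by positivity
    -- split J into the sum
    have hsplit : ∑ k ∈ Finset.range (n+1), ∫ s in (a k)..(a (k+1)), g s = J := by
      rw [intervalIntegral.sum_integral_adjacent_intervals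
        (fun k _ => hgint (ha_nonneg k) (ha_mono k)), ha0, halast]
    -- per-interval facts
    have per : ∀ k : ℕ,
        Real.exp (-ε) * (Real.exp (-(prim m (a k))) - Real.exp (-(prim m (a (k+1)))))
          ≤ ∫ s in (a k)..(a (k+1)), g s ∧
        (∫ s in (a k)..(a (k+1)), g s)
          ≤ Real.exp ε * (Real.exp (-(prim m (a k))) - Real.exp (-(prim m (a (k+1))))) := by
      intro k
      set c := a k; set d := a (k+1)
      have hcd : c ≤ d := ha_mono k
      have hc0 : 0 ≤ c := ha_nonneg k
      set Δ : ℝ := prim m d - prim m c with hΔdef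
      have hΔ0 : 0 ≤ Δ := by have := hm.prim_mono hcd; simp only [hΔdef]; linarith
      have hΔε : Δ ≤ ε := by
        have := hm.prim_diff_le hcd
        have hdc : d - c = δ := by simp only [c, d, ha]; push_cast; ring
        simp only [hΔdef, hε]; rw [hdc] at this; linarith
      have hΔint : ∫ s in c..d, m s = Δ := (hm.prim_sub c d).symm
      -- bounds on the integral
      have hub : (∫ s in c..d, g s) ≤ Real.exp (-(prim m c)) * Δ := by
        have : (∫ s in c..d, g s) ≤ ∫ s in c..d, Real.exp (-(prim m c)) * m s := by
          apply intervalIntegral.integral_mono_on hcd (hgint hc0 hcd)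
            (((hm.intInt c d).const_mul _)) ?_
          intro s hs
          have h1 : Real.exp (-(prim m s)) ≤ Real.exp (-(prim m c)) :=
            Real.exp_le_exp.2 (by linarith [hm.prim_mono hs.1])
          calc m s * Real.exp (-(prim m s)) ≤ m s * Real.exp (-(prim m c)) :=
              mul_le_mul_of_nonneg_left h1 (hm.2 s).1
            _ = Real.exp (-(prim m c)) * m s := by ring
        rwa [intervalIntegral.integral_const_mul, hΔint] at this
      have hlb : Real.exp (-(prim m d)) * Δ ≤ ∫ s in c..d, g s := by
        have : (∫ s in c..d, Real.exp (-(prim m d)) * m s) ≤ ∫ s in c..d, g s := by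
          apply intervalIntegral.integral_mono_on hcd ((hm.intInt c d).const_mul _)
            (hgint hc0 hcd) ?_
          intro s hs
          have h1 : Real.exp (-(prim m d)) ≤ Real.exp (-(prim m s)) :=
            Real.exp_le_exp.2 (by linarith [hm.prim_mono hs.2])
          calc Real.exp (-(prim m d)) * m s ≤ Real.exp (-(prim m s)) * m s :=
              mul_le_mul_of_nonneg_right h1 (hm.2 s).1
            _ = g s := by simp only [hg]; ring
        rwa [intervalIntegral.integral_const_mul, hΔint] at this
      -- exponential comparisons
      have hEd : Real.exp (-(prim m d)) = Real.exp (-(prim m c)) * Real.exp (-Δ) := by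
        rw [← Real.exp_add]; congr 1; simp only [hΔdef]; ring
      have hexpΔpos := Real.exp_pos (-Δ)
      have hexpc := Real.exp_pos (-(prim m c))
      have key1 : Δ * Real.exp (-Δ) ≤ 1 - Real.exp (-Δ) := by
        have h := Real.add_one_le_exp Δ
        have hx : Real.exp Δ * Real.exp (-Δ) = 1 := by rw [← Real.exp_add]; simp
        nlinarith [mul_le_mul_of_nonneg_right h hexpΔpos.le]
      have key2 : 1 - Real.exp (-Δ) ≤ Δ := by
        have h := Real.add_one_le_exp (-Δ); linarith
      constructor
      · -- lower
        refine le_trans ?_ hlb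
        rw [hEd]
        have hstep : Real.exp (-ε) ≤ Real.exp (-Δ) := Real.exp_le_exp.2 (by linarith)
        have hεexp := Real.exp_pos (-ε)
        have hfac : Real.exp (-ε) * (1 - Real.exp (-Δ)) ≤ Real.exp (-Δ) * Δ := by
          calc Real.exp (-ε) * (1 - Real.exp (-Δ)) ≤ Real.exp (-ε) * Δ :=
              mul_le_mul_of_nonneg_left key2 hεexp.le
            _ ≤ Real.exp (-Δ) * Δ := mul_le_mul_of_nonneg_right hstep hΔ0
        nlinarith [mul_le_mul_of_nonneg_left hfac hexpc.le]
      · -- upper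
        refine le_trans hub ?_
        rw [hEd]
        -- want e^{-Pc} Δ ≤ e^{ε} e^{-Pc} (1 - e^{-Δ}); suffices Δ ≤ e^{ε}(1-e^{-Δ})
        have h4 : Δ ≤ Real.exp ε * (1 - Real.exp (-Δ)) := by
          -- Δ e^{-Δ} ≤ 1 - e^{-Δ}  and Δ ≤ Δ e^{ε - (-Δ)}... : Δ = Δe^{-Δ}e^{Δ} ≤ (1-e^{-Δ})e^{Δ} ≤ (1-e^{-Δ})e^{ε}
          have hexpmono : Real.exp Δ ≤ Real.exp ε := Real.exp_le_exp.2 hΔε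
          have h5 : Δ ≤ (1 - Real.exp (-Δ)) * Real.exp Δ := by
            have := mul_le_mul_of_nonneg_right key1 (Real.exp_pos Δ).le
            have hx : Real.exp (-Δ) * Real.exp Δ = 1 := by
              rw [← Real.exp_add]; simp
            nlinarith
          have h6 : (0:ℝ) ≤ 1 - Real.exp (-Δ) := by
            have : Real.exp (-Δ) ≤ 1 := Real.exp_le_one_iff.2 (by linarith)
            linarith
          calc Δ ≤ (1 - Real.exp (-Δ)) * Real.exp Δ := h5
            _ ≤ (1 - Real.exp (-Δ)) * Real.exp ε := mul_le_mul_of_nonneg_left hexpmono h6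
            _ = Real.exp ε * (1 - Real.exp (-Δ)) := by ring
        nlinarith [Real.exp_pos (-(prim m c))]
    -- sum up
    have telescope : ∑ k ∈ Finset.range (n+1),
        (Real.exp (-(prim m (a k))) - Real.exp (-(prim m (a (k+1)))))
        = 1 - Real.exp (-(prim m t)) := by
      rw [Finset.sum_range_sub' (fun k => Real.exp (-(prim m (a k))))]
      rw [ha0, halast, prim_zero]; simp
    constructor
    · calc Real.exp (-(B * δ)) * L
          = ∑ k ∈ Finset.range (n+1), Real.exp (-ε) *
            (Real.exp (-(prim m (a k))) - Real.exp (-(prim m (a (k+1))))) := by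
            rw [← Finset.mul_sum, telescope, hL, hε]
        _ ≤ ∑ k ∈ Finset.range (n+1), ∫ s in (a k)..(a (k+1)), g s :=
            Finset.sum_le_sum (fun k _ => (per k).1)
        _ = J := hsplit
    · calc J = ∑ k ∈ Finset.range (n+1), ∫ s in (a k)..(a (k+1)), g s := hsplit.symm
        _ ≤ ∑ k ∈ Finset.range (n+1), Real.exp ε *
            (Real.exp (-(prim m (a k))) - Real.exp (-(prim m (a (k+1))))) :=
            Finset.sum_le_sum (fun k _ => (per k).2)
        _ = Real.exp (B * δ) * L := by rw [← Finset.mul_sum, telescope, hL, hε]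
  -- take limits
  have hδn : Tendsto (fun n : ℕ => B * (t / (n+1))) atTop (nhds 0) := by
    have h1 : Tendsto (fun n : ℕ => t / (n+1)) atTop (nhds 0) := by
      have := tendsto_natCast_atTop_atTop (R := ℝ)
      exact Tendsto.div_atTop tendsto_const_nhds
        (tendsto_atTop_add_const_right atTop 1 this)
    simpa using h1.const_mul B
  have h1 : Tendsto (fun n : ℕ => Real.exp (B * (t/(n+1))) * L) atTop (nhds L) := by
    have := (Real.continuous_exp.tendsto 0).comp hδn
    simpa using this.mul_const L
  have h2 : Tendsto (fun n : ℕ => Real.exp (-(B * (t/(n+1)))) * L) atTop (nhds L) := by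
    have hδn' : Tendsto (fun n : ℕ => -(B * (t/(n+1)))) atTop (nhds 0) := by
      simpa using hδn.neg
    have := (Real.continuous_exp.tendsto 0).comp hδn'
    simpa using this.mul_const L
  have hfin1 : J ≤ L := ge_of_tendsto' h1 (fun n => (main n).2)
  have hfin2 : L ≤ J := le_of_tendsto' h2 (fun n => (main n).1)
  rw [hJ, hL] at *
  linarith

/-- Gronwall-type lemma by iteration. -/
lemma gronwall {u : ℝ → ℝ} (hu : Measurable u) {T C K : ℝ} (hC : 0 ≤ C) (hK : 0 ≤ K)
    (hb : ∀ t ∈ Set.Icc (0:ℝ) T, |u t| ≤ C)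
    (hit : ∀ t ∈ Set.Icc (0:ℝ) T, |u t| ≤ K * ∫ s in (0:ℝ)..t, |u s|) :
    ∀ t ∈ Set.Icc (0:ℝ) T, u t = 0 := by
  have key : ∀ n : ℕ, ∀ t ∈ Set.Icc (0:ℝ) T, |u t| ≤ C * (K*t)^n / n.factorial := by
    intro n
    induction n with
    | zero => intro t htm; simpa using hb t htm
    | succ n ih =>
      intro t htm
      obtain ⟨ht0, htT⟩ := htm
      have hint1 : IntervalIntegrable (fun s => |u s|) volume 0 t :=
        intInt_on (C := C) hu.abs ht0 (fun s hs => by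
          rw [abs_abs]; exact hb s ⟨hs.1.le, le_trans hs.2 htT⟩)
      have hint2 : IntervalIntegrable (fun s => C * K^n / n.factorial * s ^ n) volume 0 t :=
        (Continuous.intervalIntegrable (by continuity) 0 t)
      have hmono : (∫ s in (0:ℝ)..t, |u s|)
          ≤ ∫ s in (0:ℝ)..t, C * K^n / n.factorial * s ^ n := by
        apply intervalIntegral.integral_mono_on ht0 hint1 hint2
        intro s hs
        have := ih s ⟨hs.1, le_trans hs.2 htT⟩
        calc |u s| ≤ C * (K*s)^n / n.factorial := this
          _ = C * K^n / n.factorial * s ^ n := by rw [mul_pow]; ring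
      have hval : (∫ s in (0:ℝ)..t, C * K^n / n.factorial * s ^ n)
          = C * K^n / n.factorial * (t^(n+1) / (n+1)) := by
        rw [intervalIntegral.integral_const_mul, integral_pow]
        norm_num
      calc |u t| ≤ K * ∫ s in (0:ℝ)..t, |u s| := hit t ⟨ht0, htT⟩
        _ ≤ K * (C * K^n / n.factorial * (t^(n+1) / (n+1))) := by
            rw [← hval]; exact mul_le_mul_of_nonneg_left hmono hK
        _ = C * (K*t)^(n+1) / (n+1).factorial := by
            rw [mul_pow, Nat.factorial_succ]; push_cast; field_simp; ring
  intro t htm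
  have htend : Tendsto (fun n : ℕ => C * (K*t)^n / n.factorial) atTop (nhds 0) := by
    have := FloorSemiring.tendsto_pow_div_factorial_atTop (K := ℝ) (K*t)
    simpa [mul_div_assoc] using this.const_mul C
  have : |u t| ≤ 0 := ge_of_tendsto' htend (fun n => key n t htm)
  have := abs_nonneg (u t)
  have : |u t| = 0 := le_antisymm ‹|u t| ≤ 0› (abs_nonneg _)
  exact abs_eq_zero.1 this

/-- exp is 1-Lipschitz on nonpositive arguments. -/
lemma exp_neg_lip {a b : ℝ} (ha : 0 ≤ a) (hb : 0 ≤ b) :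
    |Real.exp (-a) - Real.exp (-b)| ≤ |a - b| := by
  wlog hab : a ≤ b generalizing a b
  · rw [abs_sub_comm, abs_sub_comm a b]; exact this hb ha (le_of_not_ge hab)
  have h1 : Real.exp (-b) ≤ Real.exp (-a) := Real.exp_le_exp.2 (by linarith)
  have h2 : Real.exp (-a) ≤ 1 := Real.exp_le_one_iff.2 (by linarith)
  have h3 := Real.add_one_le_exp (a - b)
  have h4 : Real.exp (a - b) * Real.exp (-a) = Real.exp (-b) := by
    rw [← Real.exp_add]; congr 1; ring
  have h5 : Real.exp (-a) - Real.exp (-b) ≤ b - a := by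
    nlinarith [Real.exp_pos (-a), mul_le_mul_of_nonneg_right h3 (Real.exp_pos (-a)).le]
  rw [abs_of_nonneg (by linarith), abs_of_nonpos (by linarith)]
  linarith

lemma Good.abs_sub {B : ℝ} {m m' : ℝ → ℝ} (hm : Good B m) (hm' : Good B m') :
    Good B (fun s => |m s - m' s|) := by
  refine ⟨(hm.1.sub hm'.1).abs, fun s => ⟨abs_nonneg _, ?_⟩⟩
  have h1 := hm.2 s; have h2 := hm'.2 s
  exact abs_le.2 ⟨by linarith [h1.1, h1.2, h2.1, h2.2], by linarith [h1.1, h1.2, h2.1, h2.2]⟩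

noncomputable def Phi (lam0 lam : ℝ → ℝ) (I0 S0 : ℝ) (m : ℝ → ℝ) (t : ℝ) : ℝ :=
  if 0 ≤ t then
    I0 * lam0 t + S0 * ∫ s in (0:ℝ)..t, lam (t - s) * m s * Real.exp (-(prim m s))
  else 0

section PhiProps

variable {lamStar : ℝ} (hlamStar : 0 < lamStar)
variable {lam0 lam : ℝ → ℝ} (hlam0_meas : Measurable lam0) (hlam_meas : Measurable lam)
variable (hlam0_mem : ∀ t : ℝ, 0 ≤ t → lam0 t ∈ Set.Icc (0:ℝ) lamStar)
variable (hlam_mem : ∀ t : ℝ, 0 ≤ t → lam t ∈ Set.Icc (0:ℝ) lamStar)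
variable {I0 S0 : ℝ} (hI0 : I0 ∈ Set.Ioo (0:ℝ) 1) (hS0 : S0 ∈ Set.Ioo (0:ℝ) 1)
variable (hsum : I0 + S0 ≤ 1)

include hlam_meas hlam_mem in
lemma integrand_int {m : ℝ → ℝ} (hm : Good lamStar m) {t : ℝ} (ht : 0 ≤ t) :
    IntervalIntegrable (fun s => lam (t - s) * m s * Real.exp (-(prim m s)))
      volume 0 t := by
  refine intInt_on (C := lamStar * lamStar) ?_ ht ?_
  · exact ((hlam_meas.comp (measurable_const.sub measurable_id)).mul hm.1).mul
      (hm.prim_cont.neg.rexp).measurable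
  · intro s hs
    have hts : 0 ≤ t - s := by linarith [hs.2]
    have h1 := hlam_mem (t - s) hts
    have h2 := hm.2 s
    have h3 : Real.exp (-(prim m s)) ≤ 1 :=
      Real.exp_le_one_iff.2 (by linarith [hm.prim_nonneg hs.1.le])
    have h4 : (0:ℝ) < Real.exp (-(prim m s)) := Real.exp_pos _
    rw [abs_of_nonneg (mul_nonneg (mul_nonneg h1.1 h2.1) h4.le)]
    calc lam (t-s) * m s * Real.exp (-(prim m s)) ≤ lam (t-s) * m s * 1 :=
          mul_le_mul_of_nonneg_left h3 (mul_nonneg h1.1 h2.1)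
      _ ≤ lamStar * lamStar := by nlinarith [h1.1, h1.2, h2.1, h2.2]

include hlam0_meas hlam_meas in
lemma Phi_measurable {m : ℝ → ℝ} (hm : Good lamStar m) :
    Measurable (Phi lam0 lam I0 S0 m) := by
  have hker : Measurable (fun p : ℝ × ℝ =>
      if p.2 ∈ Set.Ioc (0:ℝ) p.1 then
        lam (p.1 - p.2) * m p.2 * Real.exp (-(prim m p.2)) else 0) := by
    have hset : MeasurableSet {p : ℝ × ℝ | p.2 ∈ Set.Ioc (0:ℝ) p.1} := by
      have : {p : ℝ × ℝ | p.2 ∈ Set.Ioc (0:ℝ) p.1}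
          = {p : ℝ × ℝ | (0:ℝ) < p.2} ∩ {p : ℝ × ℝ | p.2 ≤ p.1} := by
        ext p; simp [Set.mem_Ioc, and_comm]
      rw [this]
      exact (measurableSet_lt measurable_const measurable_snd).inter
        (measurableSet_le measurable_snd measurable_fst)
    exact Measurable.ite hset
      (((hlam_meas.comp (measurable_fst.sub measurable_snd)).mul
        (hm.1.comp measurable_snd)).mul
        ((hm.prim_cont.neg.rexp).measurable.comp measurable_snd))
      measurable_const
  have heq : Phi lam0 lam I0 S0 m = fun t =>
      if 0 ≤ t then I0 * lam0 t + S0 * ∫ s, (fun p : ℝ × ℝ =>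
        if p.2 ∈ Set.Ioc (0:ℝ) p.1 then
          lam (p.1 - p.2) * m p.2 * Real.exp (-(prim m p.2)) else 0) (t, s) else 0 := by
    funext t
    by_cases ht : 0 ≤ t
    · simp only [Phi, if_pos ht]
      congr 1
      congr 1
      rw [intervalIntegral.integral_of_le ht,
        ← MeasureTheory.integral_indicator measurableSet_Ioc]
      congr 1
      funext s
      simp [Set.indicator_apply]
    · simp [Phi, if_neg ht]
  rw [heq]
  have hint : Measurable fun t => ∫ s, (fun p : ℝ × ℝ =>
      if p.2 ∈ Set.Ioc (0:ℝ) p.1 then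
        lam (p.1 - p.2) * m p.2 * Real.exp (-(prim m p.2)) else 0) (t, s) := by
    have : StronglyMeasurable (Function.uncurry (fun t s => (fun p : ℝ × ℝ =>
        if p.2 ∈ Set.Ioc (0:ℝ) p.1 then
          lam (p.1 - p.2) * m p.2 * Real.exp (-(prim m p.2)) else 0) (t, s))) := by
      exact hker.stronglyMeasurable
    exact this.integral_prod_right.measurable
  exact Measurable.ite measurableSet_Ici
    ((measurable_const.mul hlam0_meas).add (measurable_const.mul hint)) measurable_const

include hlamStar hlam0_meas hlam_meas hlam0_mem hlam_mem hI0 hS0 hsum in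
lemma Phi_good {m : ℝ → ℝ} (hm : Good lamStar m) : Good lamStar (Phi lam0 lam I0 S0 m) := by
  refine ⟨Phi_measurable hlam0_meas hlam_meas hm, fun t => ?_⟩
  by_cases ht : 0 ≤ t
  · simp only [Phi, if_pos ht]
    constructor
    · have h1 : 0 ≤ I0 * lam0 t := mul_nonneg hI0.1.le (hlam0_mem t ht).1
      have h2 : 0 ≤ ∫ s in (0:ℝ)..t, lam (t - s) * m s * Real.exp (-(prim m s)) := by
        apply intervalIntegral.integral_nonneg ht
        intro s hs
        have hts : 0 ≤ t - s := by linarith [hs.2]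
        have := (hlam_mem (t-s) hts).1
        have := (hm.2 s).1
        positivity
      nlinarith [hS0.1]
    · have hETle : (∫ s in (0:ℝ)..t, lam (t - s) * m s * Real.exp (-(prim m s)))
          ≤ lamStar := by
        have step1 : (∫ s in (0:ℝ)..t, lam (t - s) * m s * Real.exp (-(prim m s)))
            ≤ ∫ s in (0:ℝ)..t, lamStar * (m s * Real.exp (-(prim m s))) := by
          apply intervalIntegral.integral_mono_on ht
            (integrand_int hlam_meas hlam_mem hm ht) ?_ ?_
          · have : IntervalIntegrable (fun s => m s * Real.exp (-(prim m s))) volume 0 t := by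
              refine intInt_on (C := lamStar) (hm.1.mul (hm.prim_cont.neg.rexp).measurable) ht ?_
              intro s hs
              have h3 : Real.exp (-(prim m s)) ≤ 1 :=
                Real.exp_le_one_iff.2 (by linarith [hm.prim_nonneg hs.1.le])
              have h2 := hm.2 s
              show |m s * Real.exp (-(prim m s))| ≤ lamStar
              rw [abs_of_nonneg (mul_nonneg h2.1 (Real.exp_pos _).le)]
              have := mul_le_mul_of_nonneg_left h3 h2.1
              nlinarith [h2.1, h2.2]
            exact this.const_mul lamStar
          · intro s hs
            have hts : 0 ≤ t - s := by linarith [hs.2]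
            have h1 := hlam_mem (t-s) hts
            have h2 := hm.2 s
            have h4 : (0:ℝ) < Real.exp (-(prim m s)) := Real.exp_pos _
            nlinarith [mul_le_mul_of_nonneg_right h1.2 (mul_nonneg h2.1 h4.le)]
        have step2 : (∫ s in (0:ℝ)..t, lamStar * (m s * Real.exp (-(prim m s))))
            = lamStar * (1 - Real.exp (-(prim m t))) := by
          rw [intervalIntegral.integral_const_mul, hm.key ht]
        have step3 : 1 - Real.exp (-(prim m t)) ≤ 1 := by
          have := Real.exp_pos (-(prim m t)); linarith
        calc (∫ s in (0:ℝ)..t, lam (t - s) * m s * Real.exp (-(prim m s)))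
            ≤ lamStar * (1 - Real.exp (-(prim m t))) := by rw [← step2]; exact step1
          _ ≤ lamStar * 1 := mul_le_mul_of_nonneg_left step3 hlamStar.le
          _ = lamStar := mul_one _
      have h1 : I0 * lam0 t ≤ I0 * lamStar :=
        mul_le_mul_of_nonneg_left (hlam0_mem t ht).2 hI0.1.le
      have h2 : S0 * (∫ s in (0:ℝ)..t, lam (t - s) * m s * Real.exp (-(prim m s)))
          ≤ S0 * lamStar := mul_le_mul_of_nonneg_left hETle hS0.1.le
      nlinarith [hI0.1, hS0.1]
  · simp only [Phi, if_neg ht]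
    exact ⟨le_refl 0, hlamStar.le⟩

include hlamStar hlam_meas hlam_mem hS0 in
lemma Phi_diff {m m' : ℝ → ℝ} (hm : Good lamStar m) (hm' : Good lamStar m')
    {t : ℝ} (ht : 0 ≤ t) :
    |Phi lam0 lam I0 S0 m t - Phi lam0 lam I0 S0 m' t|
      ≤ lamStar * (1 + lamStar * t) * ∫ s in (0:ℝ)..t, |m s - m' s| := by
  have hd : Good lamStar (fun s => |m s - m' s|) := by
    refine ⟨(hm.1.sub hm'.1).abs, fun s => ⟨abs_nonneg _, ?_⟩⟩
    have h1 := hm.2 s; have h2 := hm'.2 s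
    exact abs_le.2 ⟨by linarith [h1.1, h1.2, h2.1, h2.2], by linarith [h1.1, h1.2, h2.1, h2.2]⟩
  set D : ℝ := ∫ s in (0:ℝ)..t, |m s - m' s| with hD
  have hDeq : D = prim (fun s => |m s - m' s|) t := rfl
  have hD0 : 0 ≤ D :=
    intervalIntegral.integral_nonneg ht (fun s _ => abs_nonneg _)
  set A : ℝ → ℝ := fun s => lam (t - s) * m s * Real.exp (-(prim m s)) with hA
  set A' : ℝ → ℝ := fun s => lam (t - s) * m' s * Real.exp (-(prim m' s)) with hA'
  have hintA := integrand_int hlam_meas hlam_mem hm ht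
  have hintA' := integrand_int hlam_meas hlam_mem hm' ht
  have hptwise : ∀ s ∈ Set.Icc (0:ℝ) t,
      |A s - A' s| ≤ lamStar * |m s - m' s| + lamStar * lamStar * D := by
    intro s hs
    have hs0 : (0:ℝ) ≤ s := hs.1
    have hts : 0 ≤ t - s := by linarith [hs.2]
    have hlamb := hlam_mem (t-s) hts
    have hPdiff : |prim m s - prim m' s| ≤ D := by
      have e1 : prim m s - prim m' s = ∫ r in (0:ℝ)..s, (m r - m' r) := by
        rw [intervalIntegral.integral_sub (hm.intInt 0 s) (hm'.intInt 0 s)]; rfl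
      rw [e1]
      calc |∫ r in (0:ℝ)..s, (m r - m' r)| ≤ ∫ r in (0:ℝ)..s, |m r - m' r| :=
            intervalIntegral.abs_integral_le_integral_abs hs0
        _ ≤ D := by
            rw [hDeq]
            have := hd.prim_mono hs.2
            simpa [prim] using this
    have hinner : |m s * Real.exp (-(prim m s)) - m' s * Real.exp (-(prim m' s))|
        ≤ |m s - m' s| + lamStar * D := by
      have e2 : m s * Real.exp (-(prim m s)) - m' s * Real.exp (-(prim m' s))
          = (m s - m' s) * Real.exp (-(prim m s))
            + m' s * (Real.exp (-(prim m s)) - Real.exp (-(prim m' s))) := by ring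
      rw [e2]
      have b1 : |(m s - m' s) * Real.exp (-(prim m s))| ≤ |m s - m' s| := by
        rw [abs_mul, abs_of_pos (Real.exp_pos _)]
        have h3 : Real.exp (-(prim m s)) ≤ 1 :=
          Real.exp_le_one_iff.2 (by linarith [hm.prim_nonneg hs0])
        nlinarith [abs_nonneg (m s - m' s), Real.exp_pos (-(prim m s))]
      have b2 : |m' s * (Real.exp (-(prim m s)) - Real.exp (-(prim m' s)))|
          ≤ lamStar * D := by
        rw [abs_mul]
        have h5 := exp_neg_lip (hm.prim_nonneg hs0) (hm'.prim_nonneg hs0)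
        have h6 := (hm'.2 s)
        calc |m' s| * |Real.exp (-(prim m s)) - Real.exp (-(prim m' s))|
            ≤ lamStar * |prim m s - prim m' s| := by
              rw [abs_of_nonneg h6.1]
              exact mul_le_mul h6.2 h5 (abs_nonneg _) hlamStar.le
          _ ≤ lamStar * D := mul_le_mul_of_nonneg_left hPdiff hlamStar.le
      calc |(m s - m' s) * Real.exp (-(prim m s))
            + m' s * (Real.exp (-(prim m s)) - Real.exp (-(prim m' s)))|
          ≤ _ + _ := abs_add_le _ _
        _ ≤ |m s - m' s| + lamStar * D := add_le_add b1 b2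
    have e3 : A s - A' s
        = lam (t - s) * (m s * Real.exp (-(prim m s)) - m' s * Real.exp (-(prim m' s))) := by
      simp only [hA, hA']; ring
    rw [e3, abs_mul, abs_of_nonneg hlamb.1]
    calc lam (t-s) * |m s * Real.exp (-(prim m s)) - m' s * Real.exp (-(prim m' s))|
        ≤ lamStar * (|m s - m' s| + lamStar * D) :=
          mul_le_mul hlamb.2 hinner (abs_nonneg _) hlamStar.le
      _ = lamStar * |m s - m' s| + lamStar * lamStar * D := by ring
  have hint_diff : IntervalIntegrable (fun s => |A s - A' s|) volume 0 t :=
    (hintA.sub hintA').abs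
  have hint_rhs : IntervalIntegrable
      (fun s => lamStar * |m s - m' s| + lamStar * lamStar * D) volume 0 t :=
    ((hd.intInt 0 t).const_mul lamStar).add intervalIntegrable_const
  have hmain : (∫ s in (0:ℝ)..t, |A s - A' s|)
      ≤ lamStar * (1 + lamStar * t) * D := by
    calc (∫ s in (0:ℝ)..t, |A s - A' s|)
        ≤ ∫ s in (0:ℝ)..t, (lamStar * |m s - m' s| + lamStar * lamStar * D) :=
          intervalIntegral.integral_mono_on ht hint_diff hint_rhs hptwise
      _ = lamStar * D + lamStar * lamStar * D * t := by
          rw [intervalIntegral.integral_add ((hd.intInt 0 t).const_mul lamStar)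
            intervalIntegrable_const, intervalIntegral.integral_const_mul,
            intervalIntegral.integral_const]
          simp [smul_eq_mul]; ring
      _ = lamStar * (1 + lamStar * t) * D := by ring
  have habs : |Phi lam0 lam I0 S0 m t - Phi lam0 lam I0 S0 m' t|
      = S0 * |(∫ s in (0:ℝ)..t, A s) - ∫ s in (0:ℝ)..t, A' s| := by
    simp only [Phi, if_pos ht]
    rw [show I0 * lam0 t + S0 * (∫ s in (0:ℝ)..t, A s)
        - (I0 * lam0 t + S0 * ∫ s in (0:ℝ)..t, A' s)
        = S0 * ((∫ s in (0:ℝ)..t, A s) - ∫ s in (0:ℝ)..t, A' s) by ring,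
      abs_mul, abs_of_pos hS0.1]
  rw [habs, ← intervalIntegral.integral_sub hintA hintA']
  have h7 : |∫ s in (0:ℝ)..t, (A s - A' s)| ≤ ∫ s in (0:ℝ)..t, |A s - A' s| :=
    intervalIntegral.abs_integral_le_integral_abs ht
  have h8 : (0:ℝ) ≤ lamStar * (1 + lamStar * t) := by positivity
  nlinarith [hS0.1, hS0.2, abs_nonneg (∫ s in (0:ℝ)..t, (A s - A' s))]

include hlamStar hlam0_meas hlam_meas hlam0_mem hlam_mem hI0 hS0 hsum in
lemma exists_fixed_point :
    ∃ m : ℝ → ℝ, Good lamStar m ∧ (∀ t : ℝ, Phi lam0 lam I0 S0 m t = m t) ∧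
      (∀ m' : ℝ → ℝ, Good lamStar m' → (∀ t : ℝ, 0 ≤ t → Phi lam0 lam I0 S0 m' t = m' t) →
        ∀ t : ℝ, 0 ≤ t → m' t = m t) := by
  classical
  set Φ : (ℝ → ℝ) → (ℝ → ℝ) := Phi lam0 lam I0 S0 with hΦ
  set ms : ℕ → ℝ → ℝ := fun n => Φ^[n] (fun _ => 0) with hms
  have hzero : Good lamStar (fun _ : ℝ => (0:ℝ)) :=
    ⟨measurable_const, fun _ => ⟨le_refl 0, hlamStar.le⟩⟩
  have hgood : ∀ n, Good lamStar (ms n) := by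
    intro n; induction n with
    | zero => exact hzero
    | succ n ih =>
      have : ms (n+1) = Φ (ms n) := by
        simp only [hms, Function.iterate_succ_apply']
      rw [this]
      exact Phi_good hlamStar hlam0_meas hlam_meas hlam0_mem hlam_mem hI0 hS0 hsum ih
  have hsucc : ∀ n, ms (n+1) = Φ (ms n) := by
    intro n; simp only [hms, Function.iterate_succ_apply']
  have hms0 : ms 0 = fun _ => 0 := rfl
  -- difference bounds
  have hdiffbound : ∀ t : ℝ, 0 ≤ t → ∀ n : ℕ, ∀ s ∈ Set.Icc (0:ℝ) t,
      |ms (n+1) s - ms n s|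
        ≤ lamStar * (lamStar * (1 + lamStar * t) * s)^n / n.factorial := by
    intro t ht
    set K := lamStar * (1 + lamStar * t) with hK
    have hK0 : 0 ≤ K := by positivity
    clear_value K
    intro n
    induction n with
    | zero =>
      intro s hs
      simp only [pow_zero, Nat.factorial_zero, Nat.cast_one, mul_one, div_one]
      rw [hms0]
      have h1 := (hgood 1).2 s
      rw [sub_zero, abs_of_nonneg h1.1]
      exact h1.2
    | succ n ih =>
      intro s hs
      have h1 := Phi_diff (lam0 := lam0) (I0 := I0) hlamStar hlam_meas hlam_mem hS0 (hgood (n+1)) (hgood n) hs.1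
      rw [← hΦ, ← hsucc (n+1), ← hsucc n] at h1
      have habs_good := (hgood (n+1)).abs_sub (hgood n)
      have hint1 : IntervalIntegrable (fun r => |ms (n+1) r - ms n r|) volume 0 s :=
        habs_good.intInt 0 s
      have hint2 : IntervalIntegrable
          (fun r => lamStar * K^n / n.factorial * r^n) volume 0 s :=
        Continuous.intervalIntegrable (by continuity) 0 s
      have hmono : (∫ r in (0:ℝ)..s, |ms (n+1) r - ms n r|)
          ≤ ∫ r in (0:ℝ)..s, lamStar * K^n / n.factorial * r^n := by
        apply intervalIntegral.integral_mono_on hs.1 hint1 hint2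
        intro r hr
        have := ih r ⟨hr.1, le_trans hr.2 hs.2⟩
        calc |ms (n+1) r - ms n r| ≤ lamStar * (K * r)^n / n.factorial := this
          _ = lamStar * K^n / n.factorial * r^n := by rw [mul_pow]; ring
      have hval : (∫ r in (0:ℝ)..s, lamStar * K^n / n.factorial * r^n)
          = lamStar * K^n / n.factorial * (s^(n+1)/(n+1)) := by
        rw [intervalIntegral.integral_const_mul, integral_pow]; norm_num
      have hint_nonneg : 0 ≤ ∫ r in (0:ℝ)..s, |ms (n+1) r - ms n r| :=
        intervalIntegral.integral_nonneg hs.1 (fun r _ => abs_nonneg _)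
      have hKs : lamStar * (1 + lamStar * s) ≤ K := by
        rw [hK]
        nlinarith [mul_nonneg (mul_nonneg hlamStar.le hlamStar.le) (sub_nonneg.2 hs.2)]
      calc |ms (n+1+1) s - ms (n+1) s|
          ≤ lamStar * (1 + lamStar * s) * ∫ r in (0:ℝ)..s, |ms (n+1) r - ms n r| := h1
        _ ≤ K * ∫ r in (0:ℝ)..s, |ms (n+1) r - ms n r| :=
            mul_le_mul_of_nonneg_right hKs hint_nonneg
        _ ≤ K * (lamStar * K^n / n.factorial * (s^(n+1)/(n+1))) := by
            rw [← hval]; exact mul_le_mul_of_nonneg_left hmono hK0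
        _ = lamStar * (K * s)^(n+1) / (n+1).factorial := by
            have hfac : (n.factorial : ℝ) ≠ 0 := Nat.cast_ne_zero.2 n.factorial_ne_zero
            have hn1 : ((n:ℝ) + 1) ≠ 0 := by positivity
            rw [mul_pow, Nat.factorial_succ]
            push_cast
            field_simp
            ring
  -- negative times
  have hneg : ∀ r : ℝ, r < 0 → ∀ n, ms n r = 0 := by
    intro r hr n
    induction n with
    | zero => rfl
    | succ n _ =>
      rw [hsucc n]
      simp only [hΦ, Phi, if_neg (not_le.2 hr)]
  -- Cauchy
  have hcauchy : ∀ r : ℝ, CauchySeq (fun n => ms n r) := by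
    intro r
    rcases le_or_gt 0 r with hr | hr
    · apply cauchySeq_of_dist_le_of_summable
        (fun n => lamStar * (lamStar * (1 + lamStar * r) * r)^n / n.factorial)
      · intro n
        rw [Real.dist_eq, abs_sub_comm]
        exact hdiffbound r hr n r ⟨hr, le_refl r⟩
      · have := Real.summable_pow_div_factorial (lamStar * (1 + lamStar * r) * r)
        simpa [mul_div_assoc] using this.mul_left lamStar
    · have : (fun n => ms n r) = fun _ => (0:ℝ) := funext fun n => hneg r hr n
      rw [this]; exact cauchySeq_const 0
  set m : ℝ → ℝ := fun r => limUnder atTop (fun n => ms n r) with hm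
  have htend : ∀ r, Tendsto (fun n => ms n r) atTop (nhds (m r)) :=
    fun r => (hcauchy r).tendsto_limUnder
  have hmgood : Good lamStar m := by
    refine ⟨measurable_of_tendsto_metrizable (fun n => (hgood n).1)
      (tendsto_pi_nhds.2 htend), fun s => ?_⟩
    exact ⟨ge_of_tendsto' (htend s) (fun n => ((hgood n).2 s).1),
      le_of_tendsto' (htend s) (fun n => ((hgood n).2 s).2)⟩
  -- fixed point
  have hfix : ∀ t : ℝ, Φ m t = m t := by
    intro t
    rcases le_or_gt 0 t with ht | ht
    · set K := lamStar * (1 + lamStar * t) with hK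
      have hK0 : 0 ≤ K := by positivity
      clear_value K
      set u : ℕ → ℝ := fun k => lamStar * (K*t)^k / k.factorial with hu
      have hsum_u : Summable u := by
        have := Real.summable_pow_div_factorial (K*t)
        simpa [hu, mul_div_assoc] using this.mul_left lamStar
      have htail : ∀ n : ℕ, ∀ s ∈ Set.Icc (0:ℝ) t, |ms n s - m s| ≤ ∑' k, u (n + k) := by
        intro n s hs
        have hdists : ∀ j : ℕ, dist (ms j s) (ms (j+1) s) ≤ u j := by
          intro j
          rw [Real.dist_eq, abs_sub_comm]
          calc |ms (j+1) s - ms j s| ≤ lamStar * (K * s)^j / j.factorial := by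
                rw [hK]; exact hdiffbound t ht j s hs
            _ ≤ u j := by
              simp only [hu]
              gcongr
              · exact mul_nonneg hK0 hs.1
              · exact hs.2
        have := dist_le_tsum_of_dist_le_of_tendsto u hdists hsum_u (htend s) n
        rw [Real.dist_eq] at this
        exact this
      have htail0 : Tendsto (fun n : ℕ => ∑' k, u (n + k)) atTop (nhds 0) := by
        have heq : (fun n : ℕ => ∑' k, u (n + k)) = (fun n : ℕ => ∑' k, u (k + n)) := by
          funext n; exact tsum_congr fun k => by rw [add_comm]
        rw [heq]; exact tendsto_sum_nat_add u
      have hPhi_tend : Tendsto (fun n => Φ (ms n) t) atTop (nhds (Φ m t)) := by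
        rw [tendsto_iff_dist_tendsto_zero]
        have hbo : ∀ n, dist (Φ (ms n) t) (Φ m t) ≤ K * (t * ∑' k, u (n + k)) := by
          intro n
          rw [Real.dist_eq]
          have h1 := Phi_diff (lam0 := lam0) (I0 := I0) hlamStar hlam_meas hlam_mem hS0 (hgood n) hmgood ht
          rw [← hΦ] at h1
          have habs := (hgood n).abs_sub hmgood
          have hint1 := habs.intInt 0 t
          have hmono : (∫ s in (0:ℝ)..t, |ms n s - m s|) ≤ t * ∑' k, u (n+k) := by
            have h2 : (∫ s in (0:ℝ)..t, |ms n s - m s|)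
                ≤ ∫ _s in (0:ℝ)..t, (∑' k, u (n+k)) :=
              intervalIntegral.integral_mono_on ht hint1 intervalIntegrable_const
                (fun s hs => htail n s hs)
            simpa [smul_eq_mul, mul_comm] using h2
          calc |Φ (ms n) t - Φ m t|
              ≤ lamStar * (1 + lamStar * t) * ∫ s in (0:ℝ)..t, |ms n s - m s| := h1
            _ ≤ K * (t * ∑' k, u (n+k)) := by
                rw [← hK]; exact mul_le_mul_of_nonneg_left hmono hK0
        apply squeeze_zero (fun n => dist_nonneg) hbo
        have := (htail0.const_mul t).const_mul K
        simpa using this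
      have h3 : Tendsto (fun n => ms (n+1) t) atTop (nhds (m t)) :=
        (htend t).comp (tendsto_add_atTop_nat 1)
      have h4 : (fun n => ms (n+1) t) = fun n => Φ (ms n) t := funext fun n => by rw [hsucc n]
      rw [h4] at h3
      exact tendsto_nhds_unique hPhi_tend h3
    · rw [hΦ]
      simp only [Phi, if_neg (not_le.2 ht)]
      symm
      exact tendsto_nhds_unique (htend t)
        (by rw [show (fun n => ms n t) = fun _ => (0:ℝ) from funext fun n => hneg t ht n]
            exact tendsto_const_nhds)
  refine ⟨m, hmgood, hfix, ?_⟩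
  -- uniqueness among Good fixed points
  intro m' hm'good hm'fix t ht
  have h := gronwall (T := t) (C := 2*lamStar) (K := lamStar * (1 + lamStar * t))
    ((hm'good.1).sub hmgood.1) (by positivity) (by positivity) ?_ ?_ t ⟨ht, le_refl t⟩
  · exact sub_eq_zero.1 h
  · intro s hs
    have h1 := (hm'good.2 s); have h2 := hmgood.2 s
    show |m' s - m s| ≤ 2*lamStar
    exact abs_le.2 ⟨by linarith [h1.1, h1.2, h2.1, h2.2], by linarith [h1.1, h1.2, h2.1, h2.2]⟩
  · intro s hs
    show |m' s - m s| ≤ lamStar * (1 + lamStar * t) * ∫ r in (0:ℝ)..s, |m' r - m r|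
    rw [show m' s - m s = Φ m' s - Φ m s by rw [hm'fix s hs.1, hfix s]]
    have h1 := Phi_diff (lam0 := lam0) (I0 := I0) hlamStar hlam_meas hlam_mem hS0 hm'good hmgood hs.1
    rw [← hΦ] at h1
    have hint_nonneg : 0 ≤ ∫ r in (0:ℝ)..s, |m' r - m r| :=
      intervalIntegral.integral_nonneg hs.1 (fun r _ => abs_nonneg _)
    have hKs : lamStar * (1 + lamStar * s) ≤ lamStar * (1 + lamStar * t) := by
      nlinarith [mul_nonneg (mul_nonneg hlamStar.le hlamStar.le) (sub_nonneg.2 hs.2)]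
    calc |Φ m' s - Φ m s| ≤ lamStar * (1 + lamStar * s) * ∫ r in (0:ℝ)..s, |m' r - m r| := h1
      _ ≤ lamStar * (1 + lamStar * t) * ∫ r in (0:ℝ)..s, |m' r - m r| :=
          mul_le_mul_of_nonneg_right hKs hint_nonneg



end PhiProps
end HomAux

open HomAux

/-- There is exactly one Borel measurable `m : [0,∞) → [0,λ*]` with
`m(t) = Ī(0)λ̄⁰(t) + S̄(0)∫₀ᵗ λ̄(t−s) m(s) exp(−∫₀ˢ m(r)dr) ds` for all `t ≥ 0`,
and this fixed point equals `F̄`, the second component of the (unique) solution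
of the homogeneous limit system. -/
theorem fixed_point_exists_unique_eq_F
    (lamStar : ℝ) (hlamStar : 0 < lamStar)
    (lam0 lam : ℝ → ℝ) (hlam0_meas : Measurable lam0) (hlam_meas : Measurable lam)
    (hlam0_mem : ∀ t : ℝ, 0 ≤ t → lam0 t ∈ Set.Icc (0:ℝ) lamStar)
    (hlam_mem : ∀ t : ℝ, 0 ≤ t → lam t ∈ Set.Icc (0:ℝ) lamStar)
    (I0 S0 : ℝ) (hI0 : I0 ∈ Set.Ioo (0:ℝ) 1) (hS0 : S0 ∈ Set.Ioo (0:ℝ) 1)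
    (hsum : I0 + S0 ≤ 1) :
    ∃ m : ℝ → ℝ,
      (Measurable m ∧ (∀ t : ℝ, 0 ≤ t → m t ∈ Set.Icc (0:ℝ) lamStar) ∧
        (∀ t : ℝ, 0 ≤ t →
          m t = I0 * lam0 t + S0 * ∫ s in (0:ℝ)..t,
            lam (t - s) * m s * Real.exp (-(∫ r in (0:ℝ)..s, m r)))) ∧
      (∀ m' : ℝ → ℝ, Measurable m' →
        (∀ t : ℝ, 0 ≤ t → m' t ∈ Set.Icc (0:ℝ) lamStar) →
        (∀ t : ℝ, 0 ≤ t →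
          m' t = I0 * lam0 t + S0 * ∫ s in (0:ℝ)..t,
            lam (t - s) * m' s * Real.exp (-(∫ r in (0:ℝ)..s, m' r))) →
        ∀ t : ℝ, 0 ≤ t → m' t = m t) ∧
      (∀ S F : ℝ → ℝ, IsHomSol lam0 lam S0 I0 S F → ∀ t : ℝ, 0 ≤ t → m t = F t) := by
  classical
  obtain ⟨m, hmgood, hfix, huniq⟩ := exists_fixed_point hlamStar hlam0_meas hlam_meas
    hlam0_mem hlam_mem hI0 hS0 hsum
  have heqn : ∀ t : ℝ, 0 ≤ t → m t = I0 * lam0 t + S0 * ∫ s in (0:ℝ)..t,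
      lam (t - s) * m s * Real.exp (-(∫ r in (0:ℝ)..s, m r)) := by
    intro t ht
    rw [← hfix t]
    simp only [Phi, if_pos ht, prim]
  have huniq' : ∀ m' : ℝ → ℝ, Measurable m' →
      (∀ t : ℝ, 0 ≤ t → m' t ∈ Set.Icc (0:ℝ) lamStar) →
      (∀ t : ℝ, 0 ≤ t → m' t = I0 * lam0 t + S0 * ∫ s in (0:ℝ)..t,
        lam (t - s) * m' s * Real.exp (-(∫ r in (0:ℝ)..s, m' r))) →
      ∀ t : ℝ, 0 ≤ t → m' t = m t := by
    intro m' hm'meas hm'mem hm'eq t ht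
    set m'' : ℝ → ℝ := fun s => if 0 ≤ s then m' s else 0 with hm''def
    have hm''eq : ∀ s : ℝ, 0 ≤ s → m'' s = m' s := by
      intro s hs; simp only [hm''def]; rw [if_pos hs]
    have hm''good : Good lamStar m'' := by
      refine ⟨Measurable.ite measurableSet_Ici hm'meas measurable_const, fun s => ?_⟩
      by_cases hs : 0 ≤ s
      · rw [hm''eq s hs]; exact hm'mem s hs
      · simp only [hm''def]; rw [if_neg hs]; exact ⟨le_rfl, hlamStar.le⟩
    have hprim : ∀ s : ℝ, 0 ≤ s → prim m'' s = ∫ r in (0:ℝ)..s, m' r := by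
      intro s hs
      apply intervalIntegral.integral_congr
      intro r hr
      rw [Set.uIcc_of_le hs] at hr
      exact hm''eq r hr.1
    have hfix'' : ∀ τ : ℝ, 0 ≤ τ → Phi lam0 lam I0 S0 m'' τ = m'' τ := by
      intro τ hτ
      rw [hm''eq τ hτ, hm'eq τ hτ]
      simp only [Phi, if_pos hτ]
      congr 1
      congr 1
      apply intervalIntegral.integral_congr
      intro s hsm
      rw [Set.uIcc_of_le hτ] at hsm
      beta_reduce
      rw [hm''eq s hsm.1, hprim s hsm.1]
    have h := huniq m'' hm''good hfix'' t ht
    rw [← hm''eq t ht]; exact h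
  refine ⟨m, ⟨hmgood.1, fun t _ => hmgood.2 t, heqn⟩, huniq', ?_⟩
  intro S F hSF t ht
  obtain ⟨hSmeas, hFmeas, hSpos, hFpos, hloc, hSeq, hFeq⟩ := hSF
  -- F is bounded by lamStar on [0,∞)
  have hFle : ∀ τ : ℝ, 0 ≤ τ → F τ ≤ lamStar := by
    intro τ hτ
    obtain ⟨C, hC⟩ := hloc τ
    have hC0 : 0 ≤ C := le_trans (hSpos 0 le_rfl) (hC 0 ⟨le_rfl, hτ⟩).1
    have hSFb : ∀ s ∈ Set.Ioc (0:ℝ) τ, |S s * F s| ≤ C * C := by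
      intro s hs
      have hs0 : (0:ℝ) ≤ s := hs.1.le
      have h1 := hC s ⟨hs0, hs.2⟩
      have h2 := hSpos s hs0; have h3 := hFpos s hs0
      rw [abs_of_nonneg (mul_nonneg h2 h3)]
      exact mul_le_mul h1.1 h1.2 h3 hC0
    have hSFint : IntervalIntegrable (fun s => S s * F s) volume 0 τ :=
      intInt_on (C := C*C) (hSmeas.mul hFmeas) hτ hSFb
    have hker_int : IntervalIntegrable (fun s => lam (τ - s) * S s * F s) volume 0 τ := by
      refine intInt_on (C := lamStar * (C*C))
        (((hlam_meas.comp (measurable_const.sub measurable_id)).mul hSmeas).mul hFmeas)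
        hτ ?_
      intro s hs
      have hts : 0 ≤ τ - s := by linarith [hs.2]
      have h1 := hlam_mem (τ - s) hts
      have h2 := hSFb s hs
      calc |lam (τ - s) * S s * F s| = |lam (τ - s)| * |S s * F s| := by
            rw [mul_assoc, abs_mul]
        _ ≤ lamStar * (C * C) :=
            mul_le_mul (by rw [abs_of_nonneg h1.1]; exact h1.2) h2
              (abs_nonneg _) hlamStar.le
    have h1 : (∫ s in (0:ℝ)..τ, S s * F s) = S0 - S τ := by linarith [hSeq τ hτ]
    have h2 : (∫ s in (0:ℝ)..τ, lam (τ - s) * S s * F s)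
        ≤ lamStar * ∫ s in (0:ℝ)..τ, S s * F s := by
      have step : (∫ s in (0:ℝ)..τ, lam (τ - s) * S s * F s)
          ≤ ∫ s in (0:ℝ)..τ, lamStar * (S s * F s) := by
        apply intervalIntegral.integral_mono_on hτ hker_int (hSFint.const_mul lamStar)
        intro s hsm
        have hs0 := hsm.1
        have hts : 0 ≤ τ - s := by linarith [hsm.2]
        have h1 := hlam_mem (τ - s) hts
        have h2 := hSpos s hs0; have h3 := hFpos s hs0
        nlinarith [mul_le_mul_of_nonneg_right h1.2 (mul_nonneg h2 h3)]
      rwa [intervalIntegral.integral_const_mul] at step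
    have h3 := hSpos τ hτ
    have h4 : I0 * lam0 τ ≤ I0 * lamStar :=
      mul_le_mul_of_nonneg_left (hlam0_mem τ hτ).2 hI0.1.le
    rw [hFeq τ hτ]
    nlinarith [mul_le_mul_of_nonneg_right hsum hlamStar.le,
      mul_nonneg hlamStar.le h3, hS0.1]
  set F' : ℝ → ℝ := fun s => if 0 ≤ s then F s else 0 with hF'def
  have hF'eq : ∀ s : ℝ, 0 ≤ s → F' s = F s := by
    intro s hs; simp only [hF'def]; rw [if_pos hs]
  have hF'good : Good lamStar F' := by
    refine ⟨Measurable.ite measurableSet_Ici hFmeas measurable_const, fun s => ?_⟩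
    by_cases hs : 0 ≤ s
    · rw [hF'eq s hs]; exact ⟨hFpos s hs, hFle s hs⟩
    · simp only [hF'def]; rw [if_neg hs]; exact ⟨le_rfl, hlamStar.le⟩
  have hF'prim : ∀ s : ℝ, 0 ≤ s → prim F' s = ∫ r in (0:ℝ)..s, F r := by
    intro s hs
    apply intervalIntegral.integral_congr
    intro r hr
    rw [Set.uIcc_of_le hs] at hr
    exact hF'eq r hr.1
  set Sh : ℝ → ℝ := fun τ => S0 * Real.exp (-(prim F' τ)) with hShdef
  have hShmeas : Measurable Sh :=
    measurable_const.mul (hF'good.prim_cont.neg.rexp).measurable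
  have hShb : ∀ τ : ℝ, 0 ≤ τ → 0 ≤ Sh τ ∧ Sh τ ≤ S0 := by
    intro τ hτ
    constructor
    · simp only [hShdef]
      beta_reduce
      exact mul_nonneg hS0.1.le (Real.exp_pos _).le
    · simp only [hShdef]
      beta_reduce
      have h1 : Real.exp (-(prim F' τ)) ≤ 1 :=
        Real.exp_le_one_iff.2 (by linarith [hF'good.prim_nonneg hτ])
      nlinarith [hS0.1]
  have hSh_inteq : ∀ τ : ℝ, 0 ≤ τ → Sh τ = S0 - ∫ s in (0:ℝ)..τ, Sh s * F s := by
    intro τ hτ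
    have e1 : (∫ s in (0:ℝ)..τ, Sh s * F s)
        = S0 * ∫ s in (0:ℝ)..τ, F' s * Real.exp (-(prim F' s)) := by
      rw [← intervalIntegral.integral_const_mul]
      apply intervalIntegral.integral_congr
      intro s hsm
      rw [Set.uIcc_of_le hτ] at hsm
      beta_reduce
      simp only [hShdef]
      beta_reduce
      rw [hF'eq s hsm.1]
      ring
    rw [e1, hF'good.key hτ]
    simp only [hShdef]
    beta_reduce
    ring
  have hSSh : ∀ τ : ℝ, 0 ≤ τ → S τ = Sh τ := by
    intro τ hτ
    obtain ⟨C, hC⟩ := hloc τ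
    have hC0 : 0 ≤ C := le_trans (hSpos 0 le_rfl) (hC 0 ⟨le_rfl, hτ⟩).1
    have hb : ∀ s ∈ Set.Icc (0:ℝ) τ, |S s - Sh s| ≤ C + S0 := by
      intro s hsm
      have hs0 := hsm.1
      have h1 := (hC s hsm).1
      have h2 := hSpos s hs0
      have h3 := hShb s hs0
      exact abs_le.2 ⟨by linarith, by linarith⟩
    have hit : ∀ s ∈ Set.Icc (0:ℝ) τ, |S s - Sh s|
        ≤ lamStar * ∫ r in (0:ℝ)..s, |S r - Sh r| := by
      intro s hsm
      have hs0 := hsm.1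
      have hsub : Set.Ioc (0:ℝ) s ⊆ Set.Icc (0:ℝ) τ := fun r hr =>
        ⟨hr.1.le, le_trans hr.2 hsm.2⟩
      have hint_SF : IntervalIntegrable (fun r => S r * F r) volume 0 s := by
        refine intInt_on (C := C*C) (hSmeas.mul hFmeas) hs0 ?_
        intro r hr
        have h1 := hC r (hsub hr)
        have h2 := hSpos r hr.1.le; have h3 := hFpos r hr.1.le
        show |S r * F r| ≤ C * C
        rw [abs_of_nonneg (mul_nonneg h2 h3)]
        exact mul_le_mul h1.1 h1.2 h3 hC0
      have hint_ShF : IntervalIntegrable (fun r => Sh r * F r) volume 0 s := by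
        refine intInt_on (C := S0*C) (hShmeas.mul hFmeas) hs0 ?_
        intro r hr
        have h1 := (hC r (hsub hr)).2
        have h2 := hShb r hr.1.le
        have h3 := hFpos r hr.1.le
        show |Sh r * F r| ≤ S0 * C
        rw [abs_of_nonneg (mul_nonneg h2.1 h3)]
        exact mul_le_mul h2.2 h1 h3 hS0.1.le
      have e2 : S s - Sh s = -∫ r in (0:ℝ)..s, (S r - Sh r) * F r := by
        have h5 := hSeq s hs0
        have h6 := hSh_inteq s hs0
        have h7 : (∫ r in (0:ℝ)..s, (S r - Sh r) * F r)
            = (∫ r in (0:ℝ)..s, S r * F r) - ∫ r in (0:ℝ)..s, Sh r * F r := by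
          rw [← intervalIntegral.integral_sub hint_SF hint_ShF]
          apply intervalIntegral.integral_congr
          intro r _
          ring
        linarith
      rw [e2, abs_neg]
      have hint_prod : IntervalIntegrable (fun r => (S r - Sh r) * F r) volume 0 s := by
        have heq : (fun r => (S r - Sh r) * F r) = fun r => S r * F r - Sh r * F r :=
          funext fun r => by ring
        rw [heq]; exact hint_SF.sub hint_ShF
      have hint_rhs : IntervalIntegrable (fun r => lamStar * |S r - Sh r|) volume 0 s := by
        refine IntervalIntegrable.const_mul ?_ lamStar
        refine intInt_on (C := C + S0) ((hSmeas.sub hShmeas).abs) hs0 ?_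
        intro r hr
        rw [abs_abs]
        exact hb r (hsub hr)
      calc |∫ r in (0:ℝ)..s, (S r - Sh r) * F r|
          ≤ ∫ r in (0:ℝ)..s, |(S r - Sh r) * F r| :=
            intervalIntegral.abs_integral_le_integral_abs hs0
        _ ≤ ∫ r in (0:ℝ)..s, lamStar * |S r - Sh r| := by
            apply intervalIntegral.integral_mono_on hs0 hint_prod.abs hint_rhs
            intro r hr
            have h3 := hFpos r hr.1
            have h4 := hFle r hr.1
            rw [abs_mul, abs_of_nonneg h3]
            calc |S r - Sh r| * F r ≤ |S r - Sh r| * lamStar :=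
                mul_le_mul_of_nonneg_left h4 (abs_nonneg _)
              _ = lamStar * |S r - Sh r| := mul_comm _ _
        _ = lamStar * ∫ r in (0:ℝ)..s, |S r - Sh r| :=
            intervalIntegral.integral_const_mul _ _
    have hz := gronwall (hSmeas.sub hShmeas) (C := C + S0) (K := lamStar)
      (by linarith [hS0.1]) hlamStar.le hb hit τ ⟨hτ, le_rfl⟩
    exact sub_eq_zero.1 hz
  have hFfix : ∀ τ : ℝ, 0 ≤ τ → F τ = I0 * lam0 τ + S0 * ∫ s in (0:ℝ)..τ,
      lam (τ - s) * F s * Real.exp (-(∫ r in (0:ℝ)..s, F r)) := by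
    intro τ hτ
    rw [hFeq τ hτ]
    congr 1
    rw [← intervalIntegral.integral_const_mul]
    apply intervalIntegral.integral_congr
    intro s hsm
    rw [Set.uIcc_of_le hτ] at hsm
    beta_reduce
    rw [hSSh s hsm.1]
    simp only [hShdef]
    beta_reduce
    rw [show (∫ r in (0:ℝ)..s, F r) = prim F' s from (hF'prim s hsm.1).symm]
    ring
  exact (huniq' F hFmeas (fun τ hτ => ⟨hFpos τ hτ, hFle τ hτ⟩) hFfix t ht).symm
end

section
/- Any solution of the multipatch–multigroup limit system satisfies the a priori bound ∑_{k=1}^K ∑_{ℓ=1}^L F̄_k^ℓ(t) ≤ λ* L K e^{λ* β* L K t} for all t ≥ 0. -/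
open MeasureTheory

/-- The data of the multipatch–multigroup limit system: `K` groups, `L` patches,
a parameter `γ ∈ [0,1]`, infectivity profiles `λ̄_k, λ̄⁰_k` bounded by `λ*`,
contact rates `β_{k,k'}^{ℓ,ℓ'}` bounded by `β*`, transition functions
`q_k^{ℓ',ℓ}(s,t) ∈ [0,1]`, conservative migration rate matrices
`ν_{S,k}, ν_{I,k}, ν_{R,k}`, infectious-period distributions `F_k, F⁰_k`
(probability measures on `[0,∞)`), and nonnegative initial conditions with
`B̄_k^ℓ(0) > 0` and total mass at most `1`. -/
structure MPMGData (K L : ℕ) where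
  gam : ℝ
  gam_nonneg : 0 ≤ gam
  gam_le_one : gam ≤ 1
  lamStar : ℝ
  lamStar_pos : 0 < lamStar
  betaStar : ℝ
  betaStar_pos : 0 < betaStar
  lam : Fin K → ℝ → ℝ
  lam0 : Fin K → ℝ → ℝ
  lam_meas : ∀ k, Measurable (lam k)
  lam0_meas : ∀ k, Measurable (lam0 k)
  lam_mem : ∀ k (t : ℝ), lam k t ∈ Set.Icc 0 lamStar
  lam0_mem : ∀ k (t : ℝ), lam0 k t ∈ Set.Icc 0 lamStar
  lam_neg : ∀ k (t : ℝ), t < 0 → lam k t = 0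
  lam0_neg : ∀ k (t : ℝ), t < 0 → lam0 k t = 0
  beta : Fin K → Fin K → Fin L → Fin L → ℝ → ℝ
  beta_meas : ∀ k k' l l', Measurable (beta k k' l l')
  beta_mem : ∀ k k' l l' (t : ℝ), 0 ≤ t → beta k k' l l' t ∈ Set.Icc 0 betaStar
  q : Fin K → Fin L → Fin L → ℝ → ℝ → ℝ
  q_meas : ∀ k l' l, Measurable (Function.uncurry (q k l' l))
  q_mem : ∀ k l' l (s t : ℝ), 0 ≤ s → s ≤ t → q k l' l s t ∈ Set.Icc (0:ℝ) 1
  nuS : Fin K → Fin L → Fin L → ℝ → ℝ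
  nuI : Fin K → Fin L → Fin L → ℝ → ℝ
  nuR : Fin K → Fin L → Fin L → ℝ → ℝ
  nuS_meas : ∀ k l l', Measurable (nuS k l l')
  nuI_meas : ∀ k l l', Measurable (nuI k l l')
  nuR_meas : ∀ k l l', Measurable (nuR k l l')
  nuS_bdd : ∀ k l l' (T : ℝ), ∃ C : ℝ, ∀ t ∈ Set.Icc (0:ℝ) T, |nuS k l l' t| ≤ C
  nuI_bdd : ∀ k l l' (T : ℝ), ∃ C : ℝ, ∀ t ∈ Set.Icc (0:ℝ) T, |nuI k l l' t| ≤ C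
  nuR_bdd : ∀ k l l' (T : ℝ), ∃ C : ℝ, ∀ t ∈ Set.Icc (0:ℝ) T, |nuR k l l' t| ≤ C
  nuS_nonneg : ∀ k l l' (t : ℝ), 0 ≤ t → l' ≠ l → 0 ≤ nuS k l l' t
  nuI_nonneg : ∀ k l l' (t : ℝ), 0 ≤ t → l' ≠ l → 0 ≤ nuI k l l' t
  nuR_nonneg : ∀ k l l' (t : ℝ), 0 ≤ t → l' ≠ l → 0 ≤ nuR k l l' t
  nuS_diag : ∀ k l (t : ℝ), 0 ≤ t →
    nuS k l l t = -∑ l' ∈ Finset.univ.filter (fun l' => l' ≠ l), nuS k l l' t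
  nuI_diag : ∀ k l (t : ℝ), 0 ≤ t →
    nuI k l l t = -∑ l' ∈ Finset.univ.filter (fun l' => l' ≠ l), nuI k l l' t
  nuR_diag : ∀ k l (t : ℝ), 0 ≤ t →
    nuR k l l t = -∑ l' ∈ Finset.univ.filter (fun l' => l' ≠ l), nuR k l l' t
  Fdist : Fin K → Measure ℝ
  F0dist : Fin K → Measure ℝ
  Fdist_prob : ∀ k, IsProbabilityMeasure (Fdist k)
  F0dist_prob : ∀ k, IsProbabilityMeasure (F0dist k)
  Fdist_supp : ∀ k, Fdist k (Set.Iio 0) = 0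
  F0dist_supp : ∀ k, F0dist k (Set.Iio 0) = 0
  S0 : Fin K → Fin L → ℝ
  I0 : Fin K → Fin L → ℝ
  R0 : Fin K → Fin L → ℝ
  S0_nonneg : ∀ k l, 0 ≤ S0 k l
  I0_nonneg : ∀ k l, 0 ≤ I0 k l
  R0_nonneg : ∀ k l, 0 ≤ R0 k l
  B0_pos : ∀ k l, 0 < S0 k l + I0 k l + R0 k l
  B0_sum_le : ∑ k, ∑ l, (S0 k l + I0 k l + R0 k l) ≤ 1

/-- The force of infection `Γ̄_k^ℓ(t) = (B̄_k^ℓ(t))^{−γ} ∑_{k',ℓ'} β_{k,k'}^{ℓ,ℓ'}(t) F̄_{k'}^{ℓ'}(t)`,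
where `B̄_k^ℓ = S̄_k^ℓ + Ī_k^ℓ + R̄_k^ℓ`. The power is the real power. -/
noncomputable def MPMGData.Gam {K L : ℕ} (D : MPMGData K L)
    (S Fb I R : Fin K → Fin L → ℝ → ℝ) (k : Fin K) (l : Fin L) (t : ℝ) : ℝ :=
  (S k l t + I k l t + R k l t) ^ (-D.gam) *
    ∑ k', ∑ l', D.beta k k' l l' t * Fb k' l' t

/-- A solution of the multipatch–multigroup limit system: Borel measurable,
locally bounded, nonnegative functions `(S̄_k^ℓ, F̄_k^ℓ, Ī_k^ℓ, R̄_k^ℓ)` with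
`B̄_k^ℓ > 0`, satisfying equations (i)–(iv) for all `t ≥ 0` and all `k, ℓ`. -/
structure IsMPMGSol {K L : ℕ} (D : MPMGData K L)
    (S Fb I R : Fin K → Fin L → ℝ → ℝ) : Prop where
  S_meas : ∀ k l, Measurable (S k l)
  Fb_meas : ∀ k l, Measurable (Fb k l)
  I_meas : ∀ k l, Measurable (I k l)
  R_meas : ∀ k l, Measurable (R k l)
  locBdd : ∀ T : ℝ, ∃ C : ℝ, ∀ k l, ∀ t ∈ Set.Icc (0:ℝ) T,
    S k l t ≤ C ∧ Fb k l t ≤ C ∧ I k l t ≤ C ∧ R k l t ≤ C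
  S_nonneg : ∀ k l (t : ℝ), 0 ≤ t → 0 ≤ S k l t
  Fb_nonneg : ∀ k l (t : ℝ), 0 ≤ t → 0 ≤ Fb k l t
  I_nonneg : ∀ k l (t : ℝ), 0 ≤ t → 0 ≤ I k l t
  R_nonneg : ∀ k l (t : ℝ), 0 ≤ t → 0 ≤ R k l t
  B_pos : ∀ k l (t : ℝ), 0 ≤ t → 0 < S k l t + I k l t + R k l t
  eqS : ∀ k l (t : ℝ), 0 ≤ t →
    S k l t = D.S0 k l
      - (∫ s in (0:ℝ)..t, S k l s * D.Gam S Fb I R k l s)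
      + ∑ l', ∫ s in (0:ℝ)..t, D.nuS k l' l s * S k l' s
  eqF : ∀ k l (t : ℝ), 0 ≤ t →
    Fb k l t = D.lam0 k t * (∑ l', D.I0 k l' * D.q k l' l 0 t)
      + ∑ l', ∫ s in (0:ℝ)..t,
          D.lam k (t - s) * S k l' s * D.Gam S Fb I R k l' s * D.q k l' l s t
  eqI : ∀ k l (t : ℝ), 0 ≤ t →
    I k l t = D.I0 k l
      - (∑ l', D.I0 k l' * ∫ s in Set.Ioc (0:ℝ) t, D.q k l' l 0 s ∂(D.F0dist k))
      + (∫ s in (0:ℝ)..t, S k l s * D.Gam S Fb I R k l s)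
      - (∑ l', ∫ s in (0:ℝ)..t,
          (∫ u in Set.Ioc (0:ℝ) (t - s), D.q k l' l s (s + u) ∂(D.Fdist k))
            * (S k l' s * D.Gam S Fb I R k l' s))
      + ∑ l', ∫ s in (0:ℝ)..t, D.nuI k l' l s * I k l' s
  eqR : ∀ k l (t : ℝ), 0 ≤ t →
    R k l t = D.R0 k l
      + (∑ l', D.I0 k l' * ∫ s in Set.Ioc (0:ℝ) t, D.q k l' l 0 s ∂(D.F0dist k))
      + (∑ l', ∫ s in (0:ℝ)..t,
          (∫ u in Set.Ioc (0:ℝ) (t - s), D.q k l' l s (s + u) ∂(D.Fdist k))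
            * (S k l' s * D.Gam S Fb I R k l' s))
      + ∑ l', ∫ s in (0:ℝ)..t, D.nuR k l' l s * R k l' s

private lemma mpmg_intervalIntegrable_of_bound {f : ℝ → ℝ} (hf : Measurable f) (a b C : ℝ)
    (h : ∀ x ∈ Set.uIcc a b, |f x| ≤ C) : IntervalIntegrable f volume a b := by
  rw [intervalIntegrable_iff]
  refine MeasureTheory.Integrable.mono' (g := fun _ => C)
    (integrableOn_const measure_Ioc_lt_top.ne)
    hf.aestronglyMeasurable ?_
  filter_upwards [ae_restrict_mem measurableSet_uIoc] with x hx
  exact h x (Set.uIoc_subset_uIcc hx)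

/-- A priori bound on the total force of infection:
`∑_{k,ℓ} F̄_k^ℓ(t) ≤ λ* L K e^{λ* β* L K t}` for all `t ≥ 0`. -/
theorem mpmg_total_force_apriori_bound
    (K L : ℕ) (hK : 1 ≤ K) (hL : 1 ≤ L) (D : MPMGData K L)
    (S Fb I R : Fin K → Fin L → ℝ → ℝ) (hsol : IsMPMGSol D S Fb I R) :
    ∀ t : ℝ, 0 ≤ t →
      ∑ k, ∑ l, Fb k l t
        ≤ D.lamStar * L * K * Real.exp (D.lamStar * D.betaStar * L * K * t) := by
  intro t ht
  -- local bound
  obtain ⟨C, hC⟩ := hsol.locBdd t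
  have hKpos : 0 < K := hK
  have hLpos : 0 < L := hL
  have k0 : Fin K := ⟨0, hKpos⟩
  have l0 : Fin L := ⟨0, hLpos⟩
  have hC0 : 0 ≤ C :=
    le_trans (hsol.S_nonneg k0 l0 0 le_rfl) ((hC k0 l0 0 ⟨le_rfl, ht⟩).1)
  have huIcc : Set.uIcc (0:ℝ) t = Set.Icc 0 t := Set.uIcc_of_le ht
  -- nonnegativity of S·Γ
  have hGam_nonneg : ∀ k l (s : ℝ), 0 ≤ s → 0 ≤ D.Gam S Fb I R k l s := by
    intro k l s hs
    apply mul_nonneg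
    · exact Real.rpow_nonneg (hsol.B_pos k l s hs).le _
    · refine Finset.sum_nonneg fun k' _ => Finset.sum_nonneg fun l' _ => ?_
      exact mul_nonneg (D.beta_mem k k' l l' s hs).1 (hsol.Fb_nonneg k' l' s hs)
  have hSG_nonneg : ∀ k l (s : ℝ), 0 ≤ s → 0 ≤ S k l s * D.Gam S Fb I R k l s :=
    fun k l s hs => mul_nonneg (hsol.S_nonneg k l s hs) (hGam_nonneg k l s hs)
  -- bound on S·Γ
  set M : ℝ := (1 + 3*C) * ((K:ℝ) * ((L:ℝ) * (D.betaStar * C))) with hMdef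
  have hM0 : 0 ≤ M := by
    refine mul_nonneg (by linarith) (mul_nonneg (Nat.cast_nonneg K)
      (mul_nonneg (Nat.cast_nonneg L) (mul_nonneg D.betaStar_pos.le hC0)))
  have hSG_bdd : ∀ k l, ∀ s ∈ Set.Icc (0:ℝ) t, S k l s * D.Gam S Fb I R k l s ≤ M := by
    intro k l s hs
    have hs0 : 0 ≤ s := hs.1
    have hB : 0 < S k l s + I k l s + R k l s := hsol.B_pos k l s hs0
    have hSig0 : 0 ≤ ∑ k', ∑ l', D.beta k k' l l' s * Fb k' l' s := by
      refine Finset.sum_nonneg fun k' _ => Finset.sum_nonneg fun l' _ => ?_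
      exact mul_nonneg (D.beta_mem k k' l l' s hs0).1 (hsol.Fb_nonneg k' l' s hs0)
    have hSigle : ∑ k', ∑ l', D.beta k k' l l' s * Fb k' l' s
        ≤ (K:ℝ) * ((L:ℝ) * (D.betaStar * C)) := by
      calc ∑ k', ∑ l', D.beta k k' l l' s * Fb k' l' s
          ≤ ∑ _k' : Fin K, ∑ _l' : Fin L, D.betaStar * C := by
            refine Finset.sum_le_sum fun k' _ => Finset.sum_le_sum fun l' _ => ?_
            exact mul_le_mul (D.beta_mem k k' l l' s hs0).2 (hC k' l' s hs).2.1
              (hsol.Fb_nonneg k' l' s hs0) D.betaStar_pos.le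
        _ = (K:ℝ) * ((L:ℝ) * (D.betaStar * C)) := by
            simp [Finset.sum_const, mul_assoc]
    have hpow0 : 0 ≤ (S k l s + I k l s + R k l s) ^ (-D.gam) :=
      Real.rpow_nonneg hB.le _
    have hSB : S k l s * (S k l s + I k l s + R k l s) ^ (-D.gam) ≤ 1 + 3*C := by
      have h1 : S k l s ≤ S k l s + I k l s + R k l s := by
        linarith [hsol.I_nonneg k l s hs0, hsol.R_nonneg k l s hs0]
      have h2 : S k l s * (S k l s + I k l s + R k l s) ^ (-D.gam)
          ≤ (S k l s + I k l s + R k l s) * (S k l s + I k l s + R k l s) ^ (-D.gam) :=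
        mul_le_mul_of_nonneg_right h1 hpow0
      have h3 : (S k l s + I k l s + R k l s) * (S k l s + I k l s + R k l s) ^ (-D.gam)
          = (S k l s + I k l s + R k l s) ^ (1 - D.gam) := by
        rw [show (1 : ℝ) - D.gam = 1 + (-D.gam) by ring, Real.rpow_add hB,
          Real.rpow_one]
      have h4 : (S k l s + I k l s + R k l s) ^ (1 - D.gam)
          ≤ 1 + (S k l s + I k l s + R k l s) := by
        rcases le_or_gt (S k l s + I k l s + R k l s) 1 with hb | hb
        · have := Real.rpow_le_one hB.le hb (show (0:ℝ) ≤ 1 - D.gam by linarith [D.gam_le_one])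
          linarith
        · have := Real.rpow_le_rpow_of_exponent_le hb.le
            (show (1:ℝ) - D.gam ≤ 1 by linarith [D.gam_nonneg])
          rw [Real.rpow_one] at this
          linarith
      have h5 : S k l s + I k l s + R k l s ≤ 3*C := by
        have := hC k l s hs
        linarith [this.1, this.2.2.1, this.2.2.2]
      linarith
    have : S k l s * D.Gam S Fb I R k l s
        = (S k l s * (S k l s + I k l s + R k l s) ^ (-D.gam))
          * ∑ k', ∑ l', D.beta k k' l l' s * Fb k' l' s := by
      simp only [MPMGData.Gam]; ring
    rw [this, hMdef]
    exact mul_le_mul hSB hSigle hSig0 (by linarith)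
  -- measurability of Γ and S·Γ
  have hGam_meas : ∀ k l, Measurable (fun s => D.Gam S Fb I R k l s) := by
    intro k l
    simp only [MPMGData.Gam]
    have hpm : Measurable (fun s => (S k l s + I k l s + R k l s) ^ (-D.gam)) := by
      have h1 := hsol.S_meas k l
      have h2 := hsol.I_meas k l
      have h3 := hsol.R_meas k l
      measurability
    exact hpm.mul
      (Finset.measurable_sum _ fun k' _ => Finset.measurable_sum _ fun l' _ =>
        (D.beta_meas k k' l l').mul (hsol.Fb_meas k' l'))
  have hSG_int : ∀ k l, IntervalIntegrable
      (fun s => S k l s * D.Gam S Fb I R k l s) volume 0 t := by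
    intro k l
    refine mpmg_intervalIntegrable_of_bound ((hsol.S_meas k l).mul (hGam_meas k l)) 0 t M ?_
    intro x hx
    rw [huIcc] at hx
    rw [Pi.mul_apply, abs_of_nonneg (hSG_nonneg k l x hx.1)]
    exact hSG_bdd k l x hx
  -- integrability of ν·S
  have hnu_int : ∀ k (l' l : Fin L), IntervalIntegrable
      (fun s => D.nuS k l' l s * S k l' s) volume 0 t := by
    intro k l' l
    obtain ⟨Cν, hCν⟩ := D.nuS_bdd k l' l t
    have hCν0 : 0 ≤ Cν := le_trans (abs_nonneg _) (hCν 0 ⟨le_rfl, ht⟩)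
    refine mpmg_intervalIntegrable_of_bound ((D.nuS_meas k l' l).mul (hsol.S_meas k l'))
      0 t (Cν * C) ?_
    intro x hx
    rw [huIcc] at hx
    rw [Pi.mul_apply, abs_mul]
    refine mul_le_mul (hCν x hx) ?_ (abs_nonneg _) hCν0
    rw [abs_of_nonneg (hsol.S_nonneg k l' x hx.1)]
    exact (hC k l' x hx).1
  -- cumulative infections are bounded by initial susceptibles
  have hkey : ∀ k, ∑ l, ∫ s in (0:ℝ)..t, S k l s * D.Gam S Fb I R k l s
      ≤ ∑ l, D.S0 k l := by
    intro k
    have h1 : ∀ l, ∫ s in (0:ℝ)..t, S k l s * D.Gam S Fb I R k l s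
        = D.S0 k l - S k l t + ∑ l', ∫ s in (0:ℝ)..t, D.nuS k l' l s * S k l' s := by
      intro l
      linarith [hsol.eqS k l t ht]
    have h2 : ∑ l, ∑ l', ∫ s in (0:ℝ)..t, D.nuS k l' l s * S k l' s = 0 := by
      rw [Finset.sum_comm]
      refine Finset.sum_eq_zero fun l' _ => ?_
      rw [← intervalIntegral.integral_finset_sum fun l _ => hnu_int k l' l]
      have heq : Set.EqOn (fun s => ∑ l, D.nuS k l' l s * S k l' s)
          (fun _ => (0:ℝ)) (Set.uIcc 0 t) := by
        intro s hs
        rw [huIcc] at hs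
        have hd := D.nuS_diag k l' s hs.1
        rw [Finset.filter_ne'] at hd
        have hz : ∑ l, D.nuS k l' l s = 0 := by
          have he := Finset.sum_erase_add Finset.univ
            (fun l => D.nuS k l' l s) (Finset.mem_univ l')
          linarith
        simp only
        rw [← Finset.sum_mul, hz, zero_mul]
      rw [intervalIntegral.integral_congr heq]
      simp
    calc ∑ l, ∫ s in (0:ℝ)..t, S k l s * D.Gam S Fb I R k l s
        = ∑ l, (D.S0 k l - S k l t
            + ∑ l', ∫ s in (0:ℝ)..t, D.nuS k l' l s * S k l' s) :=
          Finset.sum_congr rfl fun l _ => h1 l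
      _ = (∑ l, (D.S0 k l - S k l t))
            + ∑ l, ∑ l', ∫ s in (0:ℝ)..t, D.nuS k l' l s * S k l' s := by
          rw [Finset.sum_add_distrib]
      _ = (∑ l, D.S0 k l) - ∑ l, S k l t := by rw [h2, Finset.sum_sub_distrib]; ring
      _ ≤ ∑ l, D.S0 k l := by
          have : 0 ≤ ∑ l, S k l t :=
            Finset.sum_nonneg fun l _ => hsol.S_nonneg k l t ht
          linarith
  -- pointwise bound on each Fb
  have hFb : ∀ k l, Fb k l t
      ≤ D.lamStar * ((∑ l', D.I0 k l') + ∑ l', D.S0 k l') := by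
    intro k l
    rw [hsol.eqF k l t ht]
    have hA : D.lam0 k t * (∑ l', D.I0 k l' * D.q k l' l 0 t)
        ≤ D.lamStar * ∑ l', D.I0 k l' := by
      have h1 : ∑ l', D.I0 k l' * D.q k l' l 0 t ≤ ∑ l', D.I0 k l' := by
        refine Finset.sum_le_sum fun l' _ => ?_
        have hq := D.q_mem k l' l 0 t le_rfl ht
        nlinarith [D.I0_nonneg k l', hq.1, hq.2]
      have h0 : 0 ≤ ∑ l', D.I0 k l' * D.q k l' l 0 t :=
        Finset.sum_nonneg fun l' _ =>
          mul_nonneg (D.I0_nonneg k l') (D.q_mem k l' l 0 t le_rfl ht).1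
      exact mul_le_mul (D.lam0_mem k t).2 h1 h0 D.lamStar_pos.le
    have hB : ∑ l', ∫ s in (0:ℝ)..t,
          D.lam k (t - s) * S k l' s * D.Gam S Fb I R k l' s * D.q k l' l s t
        ≤ D.lamStar * ∑ l', D.S0 k l' := by
      have hper : ∀ l', (∫ s in (0:ℝ)..t,
            D.lam k (t - s) * S k l' s * D.Gam S Fb I R k l' s * D.q k l' l s t)
          ≤ D.lamStar * ∫ s in (0:ℝ)..t, S k l' s * D.Gam S Fb I R k l' s := by
        intro l'
        have hint2 : IntervalIntegrable
            (fun s => D.lamStar * (S k l' s * D.Gam S Fb I R k l' s)) volume 0 t :=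
          (hSG_int k l').const_mul D.lamStar
        have hmeas1 : Measurable (fun s =>
            D.lam k (t - s) * S k l' s * D.Gam S Fb I R k l' s * D.q k l' l s t) := by
          have hqm : Measurable (fun s => D.q k l' l s t) :=
            (D.q_meas k l' l).comp (measurable_id.prodMk measurable_const)
          have hlm : Measurable (fun s => D.lam k (t - s)) :=
            (D.lam_meas k).comp (measurable_const.sub measurable_id)
          exact ((hlm.mul (hsol.S_meas k l')).mul (hGam_meas k l')).mul hqm
        have hpt : ∀ s ∈ Set.Icc (0:ℝ) t,
            D.lam k (t - s) * S k l' s * D.Gam S Fb I R k l' s * D.q k l' l s t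
            ≤ D.lamStar * (S k l' s * D.Gam S Fb I R k l' s) := by
          intro s hs
          have hq := D.q_mem k l' l s t hs.1 hs.2
          have hlam := D.lam_mem k (t - s)
          have hsg := hSG_nonneg k l' s hs.1
          have hay : 0 ≤ D.lam k (t - s) * (S k l' s * D.Gam S Fb I R k l' s) :=
            mul_nonneg hlam.1 hsg
          calc D.lam k (t - s) * S k l' s * D.Gam S Fb I R k l' s * D.q k l' l s t
              = (D.lam k (t - s) * (S k l' s * D.Gam S Fb I R k l' s)) * D.q k l' l s t := by
                ring
            _ ≤ (D.lam k (t - s) * (S k l' s * D.Gam S Fb I R k l' s)) * 1 :=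
                mul_le_mul_of_nonneg_left hq.2 hay
            _ = D.lam k (t - s) * (S k l' s * D.Gam S Fb I R k l' s) := by ring
            _ ≤ D.lamStar * (S k l' s * D.Gam S Fb I R k l' s) :=
                mul_le_mul_of_nonneg_right hlam.2 hsg
        have hint1 : IntervalIntegrable (fun s =>
            D.lam k (t - s) * S k l' s * D.Gam S Fb I R k l' s * D.q k l' l s t)
            volume 0 t := by
          refine mpmg_intervalIntegrable_of_bound hmeas1 0 t (D.lamStar * M) ?_
          intro x hx
          rw [huIcc] at hx
          have hq := D.q_mem k l' l x t hx.1 hx.2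
          have hlam := D.lam_mem k (t - x)
          have hsg := hSG_nonneg k l' x hx.1
          have hsgb := hSG_bdd k l' x hx
          have h0 : 0 ≤ D.lam k (t - x) * (S k l' x * D.Gam S Fb I R k l' x)
              * D.q k l' l x t :=
            mul_nonneg (mul_nonneg hlam.1 hsg) hq.1
          rw [abs_of_nonneg (by linarith :
            (0:ℝ) ≤ D.lam k (t - x) * S k l' x * D.Gam S Fb I R k l' x * D.q k l' l x t)]
          have h2 := hpt x hx
          have h3 : D.lamStar * (S k l' x * D.Gam S Fb I R k l' x) ≤ D.lamStar * M :=
            mul_le_mul_of_nonneg_left hsgb D.lamStar_pos.le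
          linarith
        calc (∫ s in (0:ℝ)..t,
              D.lam k (t - s) * S k l' s * D.Gam S Fb I R k l' s * D.q k l' l s t)
            ≤ ∫ s in (0:ℝ)..t, D.lamStar * (S k l' s * D.Gam S Fb I R k l' s) :=
              intervalIntegral.integral_mono_on ht hint1 hint2 hpt
          _ = D.lamStar * ∫ s in (0:ℝ)..t, S k l' s * D.Gam S Fb I R k l' s :=
              intervalIntegral.integral_const_mul _ _
      calc ∑ l', ∫ s in (0:ℝ)..t,
            D.lam k (t - s) * S k l' s * D.Gam S Fb I R k l' s * D.q k l' l s t
          ≤ ∑ l', D.lamStar * ∫ s in (0:ℝ)..t, S k l' s * D.Gam S Fb I R k l' s :=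
            Finset.sum_le_sum fun l' _ => hper l'
        _ = D.lamStar * ∑ l', ∫ s in (0:ℝ)..t, S k l' s * D.Gam S Fb I R k l' s := by
            rw [Finset.mul_sum]
        _ ≤ D.lamStar * ∑ l', D.S0 k l' :=
            mul_le_mul_of_nonneg_left (hkey k) D.lamStar_pos.le
    calc D.lam0 k t * (∑ l', D.I0 k l' * D.q k l' l 0 t)
          + ∑ l', ∫ s in (0:ℝ)..t,
            D.lam k (t - s) * S k l' s * D.Gam S Fb I R k l' s * D.q k l' l s t
        ≤ D.lamStar * ∑ l', D.I0 k l' + D.lamStar * ∑ l', D.S0 k l' := add_le_add hA hB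
      _ = D.lamStar * ((∑ l', D.I0 k l') + ∑ l', D.S0 k l') := by ring
  -- sum everything up
  have htot : ∑ k, ∑ l, Fb k l t ≤ D.lamStar * (L:ℝ) := by
    calc ∑ k, ∑ l, Fb k l t
        ≤ ∑ k, ∑ _l : Fin L, D.lamStar * ((∑ l', D.I0 k l') + ∑ l', D.S0 k l') :=
          Finset.sum_le_sum fun k _ => Finset.sum_le_sum fun l _ => hFb k l
      _ = (L:ℝ) * (D.lamStar * ∑ k, ((∑ l', D.I0 k l') + ∑ l', D.S0 k l')) := by
          simp only [Finset.sum_const, Finset.card_univ, Fintype.card_fin, nsmul_eq_mul]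
          rw [← Finset.mul_sum, ← Finset.mul_sum]
      _ ≤ (L:ℝ) * (D.lamStar * 1) := by
          refine mul_le_mul_of_nonneg_left
            (mul_le_mul_of_nonneg_left ?_ D.lamStar_pos.le) (Nat.cast_nonneg L)
          calc ∑ k, ((∑ l', D.I0 k l') + ∑ l', D.S0 k l')
              ≤ ∑ k, ∑ l, (D.S0 k l + D.I0 k l + D.R0 k l) := by
                refine Finset.sum_le_sum fun k _ => ?_
                rw [← Finset.sum_add_distrib]
                refine Finset.sum_le_sum fun l _ => ?_
                linarith [D.R0_nonneg k l]
            _ ≤ 1 := D.B0_sum_le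
      _ = D.lamStar * (L:ℝ) := by ring
  have hexp : (1:ℝ) ≤ Real.exp (D.lamStar * D.betaStar * L * K * t) := by
    apply Real.one_le_exp
    exact mul_nonneg (mul_nonneg (mul_nonneg (mul_nonneg D.lamStar_pos.le
      D.betaStar_pos.le) (Nat.cast_nonneg L)) (Nat.cast_nonneg K)) ht
  have hKc : (1:ℝ) ≤ (K:ℝ) := by exact_mod_cast hK
  calc ∑ k, ∑ l, Fb k l t ≤ D.lamStar * (L:ℝ) := htot
    _ ≤ D.lamStar * (L:ℝ) * (K:ℝ) := le_mul_of_one_le_right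
        (mul_nonneg D.lamStar_pos.le (Nat.cast_nonneg L)) hKc
    _ ≤ D.lamStar * (L:ℝ) * (K:ℝ) * Real.exp (D.lamStar * D.betaStar * L * K * t) :=
        le_mul_of_one_le_right (mul_nonneg (mul_nonneg D.lamStar_pos.le
          (Nat.cast_nonneg L)) (Nat.cast_nonneg K)) hexp
end

section
/- For any solution of the multipatch–multigroup limit system and any T > 0, setting ν̄_k^ℓ := sup_{s∈[0,T]} max{ −ν_{S,k}^{ℓ,ℓ}(s), −ν_{I,k}^{ℓ,ℓ}(s), −ν_{R,k}^{ℓ,ℓ}(s) }, one has the lower bound B̄_k^ℓ(t) ≥ B̄_k^ℓ(0) e^{−ν̄_k^ℓ t} for all t ∈ [0,T] and all k, ℓ. In particular, for every k, ℓ and T > 0 there exists a constant C_{k,T}^ℓ > 0 such that B̄_k^ℓ(t) ≥ C_{k,T}^ℓ for all t ∈ [0,T]. -/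
open MeasureTheory intervalIntegral Set

lemma aux_intervalIntegrable {f : ℝ → ℝ} (hf : Measurable f) {t M : ℝ} (ht : 0 ≤ t)
    (hM : ∀ s ∈ Set.Ioc (0:ℝ) t, |f s| ≤ M) : IntervalIntegrable f volume 0 t := by
  rw [intervalIntegrable_iff_integrableOn_Ioc_of_le ht]
  refine Integrable.mono' (integrable_const M) hf.aestronglyMeasurable.restrict ?_
  exact (ae_restrict_iff' measurableSet_Ioc).2 (Filter.Eventually.of_forall fun s hs => by
    simpa using hM s hs)

lemma aux_exp_integral (c a b : ℝ) :
    ∫ s in a..b, c * Real.exp (c * s) = Real.exp (c * b) - Real.exp (c * a) := by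
  have h : ∀ x ∈ Set.uIcc a b, HasDerivAt (fun s => Real.exp (c * s)) (c * Real.exp (c * x)) x := by
    intro x _
    have h1 : HasDerivAt (fun s : ℝ => c * s) c x := by simpa using (hasDerivAt_id x).const_mul c
    simpa [mul_comm] using h1.exp
  exact integral_eq_sub_of_hasDerivAt h
    ((continuous_const.mul (Real.continuous_exp.comp (continuous_const.mul continuous_id))).intervalIntegrable a b)

lemma aux_triangle_swap {f : ℝ → ℝ} (hf : Measurable f) {t M : ℝ} (ht : 0 ≤ t)
    (hM : ∀ s ∈ Set.Ioc (0:ℝ) t, |f s| ≤ M) (c : ℝ) :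
    ∫ s in (0:ℝ)..t, c * Real.exp (c * s) * (∫ u in (0:ℝ)..s, f u)
      = Real.exp (c * t) * (∫ u in (0:ℝ)..t, f u) - ∫ u in (0:ℝ)..t, Real.exp (c * u) * f u := by
  set g : ℝ → ℝ → ℝ := fun s u => if u ≤ s then c * Real.exp (c * s) * f u else 0 with hgdef
  have hexp_le : ∀ s ∈ Set.Ioc (0:ℝ) t, Real.exp (c * s) ≤ Real.exp (|c| * t) := by
    intro s hs
    apply Real.exp_le_exp.2
    calc c * s ≤ |c| * s := mul_le_mul_of_nonneg_right (le_abs_self c) hs.1.le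
    _ ≤ |c| * t := mul_le_mul_of_nonneg_left hs.2 (abs_nonneg c)
  have hgm : Measurable (Function.uncurry g) := by
    apply Measurable.ite (measurableSet_le measurable_snd measurable_fst)
    · exact ((Real.measurable_exp.comp (measurable_fst.const_mul c)).const_mul c).mul
        (hf.comp measurable_snd)
    · exact measurable_const
  have hint : Integrable (Function.uncurry g)
      ((volume.restrict (Set.Ioc (0:ℝ) t)).prod (volume.restrict (Set.Ioc (0:ℝ) t))) := by
    refine Integrable.mono' (integrable_const (|c| * Real.exp (|c| * t) * max M 0))
      hgm.aestronglyMeasurable ?_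
    rw [Measure.prod_restrict, ae_restrict_iff' (measurableSet_Ioc.prod measurableSet_Ioc)]
    refine Filter.Eventually.of_forall ?_
    rintro ⟨s, u⟩ ⟨hs, hu⟩
    have hC : 0 ≤ |c| * Real.exp (|c| * t) * max M 0 := by positivity
    rw [Real.norm_eq_abs]
    show |if u ≤ s then c * Real.exp (c * s) * f u else 0| ≤ _
    by_cases h : u ≤ s
    · rw [if_pos h, abs_mul, abs_mul, abs_of_pos (Real.exp_pos _)]
      have h1 : |f u| ≤ max M 0 := le_trans (hM u hu) (le_max_left _ _)
      have h2 : Real.exp (c * s) ≤ Real.exp (|c| * t) := hexp_le s hs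
      gcongr
    · rw [if_neg h, abs_zero]; exact hC
  have key1 : ∀ s ∈ Set.Ioc (0:ℝ) t,
      c * Real.exp (c * s) * (∫ u in (0:ℝ)..s, f u) = ∫ u in Set.Ioc (0:ℝ) t, g s u := by
    intro s hs
    have h1 : ∫ u in Set.Ioc (0:ℝ) t, g s u
        = ∫ u in Set.Ioc (0:ℝ) t,
            (Set.Iic s).indicator (fun u => c * Real.exp (c * s) * f u) u := by
      refine setIntegral_congr_fun measurableSet_Ioc (fun u _ => ?_)
      by_cases h : u ≤ s <;> simp [hgdef, Set.indicator, h]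
    have h2 : Set.Ioc (0:ℝ) t ∩ Set.Iic s = Set.Ioc 0 s := by
      ext u
      simp only [Set.mem_inter_iff, Set.mem_Ioc, Set.mem_Iic]
      exact ⟨fun ⟨⟨h0, _⟩, hus⟩ => ⟨h0, hus⟩, fun ⟨h0, hus⟩ => ⟨⟨h0, hus.trans hs.2⟩, hus⟩⟩
    rw [h1, setIntegral_indicator measurableSet_Iic, h2,
      ← intervalIntegral.integral_of_le hs.1.le, intervalIntegral.integral_const_mul]
  have key3 : ∀ u ∈ Set.Ioc (0:ℝ) t,
      (∫ s in Set.Ioc (0:ℝ) t, g s u) = (Real.exp (c * t) - Real.exp (c * u)) * f u := by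
    intro u hu
    have h1 : ∫ s in Set.Ioc (0:ℝ) t, g s u
        = ∫ s in Set.Ioc (0:ℝ) t,
            (Set.Ici u).indicator (fun s => c * Real.exp (c * s) * f u) s := by
      refine setIntegral_congr_fun measurableSet_Ioc (fun s _ => ?_)
      by_cases h : u ≤ s <;> simp [hgdef, Set.indicator, Set.mem_Ici, h]
    have h2 : Set.Ioc (0:ℝ) t ∩ Set.Ici u = Set.Icc u t := by
      ext s
      simp only [Set.mem_inter_iff, Set.mem_Ioc, Set.mem_Icc, Set.mem_Ici]
      exact ⟨fun ⟨⟨_, hst⟩, hus⟩ => ⟨hus, hst⟩, fun ⟨hus, hst⟩ => ⟨⟨lt_of_lt_of_le hu.1 hus, hst⟩, hus⟩⟩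
    rw [h1, setIntegral_indicator measurableSet_Ici, h2, MeasureTheory.integral_Icc_eq_integral_Ioc,
      ← intervalIntegral.integral_of_le hu.2]
    rw [intervalIntegral.integral_mul_const, aux_exp_integral]
  have hmf : IntegrableOn f (Set.Ioc (0:ℝ) t) volume :=
    intervalIntegrable_iff_integrableOn_Ioc_of_le ht |>.1 (aux_intervalIntegrable hf ht hM)
  have hmef : IntegrableOn (fun u => Real.exp (c * u) * f u) (Set.Ioc (0:ℝ) t) volume := by
    refine intervalIntegrable_iff_integrableOn_Ioc_of_le ht |>.1
      (aux_intervalIntegrable (((measurable_id.const_mul c).exp).mul hf) ht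
        (M := Real.exp (|c| * t) * max M 0) fun s hs => ?_)
    show |Real.exp (c * s) * f s| ≤ _
    rw [abs_mul, abs_of_pos (Real.exp_pos _)]
    have h1 : |f s| ≤ max M 0 := le_trans (hM s hs) (le_max_left _ _)
    have h0 : (0:ℝ) ≤ max M 0 := le_max_right _ _
    exact mul_le_mul (hexp_le s hs) h1 (abs_nonneg _) (Real.exp_pos _).le
  calc ∫ s in (0:ℝ)..t, c * Real.exp (c * s) * (∫ u in (0:ℝ)..s, f u)
      = ∫ s in Set.Ioc (0:ℝ) t, c * Real.exp (c * s) * (∫ u in (0:ℝ)..s, f u) :=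
        intervalIntegral.integral_of_le ht
    _ = ∫ s in Set.Ioc (0:ℝ) t, ∫ u in Set.Ioc (0:ℝ) t, g s u :=
        setIntegral_congr_fun measurableSet_Ioc (fun s hs => key1 s hs)
    _ = ∫ u in Set.Ioc (0:ℝ) t, ∫ s in Set.Ioc (0:ℝ) t, g s u :=
        MeasureTheory.integral_integral_swap hint
    _ = ∫ u in Set.Ioc (0:ℝ) t, (Real.exp (c * t) - Real.exp (c * u)) * f u :=
        setIntegral_congr_fun measurableSet_Ioc (fun u hu => key3 u hu)
    _ = ∫ u in Set.Ioc (0:ℝ) t,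
          (Real.exp (c * t) * f u - Real.exp (c * u) * f u) := by
        congr 1; ext u; ring
    _ = Real.exp (c * t) * (∫ u in (0:ℝ)..t, f u) - ∫ u in (0:ℝ)..t, Real.exp (c * u) * f u := by
        rw [MeasureTheory.integral_sub (hmf.const_mul _) hmef,
          MeasureTheory.integral_const_mul, intervalIntegral.integral_of_le ht,
          intervalIntegral.integral_of_le ht]

lemma aux_gronwall_lower {φ : ℝ → ℝ} (hφ : Measurable φ) {T M c B0 : ℝ} (hT : 0 ≤ T)
    (hc : 0 ≤ c)
    (hM : ∀ s ∈ Set.Icc (0:ℝ) T, |φ s| ≤ M)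
    (hineq : ∀ s ∈ Set.Icc (0:ℝ) T, -(c * (B0 + ∫ u in (0:ℝ)..s, φ u)) ≤ φ s)
    {t : ℝ} (ht : t ∈ Set.Icc (0:ℝ) T) :
    B0 * Real.exp (-(c * t)) ≤ B0 + ∫ u in (0:ℝ)..t, φ u := by
  obtain ⟨ht0, htT⟩ := ht
  set y : ℝ → ℝ := fun s => ∫ u in (0:ℝ)..s, φ u with hy
  have hMIoc : ∀ s ∈ Set.Ioc (0:ℝ) t, |φ s| ≤ M := fun s hs => hM s ⟨hs.1.le, hs.2.trans htT⟩
  have hexp_le : ∀ s ∈ Set.Ioc (0:ℝ) t, Real.exp (c * s) ≤ Real.exp (c * t) := by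
    intro s hs
    exact Real.exp_le_exp.2 (mul_le_mul_of_nonneg_left hs.2 hc)
  have hi1 : IntervalIntegrable (fun s => Real.exp (c * s) * φ s) volume 0 t := by
    refine aux_intervalIntegrable ((measurable_id.const_mul c).exp.mul hφ) ht0
      (M := Real.exp (c * t) * max M 0) fun s hs => ?_
    show |Real.exp (c * s) * φ s| ≤ _
    rw [abs_mul, abs_of_pos (Real.exp_pos _)]
    exact mul_le_mul (hexp_le s hs) (le_trans (hMIoc s hs) (le_max_left _ _))
      (abs_nonneg _) (Real.exp_pos _).le
  have hi2 : IntervalIntegrable (fun s => c * Real.exp (c * s) * B0) volume 0 t :=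
    (((continuous_const.mul (Real.continuous_exp.comp
      (continuous_const.mul continuous_id))).mul continuous_const)).intervalIntegrable 0 t
  have hy_cont : ContinuousOn y (Set.uIcc 0 t) :=
    intervalIntegral.continuousOn_primitive_interval'
      (aux_intervalIntegrable hφ ht0 hMIoc) Set.left_mem_uIcc
  have hi3 : IntervalIntegrable (fun s => c * Real.exp (c * s) * y s) volume 0 t := by
    refine ContinuousOn.intervalIntegrable ?_
    exact ((continuous_const.mul (Real.continuous_exp.comp
      (continuous_const.mul continuous_id))).continuousOn).mul hy_cont
  have hswap := aux_triangle_swap hφ ht0 hMIoc c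
  have hexpI : ∫ s in (0:ℝ)..t, c * Real.exp (c * s) * B0 = (Real.exp (c * t) - 1) * B0 := by
    rw [intervalIntegral.integral_mul_const, aux_exp_integral]
    simp
  have key : B0 + (∫ s in (0:ℝ)..t, Real.exp (c * s) * (φ s + c * (B0 + y s)))
      = Real.exp (c * t) * (B0 + y t) := by
    have expand : Set.EqOn (fun s => Real.exp (c * s) * (φ s + c * (B0 + y s)))
        (fun s => Real.exp (c * s) * φ s + (c * Real.exp (c * s) * B0
          + c * Real.exp (c * s) * y s)) (Set.uIcc 0 t) := fun s _ => by ring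
    rw [intervalIntegral.integral_congr expand,
      intervalIntegral.integral_add hi1 (hi2.add hi3),
      intervalIntegral.integral_add hi2 hi3, hswap, hexpI]
    ring
  have hnn : 0 ≤ ∫ s in (0:ℝ)..t, Real.exp (c * s) * (φ s + c * (B0 + y s)) := by
    apply intervalIntegral.integral_nonneg ht0
    intro u hu
    have h := hineq u ⟨hu.1, hu.2.trans htT⟩
    have h2 : 0 ≤ φ u + c * (B0 + y u) := by
      have : -(c * (B0 + y u)) ≤ φ u := h
      linarith
    exact mul_nonneg (Real.exp_pos _).le h2
  have hfinal : B0 ≤ Real.exp (c * t) * (B0 + y t) := by linarith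
  calc B0 * Real.exp (-(c * t))
      ≤ (Real.exp (c * t) * (B0 + y t)) * Real.exp (-(c * t)) :=
        mul_le_mul_of_nonneg_right hfinal (Real.exp_pos _).le
    _ = (B0 + y t) * (Real.exp (c * t) * Real.exp (-(c * t))) := by ring
    _ = B0 + y t := by rw [← Real.exp_add, add_neg_cancel, Real.exp_zero, mul_one]

lemma aux_II {ν X : ℝ → ℝ} (hν : Measurable ν) (hX : Measurable X) {T t Cν CX : ℝ}
    (ht0 : 0 ≤ t) (htT : t ≤ T)
    (hν' : ∀ s ∈ Set.Icc (0:ℝ) T, |ν s| ≤ Cν)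
    (hX' : ∀ s ∈ Set.Icc (0:ℝ) T, 0 ≤ X s ∧ X s ≤ CX) :
    IntervalIntegrable (fun s => ν s * X s) volume 0 t :=
  aux_intervalIntegrable (hν.mul hX) ht0 (M := Cν * CX) fun s hs => by
    have h1 := hν' s ⟨hs.1.le, hs.2.trans htT⟩
    have h2 := hX' s ⟨hs.1.le, hs.2.trans htT⟩
    show |ν s * X s| ≤ _
    rw [abs_mul, abs_of_nonneg h2.1]
    exact mul_le_mul h1 h2.2 h2.1 ((abs_nonneg _).trans h1)

/-- Lower bound on the group-patch total: with
`ν̄_k^ℓ = sup_{s∈[0,T]} max{−ν_{S,k}^{ℓ,ℓ}(s), −ν_{I,k}^{ℓ,ℓ}(s), −ν_{R,k}^{ℓ,ℓ}(s)}`,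
one has `B̄_k^ℓ(t) ≥ B̄_k^ℓ(0) e^{−ν̄_k^ℓ t}` on `[0,T]`; in particular
`B̄_k^ℓ` is bounded below by a positive constant on `[0,T]`. -/
theorem mpmg_B_lower_bound
    (K L : ℕ) (hK : 1 ≤ K) (hL : 1 ≤ L) (D : MPMGData K L)
    (S Fb I R : Fin K → Fin L → ℝ → ℝ) (hsol : IsMPMGSol D S Fb I R) :
    ∀ T : ℝ, 0 < T → ∀ k l,
      (∀ t ∈ Set.Icc (0:ℝ) T,
        (D.S0 k l + D.I0 k l + D.R0 k l) *
            Real.exp (-(sSup ((fun s : ℝ =>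
                max (-(D.nuS k l l s)) (max (-(D.nuI k l l s)) (-(D.nuR k l l s))))
              '' Set.Icc (0:ℝ) T)) * t)
          ≤ S k l t + I k l t + R k l t) ∧
      (∃ C : ℝ, 0 < C ∧ ∀ t ∈ Set.Icc (0:ℝ) T, C ≤ S k l t + I k l t + R k l t) := by
  intro T hT k l
  set f0 : ℝ → ℝ := fun s =>
    max (-(D.nuS k l l s)) (max (-(D.nuI k l l s)) (-(D.nuR k l l s))) with hf0
  set c : ℝ := sSup (f0 '' Set.Icc (0:ℝ) T) with hcdef
  set B0 : ℝ := D.S0 k l + D.I0 k l + D.R0 k l with hB0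
  -- boundedness data
  obtain ⟨CS, hCS⟩ := D.nuS_bdd k l l T
  obtain ⟨CI, hCI⟩ := D.nuI_bdd k l l T
  obtain ⟨CR, hCR⟩ := D.nuR_bdd k l l T
  have hbdd : BddAbove (f0 '' Set.Icc (0:ℝ) T) := by
    refine ⟨max CS (max CI CR), ?_⟩
    rintro _ ⟨s, hs, rfl⟩
    exact max_le_max ((neg_le_abs _).trans (hCS s hs))
      (max_le_max ((neg_le_abs _).trans (hCI s hs)) ((neg_le_abs _).trans (hCR s hs)))
  have h0mem : (0:ℝ) ∈ Set.Icc (0:ℝ) T := ⟨le_refl 0, hT.le⟩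
  have hc0 : 0 ≤ c := by
    have h1 : 0 ≤ -(D.nuS k l l 0) := by
      rw [D.nuS_diag k l 0 le_rfl, neg_neg]
      exact Finset.sum_nonneg fun l' hl' =>
        D.nuS_nonneg k l l' 0 le_rfl (Finset.mem_filter.1 hl').2
    have h2 : 0 ≤ f0 0 := le_trans h1 (le_max_left _ _)
    exact le_trans h2 (le_csSup hbdd ⟨0, h0mem, rfl⟩)
  have hnuSc : ∀ s ∈ Set.Icc (0:ℝ) T, -c ≤ D.nuS k l l s := fun s hs => by
    have := le_csSup hbdd ⟨s, hs, rfl⟩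
    have h1 : -(D.nuS k l l s) ≤ f0 s := le_max_left _ _
    linarith
  have hnuIc : ∀ s ∈ Set.Icc (0:ℝ) T, -c ≤ D.nuI k l l s := fun s hs => by
    have := le_csSup hbdd ⟨s, hs, rfl⟩
    have h1 : -(D.nuI k l l s) ≤ f0 s := le_trans (le_max_left _ _) (le_max_right _ _)
    linarith
  have hnuRc : ∀ s ∈ Set.Icc (0:ℝ) T, -c ≤ D.nuR k l l s := fun s hs => by
    have := le_csSup hbdd ⟨s, hs, rfl⟩
    have h1 : -(D.nuR k l l s) ≤ f0 s := le_trans (le_max_right _ _) (le_max_right _ _)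
    linarith
  -- the integrand
  set φ : ℝ → ℝ := fun s => ∑ l', (D.nuS k l' l s * S k l' s
    + D.nuI k l' l s * I k l' s + D.nuR k l' l s * R k l' s) with hφdef
  have hφm : Measurable φ := by
    apply Finset.measurable_sum
    intro l' _
    exact (((D.nuS_meas k l' l).mul (hsol.S_meas k l')).add
      ((D.nuI_meas k l' l).mul (hsol.I_meas k l'))).add
      ((D.nuR_meas k l' l).mul (hsol.R_meas k l'))
  -- bounds
  obtain ⟨C, hC⟩ := hsol.locBdd T
  choose CSf hCSf using fun l' => D.nuS_bdd k l' l T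
  choose CIf hCIf using fun l' => D.nuI_bdd k l' l T
  choose CRf hCRf using fun l' => D.nuR_bdd k l' l T
  have hSb : ∀ l', ∀ s ∈ Set.Icc (0:ℝ) T, 0 ≤ S k l' s ∧ S k l' s ≤ C :=
    fun l' s hs => ⟨hsol.S_nonneg k l' s hs.1, (hC k l' s hs).1⟩
  have hIb : ∀ l', ∀ s ∈ Set.Icc (0:ℝ) T, 0 ≤ I k l' s ∧ I k l' s ≤ C :=
    fun l' s hs => ⟨hsol.I_nonneg k l' s hs.1, (hC k l' s hs).2.2.1⟩
  have hRb : ∀ l', ∀ s ∈ Set.Icc (0:ℝ) T, 0 ≤ R k l' s ∧ R k l' s ≤ C :=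
    fun l' s hs => ⟨hsol.R_nonneg k l' s hs.1, (hC k l' s hs).2.2.2⟩
  set M : ℝ := ∑ l' : Fin L, (CSf l' * C + CIf l' * C + CRf l' * C) with hMdef
  have hM : ∀ s ∈ Set.Icc (0:ℝ) T, |φ s| ≤ M := by
    intro s hs
    refine le_trans (Finset.abs_sum_le_sum_abs _ _) (Finset.sum_le_sum fun l' _ => ?_)
    have e1 : |D.nuS k l' l s * S k l' s| ≤ CSf l' * C := by
      rw [abs_mul, abs_of_nonneg (hSb l' s hs).1]
      exact mul_le_mul (hCSf l' s hs) (hSb l' s hs).2 (hSb l' s hs).1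
        ((abs_nonneg _).trans (hCSf l' s hs))
    have e2 : |D.nuI k l' l s * I k l' s| ≤ CIf l' * C := by
      rw [abs_mul, abs_of_nonneg (hIb l' s hs).1]
      exact mul_le_mul (hCIf l' s hs) (hIb l' s hs).2 (hIb l' s hs).1
        ((abs_nonneg _).trans (hCIf l' s hs))
    have e3 : |D.nuR k l' l s * R k l' s| ≤ CRf l' * C := by
      rw [abs_mul, abs_of_nonneg (hRb l' s hs).1]
      exact mul_le_mul (hCRf l' s hs) (hRb l' s hs).2 (hRb l' s hs).1
        ((abs_nonneg _).trans (hCRf l' s hs))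
    have habc := abs_add_le (D.nuS k l' l s * S k l' s + D.nuI k l' l s * I k l' s)
      (D.nuR k l' l s * R k l' s)
    have hab := abs_add_le (D.nuS k l' l s * S k l' s) (D.nuI k l' l s * I k l' s)
    linarith
  -- the balance equation
  have hB : ∀ t ∈ Set.Icc (0:ℝ) T,
      S k l t + I k l t + R k l t = B0 + ∫ s in (0:ℝ)..t, φ s := by
    intro t ht
    have hiS : ∀ l' : Fin L, IntervalIntegrable (fun s => D.nuS k l' l s * S k l' s) volume 0 t :=
      fun l' => aux_II (D.nuS_meas k l' l) (hsol.S_meas k l') ht.1 ht.2 (hCSf l') (hSb l')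
    have hiI : ∀ l' : Fin L, IntervalIntegrable (fun s => D.nuI k l' l s * I k l' s) volume 0 t :=
      fun l' => aux_II (D.nuI_meas k l' l) (hsol.I_meas k l') ht.1 ht.2 (hCIf l') (hIb l')
    have hiR : ∀ l' : Fin L, IntervalIntegrable (fun s => D.nuR k l' l s * R k l' s) volume 0 t :=
      fun l' => aux_II (D.nuR_meas k l' l) (hsol.R_meas k l') ht.1 ht.2 (hCRf l') (hRb l')
    have merge : (∑ l', ∫ s in (0:ℝ)..t, D.nuS k l' l s * S k l' s)
        + (∑ l', ∫ s in (0:ℝ)..t, D.nuI k l' l s * I k l' s)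
        + (∑ l', ∫ s in (0:ℝ)..t, D.nuR k l' l s * R k l' s)
        = ∫ s in (0:ℝ)..t, φ s := by
      have h1 : ∀ l' : Fin L, (∫ s in (0:ℝ)..t, D.nuS k l' l s * S k l' s)
          + (∫ s in (0:ℝ)..t, D.nuI k l' l s * I k l' s)
          + (∫ s in (0:ℝ)..t, D.nuR k l' l s * R k l' s)
          = ∫ s in (0:ℝ)..t, (D.nuS k l' l s * S k l' s + D.nuI k l' l s * I k l' s
              + D.nuR k l' l s * R k l' s) := fun l' => by
        rw [intervalIntegral.integral_add ((hiS l').add (hiI l')) (hiR l'),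
          intervalIntegral.integral_add (hiS l') (hiI l')]
      rw [← Finset.sum_add_distrib, ← Finset.sum_add_distrib]
      rw [Finset.sum_congr rfl fun l' _ => h1 l']
      exact (intervalIntegral.integral_finset_sum fun l' _ =>
        ((hiS l').add (hiI l')).add (hiR l')).symm
    have e1 := hsol.eqS k l t ht.1
    have e2 := hsol.eqI k l t ht.1
    have e3 := hsol.eqR k l t ht.1
    rw [hB0, ← merge]
    linarith
  -- pointwise inequality
  have hineq : ∀ s ∈ Set.Icc (0:ℝ) T, -(c * (B0 + ∫ u in (0:ℝ)..s, φ u)) ≤ φ s := by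
    intro s hs
    rw [← hB s hs]
    have hsplit : φ s = (∑ l' ∈ Finset.univ.erase l, (D.nuS k l' l s * S k l' s
        + D.nuI k l' l s * I k l' s + D.nuR k l' l s * R k l' s))
        + (D.nuS k l l s * S k l s + D.nuI k l l s * I k l s + D.nuR k l l s * R k l s) :=
      (Finset.sum_erase_add _ _ (Finset.mem_univ l)).symm
    have hpos : 0 ≤ ∑ l' ∈ Finset.univ.erase l, (D.nuS k l' l s * S k l' s
        + D.nuI k l' l s * I k l' s + D.nuR k l' l s * R k l' s) := by
      refine Finset.sum_nonneg fun l' hl' => ?_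
      have hne : l' ≠ l := Finset.ne_of_mem_erase hl'
      have t1 := mul_nonneg (D.nuS_nonneg k l' l s hs.1 hne.symm) (hSb l' s hs).1
      have t2 := mul_nonneg (D.nuI_nonneg k l' l s hs.1 hne.symm) (hIb l' s hs).1
      have t3 := mul_nonneg (D.nuR_nonneg k l' l s hs.1 hne.symm) (hRb l' s hs).1
      linarith
    have d1 : -c * S k l s ≤ D.nuS k l l s * S k l s :=
      mul_le_mul_of_nonneg_right (hnuSc s hs) (hSb l s hs).1
    have d2 : -c * I k l s ≤ D.nuI k l l s * I k l s :=
      mul_le_mul_of_nonneg_right (hnuIc s hs) (hIb l s hs).1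
    have d3 : -c * R k l s ≤ D.nuR k l l s * R k l s :=
      mul_le_mul_of_nonneg_right (hnuRc s hs) (hRb l s hs).1
    rw [hsplit]
    linarith
  have main : ∀ t ∈ Set.Icc (0:ℝ) T, B0 * Real.exp (-(c * t)) ≤ S k l t + I k l t + R k l t := by
    intro t ht
    rw [hB t ht]
    exact aux_gronwall_lower hφm hT.le hc0 hM hineq ht
  have hB0pos : 0 < B0 := D.B0_pos k l
  constructor
  · intro t ht
    rw [neg_mul]
    exact main t ht
  · refine ⟨B0 * Real.exp (-(c * T)), by positivity, fun t ht => ?_⟩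
    refine le_trans ?_ (main t ht)
    have : -(c * T) ≤ -(c * t) := by
      have := mul_le_mul_of_nonneg_left ht.2 hc0
      linarith
    exact mul_le_mul_of_nonneg_left (Real.exp_le_exp.2 this) hB0pos.le
end

section
/- For any solution of the multipatch–multigroup limit system and any T > 0, there exists a constant C_T > 0 such that Γ̄_k^ℓ(t) ≤ C_T for all t ∈ [0,T] and all k ∈ {1,…,K}, ℓ ∈ {1,…,L}. -/
open MeasureTheory

private lemma mpmg_cont_prim {f : ℝ → ℝ} {T C : ℝ} (hT : 0 ≤ T) (hf : Measurable f)
    (hC : ∀ s ∈ Set.Icc (0:ℝ) T, |f s| ≤ C) :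
    ContinuousOn (fun t => ∫ s in (0:ℝ)..t, f s) (Set.Icc 0 T) := by
  have hint : IntegrableOn f (Set.Icc (0:ℝ) T) := by
    apply Measure.integrableOn_of_bounded (M := C) measure_Icc_lt_top.ne
      hf.aestronglyMeasurable
    exact (ae_restrict_iff' measurableSet_Icc).2 (ae_of_all _ (fun s hs => hC s hs))
  have := intervalIntegral.continuousOn_primitive_interval
    (a := (0:ℝ)) (b := T) (μ := volume) (f := f) (by rwa [Set.uIcc_of_le hT])
  rwa [Set.uIcc_of_le hT] at this

/-- For every `T > 0` there exists a constant `C_T > 0` bounding the force of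
infection: `Γ̄_k^ℓ(t) ≤ C_T` for all `t ∈ [0,T]` and all `k, ℓ`. -/
theorem mpmg_Gamma_bounded
    (K L : ℕ) (hK : 1 ≤ K) (hL : 1 ≤ L) (D : MPMGData K L)
    (S Fb I R : Fin K → Fin L → ℝ → ℝ) (hsol : IsMPMGSol D S Fb I R) :
    ∀ T : ℝ, 0 < T → ∃ C : ℝ, 0 < C ∧
      ∀ t ∈ Set.Icc (0:ℝ) T, ∀ k l, D.Gam S Fb I R k l t ≤ C := by
  intro T hT
  obtain ⟨C0, hC0⟩ := hsol.locBdd T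
  have hT0 : (0:ℝ) ∈ Set.Icc (0:ℝ) T := ⟨le_rfl, hT.le⟩
  have hC0nn : 0 ≤ C0 := le_trans (hsol.Fb_nonneg ⟨0, hK⟩ ⟨0, hL⟩ 0 le_rfl)
    ((hC0 ⟨0, hK⟩ ⟨0, hL⟩ 0 hT0).2.1)
  -- per (k,l) bound
  have key : ∀ k l, ∃ c : ℝ, 0 < c ∧
      ∀ t ∈ Set.Icc (0:ℝ) T, D.Gam S Fb I R k l t ≤ c := by
    intro k l
    -- continuity of B = S + I + R on [0,T]
    have hBeq : ∀ t ∈ Set.Icc (0:ℝ) T,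
        S k l t + I k l t + R k l t =
          (D.S0 k l + D.I0 k l + D.R0 k l) +
            ((∑ l', ∫ s in (0:ℝ)..t, D.nuS k l' l s * S k l' s) +
             (∑ l', ∫ s in (0:ℝ)..t, D.nuI k l' l s * I k l' s) +
             (∑ l', ∫ s in (0:ℝ)..t, D.nuR k l' l s * R k l' s)) := by
      intro t ht
      rw [hsol.eqS k l t ht.1, hsol.eqI k l t ht.1, hsol.eqR k l t ht.1]
      ring
    have hprim : ∀ (nu : Fin L → ℝ → ℝ) (X : Fin L → ℝ → ℝ),
        (∀ l', Measurable (nu l')) →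
        (∀ l' (T' : ℝ), ∃ C : ℝ, ∀ t ∈ Set.Icc (0:ℝ) T', |nu l' t| ≤ C) →
        (∀ l', Measurable (X l')) →
        (∀ l' (t : ℝ), 0 ≤ t → 0 ≤ X l' t) →
        (∀ l', ∀ t ∈ Set.Icc (0:ℝ) T, X l' t ≤ C0) →
        ContinuousOn (fun t => ∑ l', ∫ s in (0:ℝ)..t, nu l' s * X l' s)
          (Set.Icc 0 T) := by
      intro nu X hnum hnub hXm hXnn hXb
      apply continuousOn_finset_sum Finset.univ
      intro l' _
      obtain ⟨Cn, hCn⟩ := hnub l' T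
      apply mpmg_cont_prim hT.le ((hnum l').mul (hXm l'))
      intro s hs
      rw [Pi.mul_apply, abs_mul]
      have h1 : |X l' s| ≤ C0 := by
        rw [abs_of_nonneg (hXnn l' s hs.1)]; exact hXb l' s hs
      have h2 : (0:ℝ) ≤ Cn := le_trans (abs_nonneg _) (hCn s hs)
      calc |nu l' s| * |X l' s| ≤ Cn * C0 :=
            mul_le_mul (hCn s hs) h1 (abs_nonneg _) h2
        _ ≤ Cn * C0 := le_rfl
    have hScont := hprim (fun l' => D.nuS k l' l) (fun l' => S k l')
      (fun l' => D.nuS_meas k l' l) (fun l' => D.nuS_bdd k l' l)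
      (fun l' => hsol.S_meas k l') (fun l' => hsol.S_nonneg k l')
      (fun l' t ht => (hC0 k l' t ht).1)
    have hIcont := hprim (fun l' => D.nuI k l' l) (fun l' => I k l')
      (fun l' => D.nuI_meas k l' l) (fun l' => D.nuI_bdd k l' l)
      (fun l' => hsol.I_meas k l') (fun l' => hsol.I_nonneg k l')
      (fun l' t ht => (hC0 k l' t ht).2.2.1)
    have hRcont := hprim (fun l' => D.nuR k l' l) (fun l' => R k l')
      (fun l' => D.nuR_meas k l' l) (fun l' => D.nuR_bdd k l' l)
      (fun l' => hsol.R_meas k l') (fun l' => hsol.R_nonneg k l')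
      (fun l' t ht => (hC0 k l' t ht).2.2.2)
    have hBcont : ContinuousOn (fun t => S k l t + I k l t + R k l t)
        (Set.Icc (0:ℝ) T) := by
      apply ContinuousOn.congr
        (continuousOn_const.add ((hScont.add hIcont).add hRcont))
      intro t ht
      simpa using hBeq t ht
    obtain ⟨t0, ht0, hmin⟩ := isCompact_Icc.exists_isMinOn ⟨0, hT0⟩ hBcont
    set ε : ℝ := S k l t0 + I k l t0 + R k l t0 with hεdef
    have hε : 0 < ε := hsol.B_pos k l t0 ht0.1
    set M : ℝ := (K : ℝ) * (L : ℝ) * D.betaStar * C0 with hMdef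
    have hMnn : 0 ≤ M := mul_nonneg (mul_nonneg (mul_nonneg (Nat.cast_nonneg K)
        (Nat.cast_nonneg L)) D.betaStar_pos.le) hC0nn
    refine ⟨ε ^ (-D.gam) * M + 1, ?_, ?_⟩
    · have := Real.rpow_pos_of_pos hε (-D.gam)
      nlinarith
    · intro t htt
      have hBt : ε ≤ S k l t + I k l t + R k l t := hmin htt
      have hBpos : 0 < S k l t + I k l t + R k l t := hsol.B_pos k l t htt.1
      have h1 : (S k l t + I k l t + R k l t) ^ (-D.gam) ≤ ε ^ (-D.gam) := by
        rw [Real.rpow_neg hε.le, Real.rpow_neg hBpos.le]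
        apply inv_anti₀ (Real.rpow_pos_of_pos hε D.gam)
        exact Real.rpow_le_rpow hε.le hBt D.gam_nonneg
      have h2 : ∑ k', ∑ l', D.beta k k' l l' t * Fb k' l' t ≤ M := by
        have : ∀ k' : Fin K, ∑ l', D.beta k k' l l' t * Fb k' l' t ≤
            (L : ℝ) * (D.betaStar * C0) := by
          intro k'
          calc ∑ l', D.beta k k' l l' t * Fb k' l' t
              ≤ ∑ _l' : Fin L, D.betaStar * C0 := by
                apply Finset.sum_le_sum
                intro l' _
                exact mul_le_mul (D.beta_mem k k' l l' t htt.1).2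
                  ((hC0 k' l' t htt).2.1) (hsol.Fb_nonneg k' l' t htt.1)
                  D.betaStar_pos.le
            _ = (L : ℝ) * (D.betaStar * C0) := by
                simp [Finset.sum_const, mul_comm]
        calc ∑ k', ∑ l', D.beta k k' l l' t * Fb k' l' t
            ≤ ∑ _k' : Fin K, (L : ℝ) * (D.betaStar * C0) :=
              Finset.sum_le_sum (fun k' _ => this k')
          _ = M := by simp [Finset.sum_const, hMdef]; ring
      have h2nn : 0 ≤ ∑ k', ∑ l', D.beta k k' l l' t * Fb k' l' t := by
        apply Finset.sum_nonneg; intro k' _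
        apply Finset.sum_nonneg; intro l' _
        exact mul_nonneg (D.beta_mem k k' l l' t htt.1).1
          (hsol.Fb_nonneg k' l' t htt.1)
      have : D.Gam S Fb I R k l t ≤ ε ^ (-D.gam) * M :=
        mul_le_mul h1 h2 h2nn (Real.rpow_pos_of_pos hε (-D.gam)).le
      linarith
  choose c hcpos hc using key
  refine ⟨∑ k, ∑ l, c k l, ?_, ?_⟩
  · apply Finset.sum_pos
    · intro k _
      exact Finset.sum_pos (fun l _ => hcpos k l)
        (Finset.univ_nonempty_iff.2 ⟨⟨0, hL⟩⟩)
    · exact Finset.univ_nonempty_iff.2 ⟨⟨0, hK⟩⟩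
  · intro t ht k l
    have hle : c k l ≤ ∑ k, ∑ l, c k l := by
      calc c k l ≤ ∑ l', c k l' :=
            Finset.single_le_sum (fun l' _ => (hcpos k l').le) (Finset.mem_univ l)
        _ ≤ ∑ k', ∑ l', c k' l' :=
            Finset.single_le_sum
              (fun k' _ => Finset.sum_nonneg (fun l' _ => (hcpos k' l').le))
              (Finset.mem_univ k)
    exact le_trans (hc k l t ht) hle
end

section
/- Let T > 0, let ν : [0,T] → ℝ be Borel measurable and bounded, let z : [0,T] → [0,∞) be Borel measurable and integrable, let ξ : [0,T] → ℝ be Borel measurable and bounded with ξ(0) = 0, and let b : [0,T] → ℝ be Borel measurable, bounded, and satisfy b(t) = b(0) + ∫₀ᵗ ν(s) b(s) ds + ∫₀ᵗ z(s) ds + ξ(t) for all t ∈ [0,T]. Then for all t ∈ [0,T]: b(t) ≥ b(0) exp(∫₀ᵗ ν(s) ds) + ξ(t) + ∫₀ᵗ ν(s) exp(∫ₛᵗ ν(r) dr) ξ(s) ds. -/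
open MeasureTheory

/-- bounded measurable is integrable on Ioc -/
lemma dlb_intOn {f : ℝ → ℝ} (hf : Measurable f) {a b C : ℝ}
    (hC : ∀ s ∈ Set.Ioc a b, |f s| ≤ C) : IntegrableOn f (Set.Ioc a b) volume := by
  apply Measure.integrableOn_of_bounded (M := C) measure_Ioc_lt_top.ne
    hf.aestronglyMeasurable
  exact (ae_restrict_iff' measurableSet_Ioc).2 (ae_of_all _ (by simpa [Real.norm_eq_abs] using hC))

/-- continuity of the Ioc-primitive -/
lemma dlb_cont {f : ℝ → ℝ} (hf : ∀ a b : ℝ, IntervalIntegrable f volume a b) :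
    Continuous fun s => ∫ u in Set.Ioc (0:ℝ) s, f u := by
  have heq : (fun s => ∫ u in Set.Ioc (0:ℝ) s, f u)
      = fun s => ∫ u in (0:ℝ)..(max s 0), f u := by
    funext s
    rcases le_or_gt 0 s with hs | hs
    · rw [max_eq_left hs, intervalIntegral.integral_of_le hs]
    · rw [max_eq_right hs.le, intervalIntegral.integral_same, Set.Ioc_eq_empty (by linarith),
        Measure.restrict_empty, integral_zero_measure]
  rw [heq]
  exact (intervalIntegral.continuous_primitive hf 0).comp (continuous_id.max continuous_const)

/-- Fubini on the triangle. -/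
lemma dlb_swap {g h : ℝ → ℝ} (hgm : Measurable g) (hhm : Measurable h)
    {t Cg : ℝ} (ht : 0 ≤ t)
    (hgb : ∀ s ∈ Set.Ioc (0:ℝ) t, |g s| ≤ Cg)
    (hh : IntegrableOn h (Set.Ioc (0:ℝ) t) volume) :
    ∫ s in Set.Ioc (0:ℝ) t, g s * (∫ u in Set.Ioc (0:ℝ) s, h u)
      = ∫ u in Set.Ioc (0:ℝ) t, h u * (∫ s in Set.Ioc u t, g s) := by
  set A := Set.Ioc (0:ℝ) t with hA
  set f : ℝ → ℝ → ℝ := fun s u => if u ≤ s then g s * h u else 0 with hf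
  have hgint : IntegrableOn g A volume := dlb_intOn hgm hgb
  have hfint : Integrable (Function.uncurry f)
      ((volume.restrict A).prod (volume.restrict A)) := by
    have hmes : Measurable (Function.uncurry f) := by
      apply Measurable.ite (measurableSet_le measurable_snd measurable_fst)
      · exact (hgm.comp measurable_fst).mul (hhm.comp measurable_snd)
      · exact measurable_const
    apply Integrable.mono' (Integrable.mul_prod hgint.norm hh.norm)
      hmes.aestronglyMeasurable
    refine ae_of_all _ fun p => ?_
    simp only [Function.uncurry, hf, Real.norm_eq_abs]
    split
    · rw [abs_mul]
    · simpa using mul_nonneg (abs_nonneg (g _)) (abs_nonneg (h _))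
  have hL : ∀ s ∈ A, g s * (∫ u in Set.Ioc (0:ℝ) s, h u) = ∫ u in A, f s u := by
    intro s hs
    have h1 : ∀ u ∈ A, f s u = (Set.Ioc (0:ℝ) s).indicator (fun u => g s * h u) u := by
      intro u hu
      by_cases hus : u ≤ s
      · rw [Set.indicator_of_mem (Set.mem_Ioc.2 ⟨hu.1, hus⟩)]; simp [hf, hus]
      · rw [Set.indicator_of_notMem (fun hc => hus (Set.mem_Ioc.1 hc).2)]; simp [hf, hus]
    rw [setIntegral_congr_fun measurableSet_Ioc h1, setIntegral_indicator measurableSet_Ioc,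
      Set.inter_eq_self_of_subset_right (Set.Ioc_subset_Ioc_right hs.2),
      integral_const_mul]
  have hR : ∀ u ∈ A, (∫ s in A, f s u) = h u * (∫ s in Set.Ioc u t, g s) := by
    intro u hu
    have h1 : ∀ s ∈ A, f s u = (Set.Ici u).indicator (fun s => g s * h u) s := by
      intro s _
      by_cases hus : u ≤ s
      · rw [Set.indicator_of_mem (Set.mem_Ici.2 hus)]; simp [hf, hus]
      · rw [Set.indicator_of_notMem (fun hc => hus (Set.mem_Ici.1 hc))]; simp [hf, hus]
    rw [setIntegral_congr_fun measurableSet_Ioc h1, setIntegral_indicator measurableSet_Ici]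
    have h2 : A ∩ Set.Ici u = Set.Icc u t := by
      ext s; constructor
      · rintro ⟨hs1, hs2⟩; exact ⟨hs2, hs1.2⟩
      · rintro ⟨hs1, hs2⟩; exact ⟨⟨lt_of_lt_of_le hu.1 hs1, hs2⟩, hs1⟩
    rw [h2, integral_Icc_eq_integral_Ioc, integral_mul_const, mul_comm]
  calc ∫ s in A, g s * (∫ u in Set.Ioc (0:ℝ) s, h u)
      = ∫ s in A, ∫ u in A, f s u := setIntegral_congr_fun measurableSet_Ioc hL
    _ = ∫ u in A, ∫ s in A, f s u := integral_integral_swap hfint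
    _ = ∫ u in A, h u * (∫ s in Set.Ioc u t, g s) :=
        setIntegral_congr_fun measurableSet_Ioc hR

/-- splitting an Ioc integral -/
lemma dlb_split {f : ℝ → ℝ} {u t : ℝ} (hu : 0 ≤ u) (hut : u ≤ t)
    (hf : IntegrableOn f (Set.Ioc 0 t) volume) :
    ∫ s in Set.Ioc (0:ℝ) t, f s
      = (∫ s in Set.Ioc (0:ℝ) u, f s) + ∫ s in Set.Ioc u t, f s := by
  rw [← Set.Ioc_union_Ioc_eq_Ioc hu hut]
  exact setIntegral_union (Set.Ioc_disjoint_Ioc_of_le le_rfl) measurableSet_Ioc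
    (hf.mono_set (Set.Ioc_subset_Ioc_right hut))
    (hf.mono_set (Set.Ioc_subset_Ioc_left hu))

section
variable {ν : ℝ → ℝ} {C : ℝ}

/-- global bound on primitive -/
lemma dlb_Fbound (hm : Measurable ν) (hC : ∀ s, |ν s| ≤ C) {s : ℝ} (hs : 0 ≤ s) :
    |∫ u in Set.Ioc (0:ℝ) s, ν u| ≤ C * s := by
  have := norm_setIntegral_le_of_norm_le_const (μ := volume) (s := Set.Ioc (0:ℝ) s)
    (f := ν) (C := C) measure_Ioc_lt_top (fun x _ => by simpa [Real.norm_eq_abs] using hC x)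
  simpa [Real.norm_eq_abs, Real.volume_real_Ioc_of_le hs] using this

lemma dlb_measF (hm : Measurable ν) (hC : ∀ s, |ν s| ≤ C) :
    Continuous fun s => ∫ u in Set.Ioc (0:ℝ) s, ν u := by
  apply dlb_cont
  intro a b
  constructor <;> exact dlb_intOn hm (fun s _ => hC s)

lemma dlb_pow (hm : Measurable ν) (hC : ∀ s, |ν s| ≤ C) :
    ∀ (n : ℕ) (t : ℝ), 0 ≤ t →
      ∫ s in Set.Ioc (0:ℝ) t, ν s * (∫ u in Set.Ioc (0:ℝ) s, ν u) ^ n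
        = (∫ s in Set.Ioc (0:ℝ) t, ν s) ^ (n + 1) / (n + 1) := by
  have hC0 : 0 ≤ C := le_trans (abs_nonneg _) (hC 0)
  set F : ℝ → ℝ := fun s => ∫ u in Set.Ioc (0:ℝ) s, ν u with hF
  have hFc : Continuous F := dlb_measF hm hC
  intro n
  induction n with
  | zero => intro t _; simp
  | succ n IH =>
    intro t ht
    have hgb : ∀ m : ℕ, ∀ s ∈ Set.Ioc (0:ℝ) t, |ν s * F s ^ m| ≤ C * (C * t) ^ m := by
      intro m s hs
      rw [abs_mul, abs_pow]
      apply mul_le_mul (hC s) (pow_le_pow_left₀ (abs_nonneg _) ?_ m)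
        (pow_nonneg (abs_nonneg _) m) hC0
      exact le_trans (dlb_Fbound hm hC hs.1.le)
        (mul_le_mul_of_nonneg_left hs.2 hC0)
    have hgm : ∀ m : ℕ, Measurable fun s => ν s * F s ^ m :=
      fun m => hm.mul (hFc.measurable.pow_const m)
    have key : ∫ s in Set.Ioc (0:ℝ) t, ν s * F s ^ (n + 1)
        = ∫ u in Set.Ioc (0:ℝ) t, ν u * (F t ^ (n+1) / (n+1) - F u ^ (n+1) / (n+1)) := by
      have h1 : ∫ s in Set.Ioc (0:ℝ) t, ν s * F s ^ (n + 1)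
          = ∫ s in Set.Ioc (0:ℝ) t, (ν s * F s ^ n) * (∫ u in Set.Ioc (0:ℝ) s, ν u) := by
        apply setIntegral_congr_fun measurableSet_Ioc
        intro s _
        simp only [pow_succ, hF]
        ring
      rw [h1, dlb_swap (hgm n) hm ht (hgb n) (dlb_intOn hm (fun s _ => hC s))]
      apply setIntegral_congr_fun measurableSet_Ioc
      intro u hu
      have hsplit := dlb_split (f := fun s => ν s * F s ^ n) hu.1.le hu.2
        (dlb_intOn (hgm n) (hgb n))
      simp only at hsplit ⊢
      rw [IH t ht, IH u hu.1.le] at hsplit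
      have : ∫ s in Set.Ioc u t, ν s * F s ^ n
          = F t ^ (n+1) / (n+1) - F u ^ (n+1) / (n+1) := by linarith
      rw [this, mul_comm]
    have h2 : ∫ u in Set.Ioc (0:ℝ) t, ν u * (F t ^ (n+1) / (n+1) - F u ^ (n+1) / (n+1))
        = ∫ u in Set.Ioc (0:ℝ) t,
            (ν u * (F t ^ (n+1) / (n+1)) - (ν u * F u ^ (n+1)) / (n+1)) := by
      apply setIntegral_congr_fun measurableSet_Ioc
      intro u _
      ring
    have hint1 : IntegrableOn (fun u => ν u * (F t ^ (n+1) / (n+1))) (Set.Ioc (0:ℝ) t) volume :=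
      (dlb_intOn hm (fun s _ => hC s)).mul_const _
    have hint2 : IntegrableOn (fun u => (ν u * F u ^ (n+1)) / (n+1)) (Set.Ioc (0:ℝ) t) volume :=
      (dlb_intOn (hgm (n+1)) (hgb (n+1))).div_const _
    have hval : (∫ u in Set.Ioc (0:ℝ) t,
          (ν u * (F t ^ (n+1) / (n+1)) - (ν u * F u ^ (n+1)) / (n+1)))
        = F t * (F t ^ (n+1) / (n+1))
          - (∫ s in Set.Ioc (0:ℝ) t, ν s * F s ^ (n+1)) / (n+1) := by
      rw [integral_sub hint1 hint2, integral_mul_const, integral_div]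
    have hself := key.trans (h2.trans hval)
    have hn : (0:ℝ) < (n:ℝ) + 1 := by positivity
    have hn2 : (0:ℝ) < (n:ℝ) + 2 := by positivity
    have hpow : F t * (F t ^ (n+1) / ((n:ℝ)+1)) = F t ^ (n+2) / ((n:ℝ)+1) := by
      rw [pow_succ]; ring
    rw [hpow] at hself
    show (∫ s in Set.Ioc (0:ℝ) t, ν s * F s ^ (n+1)) = F t ^ (n + 1 + 1) / (↑(n+1) + 1)
    push_cast
    have h3 : (n:ℝ) + 1 + 1 = (n:ℝ) + 2 := by ring
    have h4 : n + 1 + 1 = n + 2 := by ring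
    rw [h3, h4]
    field_simp at hself ⊢
    linarith
end

lemma dlb_exp {ν : ℝ → ℝ} {C : ℝ} (hm : Measurable ν) (hC : ∀ s, |ν s| ≤ C) {t : ℝ}
    (ht : 0 ≤ t) :
    ∫ s in Set.Ioc (0:ℝ) t, ν s * Real.exp (∫ u in Set.Ioc (0:ℝ) s, ν u)
      = Real.exp (∫ s in Set.Ioc (0:ℝ) t, ν s) - 1 := by
  have hC0 : 0 ≤ C := le_trans (abs_nonneg _) (hC 0)
  set F : ℝ → ℝ := fun s => ∫ u in Set.Ioc (0:ℝ) s, ν u with hF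
  have hFc : Continuous F := dlb_measF hm hC
  set G : ℕ → ℝ → ℝ := fun n s => ν s * F s ^ n / (n.factorial : ℝ) with hG
  have hgb : ∀ m : ℕ, ∀ s ∈ Set.Ioc (0:ℝ) t, |ν s * F s ^ m| ≤ C * (C * t) ^ m := by
    intro m s hs
    rw [abs_mul, abs_pow]
    apply mul_le_mul (hC s) (pow_le_pow_left₀ (abs_nonneg _) ?_ m)
      (pow_nonneg (abs_nonneg _) m) hC0
    exact le_trans (dlb_Fbound hm hC hs.1.le) (mul_le_mul_of_nonneg_left hs.2 hC0)
  have hgm : ∀ m : ℕ, Measurable fun s => ν s * F s ^ m :=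
    fun m => hm.mul (hFc.measurable.pow_const m)
  have h_int : ∀ n : ℕ, Integrable (G n) (volume.restrict (Set.Ioc (0:ℝ) t)) :=
    fun n => ((dlb_intOn (hgm n) (hgb n)).div_const _ : IntegrableOn _ _ _)
  have h_norm : ∀ n : ℕ, (∫ s in Set.Ioc (0:ℝ) t, ‖G n s‖)
      ≤ C * ((C * t) ^ n / (n.factorial : ℝ)) * t := by
    intro n
    have h1 : ∀ s ∈ Set.Ioc (0:ℝ) t, ‖G n s‖ ≤ C * ((C * t) ^ n / (n.factorial : ℝ)) := by
      intro s hs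
      rw [Real.norm_eq_abs, hG]
      simp only
      rw [abs_div, abs_of_nonneg (by positivity : (0:ℝ) ≤ ((n.factorial : ℝ) : ℝ))]
      rw [div_le_iff₀ (by positivity)]
      calc |ν s * F s ^ n| ≤ C * (C*t)^n := hgb n s hs
        _ = C * ((C * t) ^ n / (n.factorial : ℝ)) * (n.factorial : ℝ) := by field_simp
    calc (∫ s in Set.Ioc (0:ℝ) t, ‖G n s‖)
        ≤ ∫ _ in Set.Ioc (0:ℝ) t, C * ((C * t) ^ n / (n.factorial : ℝ)) := by
          apply setIntegral_mono_on (h_int n).norm (integrableOn_const measure_Ioc_lt_top.ne)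
            measurableSet_Ioc h1
      _ = C * ((C * t) ^ n / (n.factorial : ℝ)) * t := by
          rw [setIntegral_const, Real.volume_real_Ioc_of_le ht, smul_eq_mul,
            mul_comm]
          simp
  have h_sum : Summable fun n => ∫ s in Set.Ioc (0:ℝ) t, ‖G n s‖ := by
    apply Summable.of_nonneg_of_le (fun n => integral_nonneg (fun s => norm_nonneg _)) h_norm
    exact ((Real.summable_pow_div_factorial (C*t)).mul_left C).mul_right t
  have hsum := hasSum_integral_of_summable_integral_norm h_int h_sum
  -- identify the terms
  have hterm : ∀ n : ℕ, (∫ s in Set.Ioc (0:ℝ) t, G n s) = F t ^ (n+1) / ((n+1).factorial : ℝ) := by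
    intro n
    rw [hG]
    simp only
    rw [integral_div, dlb_pow hm hC n t ht]
    rw [Nat.factorial_succ]
    push_cast
    rw [div_div]
  -- identify the pointwise sum
  have hptsum : ∀ s : ℝ, (∑' n, G n s) = ν s * Real.exp (F s) := by
    intro s
    have h1 : HasSum (fun n => F s ^ n / (n.factorial : ℝ)) (Real.exp (F s)) := by
      rw [Real.exp_eq_exp_ℝ]
      exact NormedSpace.expSeries_div_hasSum_exp (F s)
    calc (∑' n, G n s) = ∑' n, ν s * (F s ^ n / (n.factorial : ℝ)) := by
          apply tsum_congr; intro n; rw [hG]; simp only; ring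
      _ = ν s * Real.exp (F s) := by rw [tsum_mul_left, h1.tsum_eq]
  have htarget : HasSum (fun n : ℕ => F t ^ (n+1) / ((n+1).factorial : ℝ)) (Real.exp (F t) - 1) := by
    have h1 : HasSum (fun n => F t ^ n / (n.factorial : ℝ)) (Real.exp (F t)) := by
      rw [Real.exp_eq_exp_ℝ]
      exact NormedSpace.expSeries_div_hasSum_exp (F t)
    have h2 := (hasSum_nat_add_iff' (f := fun n => F t ^ n / (n.factorial : ℝ)) 1).2 h1
    simpa using h2
  have hfin : (∫ s in Set.Ioc (0:ℝ) t, ∑' n, G n s) = Real.exp (F t) - 1 := by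
    have h1 : HasSum (fun n => ∫ s in Set.Ioc (0:ℝ) t, G n s)
        (∫ s in Set.Ioc (0:ℝ) t, ∑' n, G n s) := hsum
    rw [funext hterm] at h1
    exact h1.unique htarget
  rw [← hfin]
  exact setIntegral_congr_fun measurableSet_Ioc (fun s _ => (hptsum s).symm)

lemma dlb_gronwall {ν d : ℝ → ℝ} {T C M : ℝ} (hν : Measurable ν) (hd : Measurable d)
    (hM0 : 0 ≤ M) (hνb : ∀ s, |ν s| ≤ C)
    (hdb : ∀ s ∈ Set.Icc (0:ℝ) T, |d s| ≤ M)
    (heq : ∀ t ∈ Set.Icc (0:ℝ) T, d t = ∫ s in Set.Ioc (0:ℝ) t, ν s * d s) :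
    ∀ t ∈ Set.Icc (0:ℝ) T, d t = 0 := by
  have hC0 : 0 ≤ C := le_trans (abs_nonneg _) (hνb 0)
  have key : ∀ n : ℕ, ∀ t ∈ Set.Icc (0:ℝ) T, |d t| ≤ M * (C * t) ^ n / n.factorial := by
    intro n
    induction n with
    | zero => intro t htm; simpa using hdb t htm
    | succ n IH =>
      intro t htm
      have hmono : ∀ s ∈ Set.Ioc (0:ℝ) t, |ν s| * |d s| ≤ C * (M * C ^ n / n.factorial) * s ^ n := by
        intro s hs
        have hsm : s ∈ Set.Icc (0:ℝ) T := ⟨hs.1.le, hs.2.trans htm.2⟩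
        have h1 := IH s hsm
        calc |ν s| * |d s| ≤ C * (M * (C * s) ^ n / n.factorial) :=
              mul_le_mul (hνb s) h1 (abs_nonneg _) hC0
          _ = C * (M * C ^ n / n.factorial) * s ^ n := by rw [mul_pow]; ring
      have habs : |d t| ≤ ∫ s in Set.Ioc (0:ℝ) t, |ν s| * |d s| := by
        rw [heq t htm]
        simpa [Real.norm_eq_abs, abs_mul] using
          norm_integral_le_integral_norm (μ := volume.restrict (Set.Ioc (0:ℝ) t))
            (f := fun s => ν s * d s)
      have hint1 : IntegrableOn (fun s => |ν s| * |d s|) (Set.Ioc (0:ℝ) t) volume := by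
        apply dlb_intOn (hν.abs.mul hd.abs) (C := C * M)
        intro s hs
        simp only [Pi.mul_apply]
        rw [abs_of_nonneg (by positivity)]
        exact mul_le_mul (hνb s) (hdb s ⟨hs.1.le, hs.2.trans htm.2⟩) (abs_nonneg _) hC0
      have hint2 : IntegrableOn (fun s => C * (M * C ^ n / n.factorial) * s ^ n)
          (Set.Ioc (0:ℝ) t) volume := by
        apply Continuous.integrableOn_Ioc
        continuity
      have hmono2 : (∫ s in Set.Ioc (0:ℝ) t, |ν s| * |d s|)
          ≤ ∫ s in Set.Ioc (0:ℝ) t, C * (M * C ^ n / n.factorial) * s ^ n :=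
        setIntegral_mono_on hint1 hint2 measurableSet_Ioc hmono
      have hval : (∫ s in Set.Ioc (0:ℝ) t, C * (M * C ^ n / n.factorial) * s ^ n)
          = C * (M * C ^ n / n.factorial) * (t ^ (n+1) / (n+1)) := by
        rw [integral_const_mul, ← intervalIntegral.integral_of_le htm.1,
          integral_pow]
        simp
      have hfinal : C * (M * C ^ n / n.factorial) * (t ^ (n+1) / (n+1))
          = M * (C * t) ^ (n+1) / (n+1).factorial := by
        rw [mul_pow, Nat.factorial_succ]
        push_cast
        have h1 : (0:ℝ) < n.factorial := by positivity
        have h2 : (0:ℝ) < (n:ℝ) + 1 := by positivity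
        field_simp
        ring
      calc |d t| ≤ _ := habs
        _ ≤ _ := hmono2
        _ = M * (C * t) ^ (n+1) / (n+1).factorial := by rw [hval, hfinal]
  intro t htm
  have hlim : Filter.Tendsto (fun n : ℕ => M * (C * t) ^ n / n.factorial)
      Filter.atTop (nhds 0) := by
    have h1 := FloorSemiring.tendsto_pow_div_factorial_atTop (K := ℝ) (C * t)
    have h2 := h1.const_mul M
    simpa [mul_div_assoc] using h2
  have hle : |d t| ≤ 0 := ge_of_tendsto hlim
    (Filter.Eventually.of_forall (fun n => by simpa [mul_div_assoc] using key n t htm))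
  have := abs_nonneg (d t)
  have : |d t| = 0 := le_antisymm hle (abs_nonneg _)
  exact abs_eq_zero.1 this


/-- Variation-of-constants (Duhamel) lower bound: if
`b(t) = b(0) + ∫₀ᵗ ν(s) b(s) ds + ∫₀ᵗ z(s) ds + ξ(t)` on `[0,T]` with `z ≥ 0`,
then `b(t) ≥ b(0) e^{∫₀ᵗ ν} + ξ(t) + ∫₀ᵗ ν(s) e^{∫ₛᵗ ν} ξ(s) ds`. -/
theorem duhamel_lower_bound
    (T : ℝ) (hT : 0 < T)
    (ν : ℝ → ℝ) (hν_meas : Measurable ν)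
    (hν_bdd : ∃ C : ℝ, ∀ s ∈ Set.Icc (0:ℝ) T, |ν s| ≤ C)
    (z : ℝ → ℝ) (hz_meas : Measurable z)
    (hz_nonneg : ∀ s ∈ Set.Icc (0:ℝ) T, 0 ≤ z s)
    (hz_int : IntervalIntegrable z volume 0 T)
    (ξ : ℝ → ℝ) (hξ_meas : Measurable ξ)
    (hξ_bdd : ∃ C : ℝ, ∀ s ∈ Set.Icc (0:ℝ) T, |ξ s| ≤ C)
    (hξ0 : ξ 0 = 0)
    (b : ℝ → ℝ) (hb_meas : Measurable b)
    (hb_bdd : ∃ C : ℝ, ∀ s ∈ Set.Icc (0:ℝ) T, |b s| ≤ C)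
    (hb : ∀ t ∈ Set.Icc (0:ℝ) T,
      b t = b 0 + (∫ s in (0:ℝ)..t, ν s * b s) + (∫ s in (0:ℝ)..t, z s) + ξ t) :
    ∀ t ∈ Set.Icc (0:ℝ) T,
      b 0 * Real.exp (∫ s in (0:ℝ)..t, ν s) + ξ t
        + (∫ s in (0:ℝ)..t, ν s * Real.exp (∫ r in s..t, ν r) * ξ s) ≤ b t := by
  obtain ⟨Cν, hCν⟩ := hν_bdd
  obtain ⟨Cξ, hCξ⟩ := hξ_bdd
  obtain ⟨Cb, hCb⟩ := hb_bdd
  have h0T : (0:ℝ) ∈ Set.Icc (0:ℝ) T := ⟨le_refl 0, hT.le⟩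
  have hCν0 : 0 ≤ Cν := le_trans (abs_nonneg _) (hCν 0 h0T)
  have hCξ0 : 0 ≤ Cξ := le_trans (abs_nonneg _) (hCξ 0 h0T)
  have hCb0 : 0 ≤ Cb := le_trans (abs_nonneg _) (hCb 0 h0T)
  set S := Set.Ioc (0:ℝ) T with hS
  set ν' := S.indicator ν with hν'def
  set ξ' := S.indicator ξ with hξ'def
  set z' := S.indicator z with hz'def
  have hmemS : ∀ {s : ℝ}, s ∈ S → s ∈ Set.Icc (0:ℝ) T := fun h => ⟨h.1.le, h.2⟩
  have hν'm : Measurable ν' := hν_meas.indicator measurableSet_Ioc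
  have hξ'm : Measurable ξ' := hξ_meas.indicator measurableSet_Ioc
  have hz'm : Measurable z' := hz_meas.indicator measurableSet_Ioc
  have hν'b : ∀ s, |ν' s| ≤ Cν := by
    intro s; by_cases h : s ∈ S
    · rw [hν'def, Set.indicator_of_mem h]; exact hCν s (hmemS h)
    · rw [hν'def, Set.indicator_of_notMem h]; simpa using hCν0
  have hξ'b : ∀ s, |ξ' s| ≤ Cξ := by
    intro s; by_cases h : s ∈ S
    · rw [hξ'def, Set.indicator_of_mem h]; exact hCξ s (hmemS h)
    · rw [hξ'def, Set.indicator_of_notMem h]; simpa using hCξ0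
  have hz'0 : ∀ s, 0 ≤ z' s := by
    intro s; by_cases h : s ∈ S
    · rw [hz'def, Set.indicator_of_mem h]; exact hz_nonneg s (hmemS h)
    · rw [hz'def, Set.indicator_of_notMem h]
  have hz'int : Integrable z' volume := hz_int.1.integrable_indicator measurableSet_Ioc
  set F : ℝ → ℝ := fun s => ∫ u in Set.Ioc (0:ℝ) s, ν' u with hFdef
  have hFs : ∀ s : ℝ, (∫ u in Set.Ioc (0:ℝ) s, ν' u) = F s := fun s => rfl
  have hFc : Continuous F := dlb_measF hν'm hν'b
  have hFb : ∀ s, 0 ≤ s → s ≤ T → |F s| ≤ Cν * T := fun s h1 h2 =>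
    le_trans (dlb_Fbound hν'm hν'b h1) (mul_le_mul_of_nonneg_left h2 hCν0)
  set E₀ := Real.exp (Cν * T) with hE₀
  have hE₀0 : 0 < E₀ := Real.exp_pos _
  have hEb : ∀ s, 0 ≤ s → s ≤ T → Real.exp (-F s) ≤ E₀ := by
    intro s h1 h2
    apply Real.exp_le_exp.2
    have := hFb s h1 h2; rw [abs_le] at this; linarith
  have hEb' : ∀ s, 0 ≤ s → s ≤ T → Real.exp (F s) ≤ E₀ := by
    intro s h1 h2
    apply Real.exp_le_exp.2
    have := hFb s h1 h2; rw [abs_le] at this; linarith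
  set w : ℝ → ℝ := fun s => ν' s * Real.exp (-F s) * ξ' s with hwdef
  set wz : ℝ → ℝ := fun s => Real.exp (-F s) * z' s with hwzdef
  have hwm : Measurable w :=
    (hν'm.mul (Real.continuous_exp.comp hFc.neg).measurable).mul hξ'm
  have hwzm : Measurable wz := (Real.continuous_exp.comp hFc.neg).measurable.mul hz'm
  have hwb : ∀ s, |w s| ≤ Cν * E₀ * Cξ := by
    intro s
    by_cases h : s ∈ S
    · rw [hwdef]; simp only
      rw [abs_mul, abs_mul, abs_of_pos (Real.exp_pos _)]
      exact mul_le_mul (mul_le_mul (hν'b s) (hEb s h.1.le h.2) (Real.exp_nonneg _) hCν0)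
        (hξ'b s) (abs_nonneg _) (by positivity)
    · have h0 : ν' s = 0 := by rw [hν'def]; exact Set.indicator_of_notMem h ν
      rw [hwdef]; simp only [h0, zero_mul, abs_zero]
      positivity
  have hwzint : Integrable wz volume := by
    apply Integrable.mono' (hz'int.const_mul E₀) hwzm.aestronglyMeasurable
    apply ae_of_all
    intro s
    rw [Real.norm_eq_abs, hwzdef]
    simp only
    by_cases h : s ∈ S
    · rw [abs_mul, abs_of_pos (Real.exp_pos _), abs_of_nonneg (hz'0 s)]
      exact mul_le_mul_of_nonneg_right (hEb s h.1.le h.2) (hz'0 s)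
    · have h0 : z' s = 0 := by rw [hz'def]; exact Set.indicator_of_notMem h z
      simp [h0]
  set P : ℝ → ℝ := fun r => ∫ s in Set.Ioc (0:ℝ) r, w s with hPdef
  set Q : ℝ → ℝ := fun r => ∫ s in Set.Ioc (0:ℝ) r, wz s with hQdef
  have hPs : ∀ r : ℝ, (∫ s in Set.Ioc (0:ℝ) r, w s) = P r := fun r => rfl
  have hQs : ∀ r : ℝ, (∫ s in Set.Ioc (0:ℝ) r, wz s) = Q r := fun r => rfl
  have hPc : Continuous P :=
    dlb_cont (fun a b => ⟨dlb_intOn hwm (fun s _ => hwb s), dlb_intOn hwm (fun s _ => hwb s)⟩)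
  have hQc : Continuous Q := dlb_cont (fun a b => hwzint.intervalIntegrable)
  have hPb : ∀ r, 0 ≤ r → r ≤ T → |P r| ≤ Cν * E₀ * Cξ * T := by
    intro r h1 h2
    refine le_trans (dlb_Fbound hwm hwb h1) ?_
    exact mul_le_mul_of_nonneg_left h2 (by positivity)
  set QI := ∫ s, |wz s| with hQI
  have hQI0 : 0 ≤ QI := integral_nonneg (fun s => abs_nonneg _)
  have hQb : ∀ r, |Q r| ≤ QI := by
    intro r
    calc |Q r| ≤ ∫ s in Set.Ioc (0:ℝ) r, |wz s| := by
          simpa [Real.norm_eq_abs] using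
            norm_integral_le_integral_norm (μ := volume.restrict (Set.Ioc (0:ℝ) r)) wz
      _ ≤ QI := setIntegral_le_integral hwzint.abs (ae_of_all _ (fun s => abs_nonneg _))
  set B : ℝ → ℝ := fun r =>
    b 0 * Real.exp (F r) + ξ' r + Real.exp (F r) * P r + Real.exp (F r) * Q r with hBdef
  have hBm : Measurable B := by
    apply Measurable.add
    apply Measurable.add
    apply Measurable.add
    · exact ((Real.continuous_exp.comp hFc).measurable).const_mul _
    · exact hξ'm
    · exact ((Real.continuous_exp.comp hFc).mul hPc).measurable
    · exact ((Real.continuous_exp.comp hFc).mul hQc).measurable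
  have hBb : ∀ r ∈ Set.Icc (0:ℝ) T, |B r| ≤ |b 0| * E₀ + Cξ + E₀ * (Cν * E₀ * Cξ * T) + E₀ * QI := by
    intro r hr
    rw [hBdef]; simp only
    have e1 : |b 0 * Real.exp (F r)| ≤ |b 0| * E₀ := by
      rw [abs_mul, abs_of_pos (Real.exp_pos _)]
      exact mul_le_mul_of_nonneg_left (hEb' r hr.1 hr.2) (abs_nonneg _)
    have e2 : |Real.exp (F r) * P r| ≤ E₀ * (Cν * E₀ * Cξ * T) := by
      rw [abs_mul, abs_of_pos (Real.exp_pos _)]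
      exact mul_le_mul (hEb' r hr.1 hr.2) (hPb r hr.1 hr.2) (abs_nonneg _) hE₀0.le
    have e3 : |Real.exp (F r) * Q r| ≤ E₀ * QI := by
      rw [abs_mul, abs_of_pos (Real.exp_pos _)]
      exact mul_le_mul (hEb' r hr.1 hr.2) (hQb r) (abs_nonneg _) hE₀0.le
    calc |b 0 * Real.exp (F r) + ξ' r + Real.exp (F r) * P r + Real.exp (F r) * Q r|
        ≤ |b 0 * Real.exp (F r) + ξ' r + Real.exp (F r) * P r| + |Real.exp (F r) * Q r| :=
          abs_add_le _ _
      _ ≤ (|b 0 * Real.exp (F r) + ξ' r| + |Real.exp (F r) * P r|) + |Real.exp (F r) * Q r| :=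
          add_le_add_left (abs_add_le _ _) _
      _ ≤ ((|b 0 * Real.exp (F r)| + |ξ' r|) + |Real.exp (F r) * P r|) + |Real.exp (F r) * Q r| :=
          add_le_add_left (add_le_add_left (abs_add_le _ _) _) _
      _ ≤ |b 0| * E₀ + Cξ + E₀ * (Cν * E₀ * Cξ * T) + E₀ * QI := by
          linarith [e1, e2, e3, hξ'b r]
  have hξeq : ∀ r ∈ Set.Icc (0:ℝ) T, ξ' r = ξ r := by
    intro r hr
    rcases eq_or_lt_of_le hr.1 with h | h
    · rw [← h, hξ0, hξ'def]
      exact Set.indicator_of_notMem (by simp [hS]) ξ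
    · rw [hξ'def]; exact Set.indicator_of_mem (show r ∈ Set.Ioc (0:ℝ) T from ⟨h, hr.2⟩) ξ
  have hgm : Measurable fun τ => ν' τ * Real.exp (F τ) :=
    hν'm.mul (Real.continuous_exp.comp hFc).measurable
  have hBeq : ∀ t ∈ Set.Icc (0:ℝ) T,
      B t = b 0 + (∫ s in Set.Ioc (0:ℝ) t, ν' s * B s)
        + (∫ s in Set.Ioc (0:ℝ) t, z' s) + ξ' t := by
    intro t ht
    have ht0 : (0:ℝ) ≤ t := ht.1
    have hgb : ∀ τ ∈ Set.Ioc (0:ℝ) t, |ν' τ * Real.exp (F τ)| ≤ Cν * E₀ := by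
      intro τ hτ
      rw [abs_mul, abs_of_pos (Real.exp_pos _)]
      exact mul_le_mul (hν'b τ) (hEb' τ hτ.1.le (hτ.2.trans ht.2)) (Real.exp_nonneg _) hCν0
    have hexp_t : ∫ s in Set.Ioc (0:ℝ) t, ν' s * Real.exp (F s) = Real.exp (F t) - 1 := by
      have h := dlb_exp hν'm hν'b ht0
      simpa only [hFs] using h
    have hsplitg : ∀ u ∈ Set.Ioc (0:ℝ) t,
        (∫ s in Set.Ioc u t, ν' s * Real.exp (F s)) = Real.exp (F t) - Real.exp (F u) := by
      intro u hu
      have h1 := dlb_split (f := fun s => ν' s * Real.exp (F s)) hu.1.le hu.2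
        (dlb_intOn hgm hgb)
      have h2 := dlb_exp hν'm hν'b hu.1.le
      simp only [hFs] at h2
      rw [hexp_t, h2] at h1
      linarith
    have hiξ : IntegrableOn (fun s => ν' s * ξ' s) (Set.Ioc (0:ℝ) t) volume :=
      dlb_intOn (hν'm.mul hξ'm) (C := Cν * Cξ) (fun s _ => by
        simp only [Pi.mul_apply]
        rw [abs_mul]; exact mul_le_mul (hν'b s) (hξ'b s) (abs_nonneg _) hCν0)
    have hswap1 : (∫ τ in Set.Ioc (0:ℝ) t, (ν' τ * Real.exp (F τ)) * P τ)
        = Real.exp (F t) * P t - ∫ u in Set.Ioc (0:ℝ) t, ν' u * ξ' u := by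
      have h1 := dlb_swap (g := fun τ => ν' τ * Real.exp (F τ)) (h := w) hgm hwm ht0 hgb
        (dlb_intOn hwm (fun s _ => hwb s))
      simp only [hPs] at h1
      rw [h1]
      have h2 : ∀ u ∈ Set.Ioc (0:ℝ) t,
          w u * (∫ s in Set.Ioc u t, ν' s * Real.exp (F s))
            = w u * Real.exp (F t) - ν' u * ξ' u := by
        intro u hu
        rw [hsplitg u hu]
        have h3 : Real.exp (-F u) * Real.exp (F u) = 1 := by
          rw [← Real.exp_add]; simp
        rw [hwdef]; simp only
        linear_combination (-(ν' u * ξ' u)) * h3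
      rw [setIntegral_congr_fun measurableSet_Ioc h2,
        integral_sub ((dlb_intOn hwm (fun s _ => hwb s)).mul_const _) hiξ,
        integral_mul_const, hPs, mul_comm (P t) _]
    have hswap2 : (∫ τ in Set.Ioc (0:ℝ) t, (ν' τ * Real.exp (F τ)) * Q τ)
        = Real.exp (F t) * Q t - ∫ u in Set.Ioc (0:ℝ) t, z' u := by
      have h1 := dlb_swap (g := fun τ => ν' τ * Real.exp (F τ)) (h := wz) hgm hwzm ht0 hgb
        hwzint.integrableOn
      simp only [hQs] at h1
      rw [h1]
      have h2 : ∀ u ∈ Set.Ioc (0:ℝ) t,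
          wz u * (∫ s in Set.Ioc u t, ν' s * Real.exp (F s))
            = wz u * Real.exp (F t) - z' u := by
        intro u hu
        rw [hsplitg u hu]
        have h3 : Real.exp (-F u) * Real.exp (F u) = 1 := by
          rw [← Real.exp_add]; simp
        rw [hwzdef]; simp only
        linear_combination (-(z' u)) * h3
      rw [setIntegral_congr_fun measurableSet_Ioc h2,
        integral_sub (hwzint.integrableOn.mul_const _) hz'int.integrableOn,
        integral_mul_const, hQs, mul_comm (Q t) _]
    have iB1 : IntegrableOn (fun s => b 0 * (ν' s * Real.exp (F s)))
        (Set.Ioc (0:ℝ) t) volume := (dlb_intOn hgm hgb).const_mul _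
    have iB3 : IntegrableOn (fun s => (ν' s * Real.exp (F s)) * P s)
        (Set.Ioc (0:ℝ) t) volume :=
      dlb_intOn (hgm.mul hPc.measurable) (C := Cν * E₀ * (Cν * E₀ * Cξ * T)) (fun s hs => by
        simp only [Pi.mul_apply]
        rw [abs_mul]
        exact mul_le_mul (hgb s hs) (hPb s hs.1.le (hs.2.trans ht.2)) (abs_nonneg _)
          (by positivity))
    have iB4 : IntegrableOn (fun s => (ν' s * Real.exp (F s)) * Q s)
        (Set.Ioc (0:ℝ) t) volume :=
      dlb_intOn (hgm.mul hQc.measurable) (C := Cν * E₀ * QI) (fun s hs => by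
        simp only [Pi.mul_apply]
        rw [abs_mul]
        exact mul_le_mul (hgb s hs) (hQb s) (abs_nonneg _) (by positivity))
    have hexpand : (∫ s in Set.Ioc (0:ℝ) t, ν' s * B s)
        = ∫ s in Set.Ioc (0:ℝ) t, (b 0 * (ν' s * Real.exp (F s)) + ν' s * ξ' s
            + (ν' s * Real.exp (F s)) * P s + (ν' s * Real.exp (F s)) * Q s) := by
      apply setIntegral_congr_fun measurableSet_Ioc
      intro s _
      rw [hBdef]; simp only; ring
    have hνB : (∫ s in Set.Ioc (0:ℝ) t, ν' s * B s)
        = b 0 * (Real.exp (F t) - 1) + (∫ s in Set.Ioc (0:ℝ) t, ν' s * ξ' s)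
          + (Real.exp (F t) * P t - ∫ s in Set.Ioc (0:ℝ) t, ν' s * ξ' s)
          + (Real.exp (F t) * Q t - ∫ s in Set.Ioc (0:ℝ) t, z' s) := by
      have i12 : IntegrableOn (fun s => b 0 * (ν' s * Real.exp (F s)) + ν' s * ξ' s)
          (Set.Ioc (0:ℝ) t) volume := iB1.add hiξ
      have i123 : IntegrableOn (fun s => b 0 * (ν' s * Real.exp (F s)) + ν' s * ξ' s
          + (ν' s * Real.exp (F s)) * P s) (Set.Ioc (0:ℝ) t) volume := i12.add iB3
      rw [hexpand, integral_add i123 iB4, integral_add i12 iB3, integral_add iB1 hiξ,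
        integral_const_mul, hexp_t, hswap1, hswap2]
    rw [hνB, hBdef]
    simp only
    ring
  have hbeq : ∀ t ∈ Set.Icc (0:ℝ) T,
      b t = b 0 + (∫ s in Set.Ioc (0:ℝ) t, ν' s * b s)
        + (∫ s in Set.Ioc (0:ℝ) t, z' s) + ξ' t := by
    intro t ht
    have hmem : ∀ s ∈ Set.Ioc (0:ℝ) t, s ∈ S := fun s hs => ⟨hs.1, hs.2.trans ht.2⟩
    have e1 : (∫ s in (0:ℝ)..t, ν s * b s) = ∫ s in Set.Ioc (0:ℝ) t, ν' s * b s := by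
      rw [intervalIntegral.integral_of_le ht.1]
      apply setIntegral_congr_fun measurableSet_Ioc
      intro s hs
      show ν s * b s = ν' s * b s
      rw [hν'def, Set.indicator_of_mem (hmem s hs) ν]
    have e2 : (∫ s in (0:ℝ)..t, z s) = ∫ s in Set.Ioc (0:ℝ) t, z' s := by
      rw [intervalIntegral.integral_of_le ht.1]
      apply setIntegral_congr_fun measurableSet_Ioc
      intro s hs
      show z s = z' s
      rw [hz'def, Set.indicator_of_mem (hmem s hs) z]
    rw [hb t ht, e1, e2, hξeq t ht]
  set CB := |b 0| * E₀ + Cξ + E₀ * (Cν * E₀ * Cξ * T) + E₀ * QI with hCBdef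
  set d : ℝ → ℝ := fun s => b s - B s with hddef
  have hdm : Measurable d := hb_meas.sub hBm
  have hdb : ∀ s ∈ Set.Icc (0:ℝ) T, |d s| ≤ Cb + CB := by
    intro s hs
    rw [hddef]; simp only
    calc |b s - B s| ≤ |b s| + |B s| := abs_sub _ _
      _ ≤ Cb + CB := add_le_add (hCb s hs) (hBb s hs)
  have hM0 : 0 ≤ Cb + CB := le_trans (abs_nonneg (d 0)) (hdb 0 h0T)
  have hdeq : ∀ t ∈ Set.Icc (0:ℝ) T, d t = ∫ s in Set.Ioc (0:ℝ) t, ν' s * d s := by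
    intro t ht
    have hint_b : IntegrableOn (fun s => ν' s * b s) (Set.Ioc (0:ℝ) t) volume :=
      dlb_intOn (hν'm.mul hb_meas) (C := Cν * Cb) (fun s hs => by
        simp only [Pi.mul_apply]
        rw [abs_mul]
        exact mul_le_mul (hν'b s) (hCb s ⟨hs.1.le, hs.2.trans ht.2⟩) (abs_nonneg _) hCν0)
    have hint_B : IntegrableOn (fun s => ν' s * B s) (Set.Ioc (0:ℝ) t) volume :=
      dlb_intOn (hν'm.mul hBm) (C := Cν * CB) (fun s hs => by
        simp only [Pi.mul_apply]
        rw [abs_mul]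
        exact mul_le_mul (hν'b s) (hBb s ⟨hs.1.le, hs.2.trans ht.2⟩) (abs_nonneg _) hCν0)
    have h3 : (∫ s in Set.Ioc (0:ℝ) t, ν' s * d s)
        = (∫ s in Set.Ioc (0:ℝ) t, ν' s * b s) - ∫ s in Set.Ioc (0:ℝ) t, ν' s * B s := by
      rw [← integral_sub hint_b hint_B]
      apply setIntegral_congr_fun measurableSet_Ioc
      intro s _
      rw [hddef]; simp only; ring
    have h1 := hbeq t ht
    have h2 := hBeq t ht
    rw [hddef]; simp only
    rw [h3]; linarith
  have hdzero := dlb_gronwall hν'm hdm hM0 hν'b hdb hdeq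
  intro t ht
  have hbt : b t = B t := by
    have h := hdzero t ht
    rw [hddef] at h; simp only at h; linarith
  have hmem : ∀ s ∈ Set.Ioc (0:ℝ) t, s ∈ S := fun s hs => ⟨hs.1, hs.2.trans ht.2⟩
  have eF : (∫ s in (0:ℝ)..t, ν s) = F t := by
    rw [intervalIntegral.integral_of_le ht.1, ← hFs t]
    apply setIntegral_congr_fun measurableSet_Ioc
    intro s hs
    show ν s = ν' s
    rw [hν'def, Set.indicator_of_mem (hmem s hs) ν]
  have eI : (∫ s in (0:ℝ)..t, ν s * Real.exp (∫ r in s..t, ν r) * ξ s)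
      = Real.exp (F t) * P t := by
    rw [intervalIntegral.integral_of_le ht.1]
    have h1 : ∀ s ∈ Set.Ioc (0:ℝ) t,
        ν s * Real.exp (∫ r in s..t, ν r) * ξ s = Real.exp (F t) * w s := by
      intro s hs
      have hFr : (∫ r in s..t, ν r) = F t - F s := by
        rw [intervalIntegral.integral_of_le hs.2]
        have h2 : (∫ r in Set.Ioc s t, ν r) = ∫ r in Set.Ioc s t, ν' r := by
          apply setIntegral_congr_fun measurableSet_Ioc
          intro r hr
          show ν r = ν' r
          have hrS : r ∈ S := ⟨hs.1.trans hr.1, hr.2.trans ht.2⟩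
          rw [hν'def, Set.indicator_of_mem hrS ν]
        have h3 := dlb_split (f := ν') hs.1.le hs.2 (dlb_intOn hν'm (fun u _ => hν'b u))
        simp only [hFs] at h3
        rw [h2]; linarith
      have hν's : ν' s = ν s := by rw [hν'def]; exact Set.indicator_of_mem (hmem s hs) ν
      have hξ's : ξ' s = ξ s := by rw [hξ'def]; exact Set.indicator_of_mem (hmem s hs) ξ
      rw [hFr, hwdef]; simp only
      rw [hν's, hξ's, Real.exp_sub, Real.exp_neg]
      field_simp
    rw [setIntegral_congr_fun measurableSet_Ioc h1, integral_const_mul, hPs]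
  have hQt0 : 0 ≤ Q t := by
    rw [← hQs t]
    apply setIntegral_nonneg measurableSet_Ioc
    intro s _
    rw [hwzdef]; simp only
    exact mul_nonneg (Real.exp_nonneg _) (hz'0 s)
  have hEQ : 0 ≤ Real.exp (F t) * Q t := mul_nonneg (Real.exp_nonneg _) hQt0
  have hξt : ξ' t = ξ t := hξeq t ht
  rw [eF, eI, hbt, hBdef]
  simp only
  linarith
end

section
/- Let T > 0, let ν : [0,T] → (−∞, 0] be Borel measurable and bounded, let b₀ > 0, and let ξ : [0,T] → ℝ be Borel measurable with ξ(t) ≥ −(1/4) b₀ exp(∫₀ᵗ ν(s) ds) and ξ(t) ≤ (1/4) b₀ exp(2 ∫₀ᵀ ν(s) ds) for all t ∈ [0,T]. If b : [0,T] → ℝ satisfies b(t) ≥ b₀ exp(∫₀ᵗ ν(s) ds) + ξ(t) + ∫₀ᵗ ν(s) exp(∫ₛᵗ ν(r) dr) ξ(s) ds for all t ∈ [0,T], then b(t) ≥ (1/2) b₀ exp(∫₀ᵗ ν(s) ds) for all t ∈ [0,T]. -/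
open MeasureTheory

/-- Integral of a nonpositive function is nonpositive. -/
lemma my_integral_nonpos {f : ℝ → ℝ} {a b : ℝ} (hab : a ≤ b)
    (hf : IntervalIntegrable f volume a b)
    (h : ∀ x ∈ Set.Icc a b, f x ≤ 0) : (∫ x in a..b, f x) ≤ 0 := by
  have := intervalIntegral.integral_mono_on (μ := volume) hab hf
    (intervalIntegrable_const (c := (0:ℝ))) h
  simpa using this

/-- If `ν ≤ 0` on `[0,T]`, `b₀ > 0`, and the perturbation `ξ` satisfies
`ξ(t) ≥ −(1/4) b₀ e^{∫₀ᵗ ν}` and `ξ(t) ≤ (1/4) b₀ e^{2∫₀ᵀ ν}` on `[0,T]`, then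
any `b` satisfying the Duhamel lower bound
`b(t) ≥ b₀ e^{∫₀ᵗ ν} + ξ(t) + ∫₀ᵗ ν(s) e^{∫ₛᵗ ν} ξ(s) ds`
satisfies `b(t) ≥ (1/2) b₀ e^{∫₀ᵗ ν}` on `[0,T]`. -/
theorem half_lower_bound_from_duhamel
    (T : ℝ) (hT : 0 < T)
    (ν : ℝ → ℝ) (hν_meas : Measurable ν)
    (hν_bdd : ∃ C : ℝ, ∀ s ∈ Set.Icc (0:ℝ) T, |ν s| ≤ C)
    (hν_nonpos : ∀ s ∈ Set.Icc (0:ℝ) T, ν s ≤ 0)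
    (b0 : ℝ) (hb0 : 0 < b0)
    (ξ : ℝ → ℝ) (hξ_meas : Measurable ξ)
    (hξ_lo : ∀ t ∈ Set.Icc (0:ℝ) T,
      -(1/4 : ℝ) * b0 * Real.exp (∫ s in (0:ℝ)..t, ν s) ≤ ξ t)
    (hξ_hi : ∀ t ∈ Set.Icc (0:ℝ) T,
      ξ t ≤ (1/4 : ℝ) * b0 * Real.exp (2 * ∫ s in (0:ℝ)..T, ν s))
    (b : ℝ → ℝ)
    (hb : ∀ t ∈ Set.Icc (0:ℝ) T,
      b0 * Real.exp (∫ s in (0:ℝ)..t, ν s) + ξ t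
        + (∫ s in (0:ℝ)..t, ν s * Real.exp (∫ r in s..t, ν r) * ξ s) ≤ b t) :
    ∀ t ∈ Set.Icc (0:ℝ) T,
      (1/2 : ℝ) * b0 * Real.exp (∫ s in (0:ℝ)..t, ν s) ≤ b t := by
  obtain ⟨C, hC⟩ := hν_bdd
  -- integrability of ν on [0,T]
  have hIntT : IntegrableOn ν (Set.Icc (0:ℝ) T) volume := by
    refine Measure.integrableOn_of_bounded (M := C) ?_ hν_meas.aestronglyMeasurable ?_
    · simp [Real.volume_Icc]
    · filter_upwards [ae_restrict_mem measurableSet_Icc] with s hs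
      simpa [Real.norm_eq_abs] using hC s hs
  have hInt : ∀ a b : ℝ, 0 ≤ a → b ≤ T → a ≤ b → IntervalIntegrable ν volume a b := by
    intro a c ha hc hac
    apply IntegrableOn.intervalIntegrable
    apply hIntT.mono_set
    rw [Set.uIcc_of_le hac]
    exact Set.Icc_subset_Icc ha hc
  intro t ht
  obtain ⟨ht0, htT⟩ := ht
  set It := ∫ s in (0:ℝ)..t, ν s with hIt
  set IT := ∫ s in (0:ℝ)..T, ν s with hIT
  clear_value It IT
  -- basic integral inequalities
  have hIt_nonpos : It ≤ 0 := by
    rw [hIt]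
    apply my_integral_nonpos ht0 (hInt 0 t le_rfl htT ht0)
    intro x hx; exact hν_nonpos x ⟨hx.1, hx.2.trans htT⟩
  have hIT_le_It : IT ≤ It := by
    have hsplit : (∫ s in (0:ℝ)..t, ν s) + (∫ s in t..T, ν s) = ∫ s in (0:ℝ)..T, ν s :=
      intervalIntegral.integral_add_adjacent_intervals (hInt 0 t le_rfl htT ht0)
        (hInt t T ht0 le_rfl htT)
    have htail : (∫ s in t..T, ν s) ≤ 0 := by
      apply my_integral_nonpos htT (hInt t T ht0 le_rfl htT)
      intro x hx; exact hν_nonpos x ⟨ht0.trans hx.1, hx.2⟩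
    rw [hIT, hIt, ← hsplit]; linarith
  have hIT_nonpos : IT ≤ 0 := hIT_le_It.trans hIt_nonpos
  -- for s ∈ [0,t], ∫ₛᵗ ν ≤ 0
  have hmid_nonpos : ∀ s ∈ Set.Icc (0:ℝ) t, (∫ r in s..t, ν r) ≤ 0 := by
    intro s hs
    apply my_integral_nonpos hs.2 (hInt s t hs.1 htT hs.2)
    intro x hx; exact hν_nonpos x ⟨hs.1.trans hx.1, hx.2.trans htT⟩
  set ξmax : ℝ := (1/4 : ℝ) * b0 * Real.exp (2 * IT) with hξmax
  clear_value ξmax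
  have hξmax_pos : 0 < ξmax := by rw [hξmax]; positivity
  have hξmax_le : ξmax ≤ (1/4) * b0 := by
    rw [hξmax]
    have : Real.exp (2 * IT) ≤ 1 := Real.exp_le_one_iff.mpr (by linarith)
    nlinarith
  -- |ξ s| ≤ (1/4) b0 on [0,T]
  have hξ_bdd : ∀ s ∈ Set.Icc (0:ℝ) T, |ξ s| ≤ (1/4) * b0 := by
    intro s hs
    have hlo := hξ_lo s hs
    have hhi := (hξ_hi s hs).trans hξmax_le
    have hFs : (∫ r in (0:ℝ)..s, ν r) ≤ 0 := by
      apply my_integral_nonpos hs.1 (hInt 0 s le_rfl hs.2 hs.1)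
      intro x hx; exact hν_nonpos x ⟨hx.1, hx.2.trans hs.2⟩
    have hE1 : Real.exp (∫ r in (0:ℝ)..s, ν r) ≤ 1 := Real.exp_le_one_iff.mpr hFs
    have hE0 : 0 < Real.exp (∫ r in (0:ℝ)..s, ν r) := Real.exp_pos _
    rw [abs_le]; constructor <;> nlinarith
  -- integrability of the big integrand
  have hνInt : IntervalIntegrable ν volume 0 t := hInt 0 t le_rfl htT ht0
  have hg_int : IntervalIntegrable
      (fun s => ν s * Real.exp (∫ r in s..t, ν r) * ξ s) volume 0 t := by
    apply IntervalIntegrable.mono_fun (hνInt.const_mul ((1/4) * b0))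
    · -- AEStronglyMeasurable
      have hcont : ContinuousOn (fun s => Real.exp (∫ r in s..t, ν r)) (Set.Icc (0:ℝ) t) := by
        have h1 : ContinuousOn (fun s => ∫ r in s..t, ν r) (Set.uIcc (0:ℝ) t) :=
          intervalIntegral.continuousOn_primitive_interval_left (by
            apply hIntT.mono_set
            rw [Set.uIcc_of_le ht0]
            exact Set.Icc_subset_Icc le_rfl htT)
        rw [Set.uIcc_of_le ht0] at h1
        exact Real.continuous_exp.comp_continuousOn h1
      have hmidm : AEStronglyMeasurable (fun s => Real.exp (∫ r in s..t, ν r))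
          (volume.restrict (Set.uIoc (0:ℝ) t)) := by
        apply (hcont.aestronglyMeasurable measurableSet_Icc).mono_measure
        apply Measure.restrict_mono _ le_rfl
        rw [Set.uIoc_of_le ht0]
        exact Set.Ioc_subset_Icc_self
      exact ((hν_meas.aestronglyMeasurable.restrict.mul hmidm).mul
        hξ_meas.aestronglyMeasurable.restrict)
    · -- pointwise bound a.e. on uIoc 0 t
      filter_upwards [ae_restrict_mem measurableSet_uIoc] with s hs
      rw [Set.uIoc_of_le ht0] at hs
      have hs' : s ∈ Set.Icc (0:ℝ) t := ⟨le_of_lt hs.1, hs.2⟩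
      have hsT : s ∈ Set.Icc (0:ℝ) T := ⟨hs'.1, hs'.2.trans htT⟩
      have hE1 : Real.exp (∫ r in s..t, ν r) ≤ 1 :=
        Real.exp_le_one_iff.mpr (hmid_nonpos s hs')
      have hE0 : 0 < Real.exp (∫ r in s..t, ν r) := Real.exp_pos _
      have hξb := hξ_bdd s hsT
      simp only [norm_mul, Real.norm_eq_abs]
      rw [Real.abs_exp]
      have h4 : (0:ℝ) ≤ (1/4) * b0 := by positivity
      have : |ν s| * Real.exp (∫ r in s..t, ν r) * |ξ s| ≤ |ν s| * 1 * ((1/4)*b0) := by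
        apply mul_le_mul _ hξb (abs_nonneg _) (by positivity)
        apply mul_le_mul_of_nonneg_left hE1 (abs_nonneg _)
      calc |ν s| * Real.exp (∫ r in s..t, ν r) * |ξ s|
          ≤ |ν s| * 1 * ((1/4)*b0) := this
        _ = |(1:ℝ)/4| * |b0| * |ν s| := by
            rw [abs_of_pos hb0, abs_of_nonneg (by norm_num : (0:ℝ) ≤ 1/4)]; ring
  -- the key lower bound on the Duhamel integral
  have hJ : ξmax * It ≤ ∫ s in (0:ℝ)..t, ν s * Real.exp (∫ r in s..t, ν r) * ξ s := by
    rw [hIt]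
    have hmono := intervalIntegral.integral_mono_on (μ := volume) ht0
      (hνInt.const_mul ξmax) hg_int (fun s hs => by
        have hsT : s ∈ Set.Icc (0:ℝ) T := ⟨hs.1, hs.2.trans htT⟩
        have hν0 : ν s ≤ 0 := hν_nonpos s hsT
        have hE1 : Real.exp (∫ r in s..t, ν r) ≤ 1 :=
          Real.exp_le_one_iff.mpr (hmid_nonpos s hs)
        have hE0 : 0 < Real.exp (∫ r in s..t, ν r) := Real.exp_pos _
        have hξs : ξ s ≤ ξmax := hξ_hi s hsT
        have hνE : ν s ≤ ν s * Real.exp (∫ r in s..t, ν r) := by nlinarith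
        have hB := mul_le_mul_of_nonneg_right hνE hξmax_pos.le
        have hA := mul_le_mul_of_nonpos_left hξs
          (mul_nonpos_of_nonpos_of_nonneg hν0 hE0.le)
        calc ξmax * ν s = ν s * ξmax := by ring
          _ ≤ ν s * Real.exp (∫ r in s..t, ν r) * ξmax := hB
          _ ≤ ν s * Real.exp (∫ r in s..t, ν r) * ξ s := hA)
    rwa [intervalIntegral.integral_const_mul] at hmono
  -- compare ξmax * It with -(1/4) b0 exp(It)
  have hkey : -(1/4) * b0 * Real.exp It ≤ ξmax * It := by
    set x : ℝ := -IT with hx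
    clear_value x
    have hx0 : 0 ≤ x := by linarith
    have hxexp : x ≤ Real.exp x := by
      have := Real.add_one_le_exp x; linarith
    -- ξmax * It ≥ ξmax * (-x) = -(1/4) b0 e^{-2x} x ≥ -(1/4) b0 e^{It}
    have h1 : ξmax * (-x) ≤ ξmax * It :=
      mul_le_mul_of_nonneg_left (by linarith) hξmax_pos.le
    have h2 : -(1/4) * b0 * Real.exp It ≤ ξmax * (-x) := by
      rw [hξmax]
      have hexp2 : Real.exp (2 * IT) = Real.exp (-x) * Real.exp (-x) := by
        rw [← Real.exp_add]; congr 1; rw [hx]; ring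
      rw [hexp2]
      have hxe : x * Real.exp (-x) ≤ 1 := by
        have h := mul_le_mul_of_nonneg_right hxexp (Real.exp_pos (-x)).le
        have : Real.exp x * Real.exp (-x) = 1 := by
          rw [← Real.exp_add]; simp
        linarith
      have hee : Real.exp (-x) ≤ Real.exp It := Real.exp_le_exp.mpr (by linarith)
      have he0 : 0 < Real.exp (-x) := Real.exp_pos _
      have hstep : x * Real.exp (-x) * Real.exp (-x) ≤ Real.exp It := by
        have := mul_le_mul_of_nonneg_right hxe he0.le
        linarith
      have hfin := mul_le_mul_of_nonneg_left hstep
        (show (0:ℝ) ≤ (1/4)*b0 by positivity)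
      nlinarith [hfin]
    linarith
  -- final assembly
  have hbt := hb t ⟨ht0, htT⟩
  have hξt := hξ_lo t ⟨ht0, htT⟩
  rw [← hIt] at hbt hξt
  linarith
end

section
/- Let (Ω, 𝓕, ℙ) be a probability space, N ≥ 1 an integer, λ* > 0, and (X_j)_{j≥1} a sequence of i.i.d. integrable real random variables with |X_j| ≤ λ* almost surely and common mean μ = 𝔼[X_1]. Let M be a random variable taking values in {0, 1, …, N} that is independent of the sequence (X_j)_{j≥1}. Then 𝔼[ | N^{−1} ∑_{j=1}^{M} (X_j − μ) | ] ≤ λ*/√N. -/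
open MeasureTheory ProbabilityTheory

set_option maxHeartbeats 1000000 in
/-- For i.i.d. random variables `X_j` bounded by `λ*`, a random number of terms
`M ≤ N` independent of the sequence, and `μ = 𝔼[X_1]`, one has
`𝔼[ |N⁻¹ ∑_{j<M} (X_j − μ)| ] ≤ λ*/√N`. -/
theorem random_sum_centered_L1_bound
    {Ω : Type*} [MeasurableSpace Ω] (P : Measure Ω) [IsProbabilityMeasure P]
    (N : ℕ) (hN : 1 ≤ N) (lamStar : ℝ) (hlamStar : 0 < lamStar)
    (X : ℕ → Ω → ℝ) (hX_meas : ∀ j, Measurable (X j))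
    (hX_int : ∀ j, Integrable (X j) P)
    (hX_indep : iIndepFun X P)
    (hX_ident : ∀ j, IdentDistrib (X j) (X 0) P P)
    (hX_bdd : ∀ j, ∀ᵐ ω ∂P, |X j ω| ≤ lamStar)
    (M : Ω → ℕ) (hM_meas : Measurable M) (hM_le : ∀ ω, M ω ≤ N)
    (hM_indep : IndepFun M (fun ω => fun j => X j ω) P) :
    ∫ ω, |(N : ℝ)⁻¹ * ∑ j ∈ Finset.range (M ω), (X j ω - ∫ ω', X 0 ω' ∂P)| ∂P
      ≤ lamStar / Real.sqrt N := by
  classical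
  set μ0 : ℝ := ∫ ω', X 0 ω' ∂P with hμ0
  -- Centered variables
  set Y : ℕ → Ω → ℝ := fun j ω => X j ω - μ0 with hY
  have hμint : ∀ j, ∫ ω, X j ω ∂P = μ0 := fun j => (hX_ident j).integral_eq
  have hY_meas : ∀ j, Measurable (Y j) := fun j => (hX_meas j).sub measurable_const
  have hL2 : ∀ j, MemLp (X j) 2 P := fun j =>
    MemLp.of_bound (hX_int j).aestronglyMeasurable lamStar <| by
      filter_upwards [hX_bdd j] with ω h using by rwa [Real.norm_eq_abs]
  have hYL2 : ∀ j, MemLp (Y j) 2 P := fun j => (hL2 j).sub (memLp_const μ0)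
  have hYint0 : ∀ j, ∫ ω, Y j ω ∂P = 0 := by
    intro j
    simp only [hY]
    rw [integral_sub (hX_int j) (integrable_const μ0), hμint j, integral_const]
    simp
  -- Partial sums
  set T : ℕ → Ω → ℝ := fun m ω => ∑ j ∈ Finset.range m, Y j ω with hT
  have hT_meas : ∀ m, Measurable (T m) := fun m =>
    Finset.measurable_sum _ fun j _ => hY_meas j
  have hTL2 : ∀ m, MemLp (T m) 2 P := fun m =>
    memLp_finset_sum (Finset.range m) fun j _ => hYL2 j
  have hTint0 : ∀ m, ∫ ω, T m ω ∂P = 0 := by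
    intro m
    rw [hT, integral_finset_sum _ fun j _ => (hYL2 j).integrable one_le_two]
    simp [hYint0]
  -- variance of each centered variable is at most lamStar ^ 2
  have hYvar : ∀ j, ∫ ω, Y j ω ^ 2 ∂P ≤ lamStar ^ 2 := by
    intro j
    have h1 : ∫ ω, Y j ω ^ 2 ∂P = (∫ ω, X j ω ^ 2 ∂P) - μ0 ^ 2 := by
      have hint2 : Integrable (fun ω => X j ω ^ 2) P := (hL2 j).integrable_sq
      have : ∀ ω, Y j ω ^ 2 = X j ω ^ 2 - (2 * μ0) * X j ω + μ0 ^ 2 := by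
        intro ω; simp only [hY]; ring
      simp_rw [this]
      have ha : Integrable (fun ω => X j ω ^ 2 - 2 * μ0 * X j ω) P :=
        hint2.sub ((hX_int j).const_mul _)
      have hb : Integrable (fun _ : Ω => μ0 ^ 2) P := integrable_const _
      have hc : Integrable (fun ω => 2 * μ0 * X j ω) P := (hX_int j).const_mul _
      rw [integral_add ha hb, integral_sub hint2 hc, integral_const_mul _ _, hμint j,
        integral_const]
      simp only [probReal_univ, one_smul]
      ring
    have h2 : ∫ ω, X j ω ^ 2 ∂P ≤ lamStar ^ 2 := by
      have : ∫ ω, X j ω ^ 2 ∂P ≤ ∫ _ω, lamStar ^ 2 ∂P := by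
        apply integral_mono_ae (hL2 j).integrable_sq (integrable_const _)
        filter_upwards [hX_bdd j] with ω h
        calc X j ω ^ 2 = |X j ω| ^ 2 := (sq_abs _).symm
          _ ≤ lamStar ^ 2 := by
            apply pow_le_pow_left₀ (abs_nonneg _) h
      simpa using this
    nlinarith [sq_nonneg μ0]
  -- second moment of partial sums
  have hTvar : ∀ m, m ≤ N → ∫ ω, T m ω ^ 2 ∂P ≤ (N : ℝ) * lamStar ^ 2 := by
    intro m hm
    have hfun : T m = ∑ j ∈ Finset.range m, Y j := by
      funext ω; simp [hT]
    have hvar : variance (T m) P = ∑ j ∈ Finset.range m, variance (Y j) P := by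
      rw [hfun]
      apply IndepFun.variance_sum (fun j _ => hYL2 j)
      intro i _ j _ hij
      exact ((hX_indep.indepFun hij).comp (measurable_id.sub measurable_const)
        (measurable_id.sub measurable_const))
    have h1 : ∫ ω, T m ω ^ 2 ∂P = ∑ j ∈ Finset.range m, variance (Y j) P := by
      rw [← hvar, variance_of_integral_eq_zero (hT_meas m).aemeasurable (hTint0 m)]
    have h2 : ∀ j, variance (Y j) P = ∫ ω, Y j ω ^ 2 ∂P := fun j =>
      variance_of_integral_eq_zero (hY_meas j).aemeasurable (hYint0 j)
    rw [h1]
    calc ∑ j ∈ Finset.range m, variance (Y j) P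
        ≤ ∑ _j ∈ Finset.range m, lamStar ^ 2 := by
          apply Finset.sum_le_sum
          intro j _
          rw [h2 j]; exact hYvar j
      _ = (m : ℝ) * lamStar ^ 2 := by simp [mul_comm]
      _ ≤ (N : ℝ) * lamStar ^ 2 := by
          apply mul_le_mul_of_nonneg_right _ (sq_nonneg _)
          exact_mod_cast hm
  -- the random sum
  set S : Ω → ℝ := fun ω => T (M ω) ω with hS
  have hS_sq_eq : ∀ ω, S ω ^ 2 =
      ∑ m ∈ Finset.range (N + 1), (if M ω = m then (1 : ℝ) else 0) * T m ω ^ 2 := by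
    intro ω
    have hmem : M ω ∈ Finset.range (N + 1) := Finset.mem_range.2 (Nat.lt_succ_of_le (hM_le ω))
    rw [Finset.sum_congr rfl (fun m _ => by
      rw [ite_mul, one_mul, zero_mul])]
    rw [Finset.sum_ite_eq (Finset.range (N + 1)) (M ω) (fun m => T m ω ^ 2), if_pos hmem]
  -- measurability and boundedness of S
  have hS_meas : Measurable S := by
    have : S = fun ω => ∑ m ∈ Finset.range (N + 1),
        (if M ω = m then (1 : ℝ) else 0) * T m ω := by
      funext ω
      have hmem : M ω ∈ Finset.range (N + 1) := Finset.mem_range.2 (Nat.lt_succ_of_le (hM_le ω))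
      rw [Finset.sum_congr rfl (fun m _ => by rw [ite_mul, one_mul, zero_mul]),
        Finset.sum_ite_eq (Finset.range (N + 1)) (M ω) (fun m => T m ω), if_pos hmem]
    rw [this]
    apply Finset.measurable_sum
    intro m _
    exact ((measurable_const.ite (hM_meas (MeasurableSet.singleton m)) measurable_const)).mul
      (hT_meas m)
  have hS_bdd : ∀ᵐ ω ∂P, |S ω| ≤ (N : ℝ) * (lamStar + |μ0|) := by
    have h := MeasureTheory.ae_all_iff.2 hX_bdd
    filter_upwards [h] with ω hω
    calc |S ω| ≤ ∑ j ∈ Finset.range (M ω), |Y j ω| := Finset.abs_sum_le_sum_abs _ _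
      _ ≤ ∑ _j ∈ Finset.range (M ω), (lamStar + |μ0|) := by
          apply Finset.sum_le_sum
          intro j _
          calc |Y j ω| ≤ |X j ω| + |μ0| := abs_sub _ _
            _ ≤ lamStar + |μ0| := add_le_add_left (hω j) _
      _ = (M ω : ℝ) * (lamStar + |μ0|) := by
          rw [Finset.sum_const, Finset.card_range, nsmul_eq_mul]
      _ ≤ (N : ℝ) * (lamStar + |μ0|) := by
          apply mul_le_mul_of_nonneg_right
          · exact_mod_cast hM_le ω
          · positivity
  have hSL2 : MemLp S 2 P :=
    MemLp.of_bound hS_meas.aestronglyMeasurable _ <| by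
      filter_upwards [hS_bdd] with ω h using by rwa [Real.norm_eq_abs]
  -- second moment of S
  have hS_sq : ∫ ω, S ω ^ 2 ∂P ≤ (N : ℝ) * lamStar ^ 2 := by
    have hind_int : ∀ m : ℕ, Integrable (fun ω =>
        (if M ω = m then (1 : ℝ) else 0) * T m ω ^ 2) P := by
      intro m
      apply Integrable.bdd_mul (c := 1) (hTL2 m).integrable_sq
        ((measurable_const.ite (hM_meas (MeasurableSet.singleton m))
          measurable_const)).aestronglyMeasurable
      refine Filter.Eventually.of_forall (fun ω => ?_)
      by_cases h : M ω = m <;> simp [h]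
    have heq : ∫ ω, S ω ^ 2 ∂P = ∑ m ∈ Finset.range (N + 1),
        ∫ ω, (if M ω = m then (1 : ℝ) else 0) * T m ω ^ 2 ∂P := by
      rw [← integral_finset_sum _ fun m _ => hind_int m]
      exact integral_congr_ae (Filter.Eventually.of_forall fun ω => hS_sq_eq ω)
    have hterm : ∀ m : ℕ, ∫ ω, (if M ω = m then (1 : ℝ) else 0) * T m ω ^ 2 ∂P
        = (P (M ⁻¹' {m})).toReal * ∫ ω, T m ω ^ 2 ∂P := by
      intro m
      have hφ : Measurable fun n : ℕ => if n = m then (1 : ℝ) else 0 :=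
        measurable_from_top
      have hψ : Measurable fun f : ℕ → ℝ =>
          (∑ j ∈ Finset.range m, (f j - μ0)) ^ 2 := by
        apply Measurable.pow_const
        exact Finset.measurable_sum _ fun j _ => (measurable_pi_apply j).sub measurable_const
      have hindep := hM_indep.comp hφ hψ
      have := hindep.integral_mul_eq_mul_integral
        (hφ.comp hM_meas).aestronglyMeasurable
        (hψ.comp (measurable_pi_lambda _ fun j => hX_meas j)).aestronglyMeasurable
      have heq2 : ∫ ω, (if M ω = m then (1 : ℝ) else 0) * T m ω ^ 2 ∂P
          = integral P (((fun n : ℕ => if n = m then (1 : ℝ) else 0) ∘ M) *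
              ((fun f : ℕ → ℝ => (∑ j ∈ Finset.range m, (f j - μ0)) ^ 2) ∘
                (fun ω => fun j => X j ω))) := rfl
      rw [heq2, this]
      congr 1
      · have : ((fun n : ℕ => if n = m then (1 : ℝ) else 0) ∘ M)
            = Set.indicator (M ⁻¹' {m}) (fun _ => (1 : ℝ)) := by
          funext ω
          by_cases h : M ω = m <;> simp [Set.indicator_apply, h]
        rw [this, integral_indicator_const _ (hM_meas (MeasurableSet.singleton m))]
        simp [Measure.real]
    rw [heq]
    have hsum1 : ∑ m ∈ Finset.range (N + 1), (P (M ⁻¹' {m})).toReal = 1 := by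
      have := sum_measure_preimage_singleton (μ := P) (Finset.range (N + 1))
        (f := M) (fun m _ => hM_meas (MeasurableSet.singleton m))
      have hpre : M ⁻¹' ↑(Finset.range (N + 1)) = Set.univ := by
        ext ω
        simp [Nat.lt_succ_of_le (hM_le ω)]
      rw [hpre, measure_univ] at this
      rw [← ENNReal.toReal_one, ← this, ENNReal.toReal_sum]
      intro m _
      exact measure_ne_top _ _
    calc ∑ m ∈ Finset.range (N + 1),
          ∫ ω, (if M ω = m then (1 : ℝ) else 0) * T m ω ^ 2 ∂P
        = ∑ m ∈ Finset.range (N + 1),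
            (P (M ⁻¹' {m})).toReal * ∫ ω, T m ω ^ 2 ∂P := by
          exact Finset.sum_congr rfl fun m _ => hterm m
      _ ≤ ∑ m ∈ Finset.range (N + 1),
            (P (M ⁻¹' {m})).toReal * ((N : ℝ) * lamStar ^ 2) := by
          apply Finset.sum_le_sum
          intro m hm
          apply mul_le_mul_of_nonneg_left _ ENNReal.toReal_nonneg
          exact hTvar m (Nat.lt_succ_iff.1 (Finset.mem_range.1 hm))
      _ = (N : ℝ) * lamStar ^ 2 := by
          rw [← Finset.sum_mul, hsum1, one_mul]
  -- Cauchy-Schwarz: (∫|S|)² ≤ ∫ S²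
  have habs : (∫ ω, |S ω| ∂P) ^ 2 ≤ ∫ ω, S ω ^ 2 ∂P := by
    have hSabsL2 : MemLp (fun ω => |S ω|) 2 P := hSL2.abs
    have hv := variance_nonneg (fun ω => |S ω|) P
    rw [variance_eq_sub hSabsL2] at hv
    have hsq : ∀ ω, |S ω| ^ 2 = S ω ^ 2 := fun ω => sq_abs _
    have : P[(fun ω => |S ω|) ^ 2] = ∫ ω, S ω ^ 2 ∂P := by
      apply integral_congr_ae
      exact Filter.Eventually.of_forall fun ω => by simp [sq_abs]
    rw [this] at hv
    linarith
  have habs_nonneg : 0 ≤ ∫ ω, |S ω| ∂P :=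
    integral_nonneg fun ω => abs_nonneg _
  have hintabs : ∫ ω, |S ω| ∂P ≤ Real.sqrt ((N : ℝ) * lamStar ^ 2) := by
    rw [Real.le_sqrt habs_nonneg (by positivity)]
    exact habs.trans hS_sq
  -- conclude
  have hNpos : (0 : ℝ) < N := by exact_mod_cast hN
  have hgoal_eq : ∫ ω, |(N : ℝ)⁻¹ * ∑ j ∈ Finset.range (M ω), (X j ω - μ0)| ∂P
      = (N : ℝ)⁻¹ * ∫ ω, |S ω| ∂P := by
    rw [← integral_const_mul ((N : ℝ)⁻¹) (fun ω => |S ω|)]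
    refine integral_congr_ae (Filter.Eventually.of_forall fun ω => ?_)
    show |(N : ℝ)⁻¹ * ∑ j ∈ Finset.range (M ω), (X j ω - μ0)| = (N : ℝ)⁻¹ * |S ω|
    rw [abs_mul, abs_of_nonneg (inv_nonneg.2 hNpos.le)]
  rw [hgoal_eq]
  have hsqrt : Real.sqrt ((N : ℝ) * lamStar ^ 2) = Real.sqrt N * lamStar := by
    rw [Real.sqrt_mul (by positivity), Real.sqrt_sq hlamStar.le]
  calc (N : ℝ)⁻¹ * ∫ ω, |S ω| ∂P
      ≤ (N : ℝ)⁻¹ * (Real.sqrt N * lamStar) := by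
        rw [← hsqrt]
        exact mul_le_mul_of_nonneg_left hintabs (inv_nonneg.2 hNpos.le)
    _ = lamStar / Real.sqrt N := by
        have hsN : (0 : ℝ) < Real.sqrt N := Real.sqrt_pos.2 hNpos
        have h2 : (N : ℝ) = Real.sqrt N * Real.sqrt N := (Real.mul_self_sqrt hNpos.le).symm
        rw [h2]
        field_simp
        rw [Real.sqrt_sq hsN.le]
end
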